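/- arXiv:1805.04219 — 13 statements merged into one kernel-verified Lean document; each statement's English description precedes it below -/
import Mathlib

section
/- Let Λ be a finite lattice with least element ⊥ and greatest element ⊤, and let X be a set. (a) Suppose Eq : Λ → (X → X → Prop) assigns to each λ an equivalence relation on X such that for all λ, μ, x, y: Eq(λ ⊓ μ) x y ↔ (Eq(λ) x y ∧ Eq(μ) x y), Eq(⊥) is the equality relation, and Eq(⊤) is the always-true relation. Define d(x,y) to be the meet of the finite set {λ ∈ Λ : Eq(λ) x y}. Then d is a Λ-ultrametric on X — that is, d(x,y) = ⊥ if and only if x = y, d(x,y) = d(y,x), and d(x,z) ≤ d(x,y) ⊔ d(y,z) — and moreover Eq(λ) x y ↔ d(x,y) ≤ λ for all λ, x, y. (b) Conversely, if d is a Λ-ultrametric on X and Eq(λ) x y is defined to hold iff d(x,y) ≤ λ, then each Eq(λ) is an equivalence relation, Eq(λ ⊓ μ) x y ↔ (Eq(λ) x y ∧ Eq(μ) x y), Eq(⊥) is equality, and Eq(⊤) is the always-true relation. -/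
/-- correspondence between meet-preserving Λ-indexed families of
equivalence relations and Λ-ultrametrics, for a finite bounded lattice Λ. -/
theorem stmt_0 {Λ X : Type*} [Lattice Λ] [BoundedOrder Λ] [Fintype Λ] :
    -- (a)
    (∀ (E : Λ → X → X → Prop) (d : X → X → Λ),
      (∀ l, Equivalence (E l)) →
      (∀ l m x y, E (l ⊓ m) x y ↔ E l x y ∧ E m x y) →
      (∀ x y, E ⊥ x y ↔ x = y) →
      (∀ x y, E ⊤ x y) →
      (∀ x y, IsGLB {l : Λ | E l x y} (d x y)) →
      ((∀ x y, d x y = ⊥ ↔ x = y) ∧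
       (∀ x y, d x y = d y x) ∧
       (∀ x y z, d x z ≤ d x y ⊔ d y z) ∧
       (∀ l x y, E l x y ↔ d x y ≤ l))) ∧
    -- (b)
    (∀ d : X → X → Λ,
      (∀ x y, d x y = ⊥ ↔ x = y) →
      (∀ x y, d x y = d y x) →
      (∀ x y z, d x z ≤ d x y ⊔ d y z) →
      ((∀ l, Equivalence (fun x y => d x y ≤ l)) ∧
       (∀ l m x y, d x y ≤ l ⊓ m ↔ d x y ≤ l ∧ d x y ≤ m) ∧
       (∀ x y, d x y ≤ (⊥ : Λ) ↔ x = y) ∧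
       (∀ x y, d x y ≤ (⊤ : Λ)))) := by
  classical
  constructor
  · intro E d hequiv hmeet hbot htop hglb
    -- key: the distance itself relates x and y
    have hmem : ∀ x y, E (d x y) x y := by
      intro x y
      set S : Set Λ := {l | E l x y} with hS
      have hne : S.Nonempty := ⟨⊤, htop x y⟩
      have hclosed : ∀ a ∈ S, ∀ b ∈ S, a ⊓ b ∈ S := fun a ha b hb =>
        (hmeet a b x y).mpr ⟨ha, hb⟩
      have htne : S.toFinset.Nonempty := Set.toFinset_nonempty.mpr hne
      have h1 : S.toFinset.inf' htne id ∈ S :=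
        Finset.inf'_mem S hclosed _ htne id
          (fun i hi => by simpa using Set.mem_toFinset.mp hi)
      have hglb2 : IsGLB S (S.toFinset.inf' htne id) := by
        constructor
        · intro a ha
          exact Finset.inf'_le id (Set.mem_toFinset.mpr ha)
        · intro b hb
          exact Finset.le_inf' _ _ fun i hi => hb (Set.mem_toFinset.mp hi)
      have hd : d x y = S.toFinset.inf' htne id := (hglb x y).unique hglb2
      rw [hd]; exact h1
    have hkey : ∀ l x y, E l x y ↔ d x y ≤ l := by
      intro l x y
      constructor
      · intro h; exact (hglb x y).1 h
      · intro h
        have h2 : E (d x y ⊓ l) x y := by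
          rw [inf_eq_left.mpr h]; exact hmem x y
        exact ((hmeet _ _ x y).mp h2).2
    refine ⟨?_, ?_, ?_, hkey⟩
    · intro x y
      constructor
      · intro h
        exact (hbot x y).mp ((hkey ⊥ x y).mpr (le_of_eq h))
      · rintro rfl
        exact le_bot_iff.mp ((hkey ⊥ x x).mp ((hbot x x).mpr rfl))
    · intro x y
      exact le_antisymm ((hkey _ x y).mp ((hequiv _).symm (hmem y x)))
        ((hkey _ y x).mp ((hequiv _).symm (hmem x y)))
    · intro x y z
      have h1 : E (d x y ⊔ d y z) x y := (hkey _ x y).mpr le_sup_left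
      have h2 : E (d x y ⊔ d y z) y z := (hkey _ y z).mpr le_sup_right
      exact (hkey _ x z).mp ((hequiv _).trans h1 h2)
  · intro d hbot hsymm htri
    refine ⟨?_, ?_, ?_, ?_⟩
    · intro l
      refine ⟨fun x => ?_, fun {x y} h => ?_, fun {x y z} h1 h2 => ?_⟩
      · rw [(hbot x x).mpr rfl]; exact bot_le
      · rw [hsymm]; exact h
      · exact le_trans (htri x y z) (sup_le h1 h2)
    · intro l m x y; exact le_inf_iff
    · intro x y
      rw [le_bot_iff]; exact hbot x y
    · intro x y; exact le_top
end

section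
/- Let Λ be a finite distributive lattice. Then the class of all finite Λ-ultrametric spaces has the amalgamation property: for all finite Λ-ultrametric spaces (A,d_A), (B₁,d₁), (B₂,d₂) and isometries f₁ : A → B₁ and f₂ : A → B₂, there exist a finite Λ-ultrametric space (C,d_C) and isometries g₁ : B₁ → C and g₂ : B₂ → C with g₁ ∘ f₁ = g₂ ∘ f₂. -/
/-- A `Λ`-ultrametric on `X`: `d x y = ⊥` iff `x = y`, symmetry, and the
triangle inequality with join in place of addition. -/
def IsLambdaUltrametric {Λ X : Type*} [Lattice Λ] [OrderBot Λ]
    (d : X → X → Λ) : Prop :=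
  (∀ x y, d x y = ⊥ ↔ x = y) ∧ (∀ x y, d x y = d y x) ∧
  (∀ x y z, d x z ≤ d x y ⊔ d y z)

/-- for a finite distributive lattice Λ, the class of all finite
Λ-ultrametric spaces has the amalgamation property. -/
theorem stmt_1 {Λ : Type} [DistribLattice Λ] [OrderBot Λ] [Fintype Λ]
    (A B₁ B₂ : Type) [Fintype A] [Fintype B₁] [Fintype B₂]
    (dA : A → A → Λ) (d₁ : B₁ → B₁ → Λ) (d₂ : B₂ → B₂ → Λ)
    (hA : IsLambdaUltrametric dA) (h₁ : IsLambdaUltrametric d₁)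
    (h₂ : IsLambdaUltrametric d₂)
    (f₁ : A → B₁) (f₂ : A → B₂)
    (hf₁ : ∀ x y, d₁ (f₁ x) (f₁ y) = dA x y)
    (hf₂ : ∀ x y, d₂ (f₂ x) (f₂ y) = dA x y) :
    ∃ (C : Type) (_ : Fintype C) (dC : C → C → Λ) (g₁ : B₁ → C) (g₂ : B₂ → C),
      IsLambdaUltrametric dC ∧
      (∀ x y, dC (g₁ x) (g₁ y) = d₁ x y) ∧
      (∀ x y, dC (g₂ x) (g₂ y) = d₂ x y) ∧
      (∀ a, g₁ (f₁ a) = g₂ (f₂ a)) := by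
  classical
  have : Nonempty Λ := ⟨⊥⟩
  letI : OrderTop Λ := Fintype.toOrderTop Λ
  obtain ⟨hA0, hAs, hAt⟩ := hA
  obtain ⟨h10, h1s, h1t⟩ := h₁
  obtain ⟨h20, h2s, h2t⟩ := h₂
  -- cross distance
  let e : B₁ → B₂ → Λ :=
    fun x y => Finset.univ.inf (fun a : A => d₁ x (f₁ a) ⊔ d₂ (f₂ a) y)
  have he : ∀ x y, e x y = Finset.univ.inf (fun a : A => d₁ x (f₁ a) ⊔ d₂ (f₂ a) y) :=
    fun _ _ => rfl
  have he_le : ∀ x y (a : A), e x y ≤ d₁ x (f₁ a) ⊔ d₂ (f₂ a) y :=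
    fun x y a => Finset.inf_le (Finset.mem_univ a)
  -- distance on the sum
  let D : B₁ ⊕ B₂ → B₁ ⊕ B₂ → Λ := fun p q =>
    match p, q with
    | Sum.inl x, Sum.inl y => d₁ x y
    | Sum.inr x, Sum.inr y => d₂ x y
    | Sum.inl x, Sum.inr y => e x y
    | Sum.inr y, Sum.inl x => e x y
  have Dsymm : ∀ p q, D p q = D q p := by
    rintro (x | x) (y | y)
    · exact h1s x y
    · rfl
    · rfl
    · exact h2s x y
  have Drefl : ∀ p, D p p = ⊥ := by
    rintro (x | x)
    · exact (h10 x x).2 rfl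
    · exact (h20 x x).2 rfl
  -- key inequalities for `e`
  have eLL : ∀ x x' y, e x y ≤ d₁ x x' ⊔ e x' y := by
    intro x x' y
    rw [he x' y, Finset.inf_sup_distrib_left]
    refine Finset.le_inf fun a _ => ?_
    refine le_trans (he_le x y a) ?_
    calc d₁ x (f₁ a) ⊔ d₂ (f₂ a) y
        ≤ (d₁ x x' ⊔ d₁ x' (f₁ a)) ⊔ d₂ (f₂ a) y := sup_le_sup_right (h1t _ _ _) _
      _ = d₁ x x' ⊔ (d₁ x' (f₁ a) ⊔ d₂ (f₂ a) y) := sup_assoc ..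
  have eRR : ∀ x y y', e x y ≤ e x y' ⊔ d₂ y' y := by
    intro x y y'
    rw [he x y', Finset.inf_sup_distrib_right]
    refine Finset.le_inf fun a _ => ?_
    refine le_trans (he_le x y a) ?_
    refine sup_le (le_sup_of_le_left le_sup_left) ?_
    calc d₂ (f₂ a) y ≤ d₂ (f₂ a) y' ⊔ d₂ y' y := h2t _ _ _
      _ ≤ (d₁ x (f₁ a) ⊔ d₂ (f₂ a) y') ⊔ d₂ y' y := sup_le_sup_right le_sup_right _
  have eMid1 : ∀ x x' y, d₁ x x' ≤ e x y ⊔ e x' y := by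
    intro x x' y
    rw [he x y, Finset.inf_sup_distrib_right]
    simp only [he x' y, Finset.inf_sup_distrib_left]
    refine Finset.le_inf fun a _ => Finset.le_inf fun a' _ => ?_
    have key : d₁ (f₁ a) (f₁ a') ≤ d₂ (f₂ a) y ⊔ d₂ (f₂ a') y := by
      rw [hf₁, ← hf₂]
      calc d₂ (f₂ a) (f₂ a') ≤ d₂ (f₂ a) y ⊔ d₂ y (f₂ a') := h2t _ _ _
        _ = d₂ (f₂ a) y ⊔ d₂ (f₂ a') y := by rw [h2s y]
    calc d₁ x x' ≤ d₁ x (f₁ a) ⊔ d₁ (f₁ a) x' := h1t _ _ _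
      _ ≤ d₁ x (f₁ a) ⊔ (d₁ (f₁ a) (f₁ a') ⊔ d₁ (f₁ a') x') :=
          sup_le_sup_left (h1t _ _ _) _
      _ ≤ d₁ x (f₁ a) ⊔ ((d₂ (f₂ a) y ⊔ d₂ (f₂ a') y) ⊔ d₁ (f₁ a') x') :=
          sup_le_sup_left (sup_le_sup_right key _) _
      _ ≤ (d₁ x (f₁ a) ⊔ d₂ (f₂ a) y) ⊔ (d₁ x' (f₁ a') ⊔ d₂ (f₂ a') y) := by
          rw [h1s (f₁ a') x']
          refine sup_le (le_sup_of_le_left le_sup_left)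
            (sup_le (sup_le ?_ ?_) ?_)
          · exact le_sup_of_le_left le_sup_right
          · exact le_sup_of_le_right le_sup_right
          · exact le_sup_of_le_right le_sup_left
  have eMid2 : ∀ y y' x, d₂ y y' ≤ e x y ⊔ e x y' := by
    intro y y' x
    rw [he x y, Finset.inf_sup_distrib_right]
    simp only [he x y', Finset.inf_sup_distrib_left]
    refine Finset.le_inf fun a _ => Finset.le_inf fun a' _ => ?_
    have key : d₂ (f₂ a) (f₂ a') ≤ d₁ x (f₁ a) ⊔ d₁ x (f₁ a') := by
      rw [hf₂, ← hf₁]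
      calc d₁ (f₁ a) (f₁ a') ≤ d₁ (f₁ a) x ⊔ d₁ x (f₁ a') := h1t _ _ _
        _ = d₁ x (f₁ a) ⊔ d₁ x (f₁ a') := by rw [h1s (f₁ a)]
    calc d₂ y y' ≤ d₂ y (f₂ a) ⊔ d₂ (f₂ a) y' := h2t _ _ _
      _ ≤ d₂ y (f₂ a) ⊔ (d₂ (f₂ a) (f₂ a') ⊔ d₂ (f₂ a') y') :=
          sup_le_sup_left (h2t _ _ _) _
      _ ≤ d₂ y (f₂ a) ⊔ ((d₁ x (f₁ a) ⊔ d₁ x (f₁ a')) ⊔ d₂ (f₂ a') y') :=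
          sup_le_sup_left (sup_le_sup_right key _) _
      _ ≤ (d₁ x (f₁ a) ⊔ d₂ (f₂ a) y) ⊔ (d₁ x (f₁ a') ⊔ d₂ (f₂ a') y') := by
          rw [h2s y (f₂ a)]
          refine sup_le (le_sup_of_le_left le_sup_right)
            (sup_le (sup_le ?_ ?_) ?_)
          · exact le_sup_of_le_left le_sup_left
          · exact le_sup_of_le_right le_sup_left
          · exact le_sup_of_le_right le_sup_right
  have Dtri : ∀ p q r, D p r ≤ D p q ⊔ D q r := by
    rintro (x | x) (y | y) (z | z)
    · exact h1t x y z
    · exact eLL x y z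
    · exact eMid1 x z y
    · exact eRR x z y
    · -- inr x, inl y, inl z : e z x ≤ e y x ⊔ d₁ y z
      calc e z x ≤ d₁ z y ⊔ e y x := eLL z y x
        _ = e y x ⊔ d₁ y z := by rw [sup_comm, h1s]
    · exact eMid2 x z y
    · -- inr x, inr y, inl z : e z x ≤ d₂ x y ⊔ e z y
      calc e z x ≤ e z y ⊔ d₂ y x := eRR z x y
        _ = d₂ x y ⊔ e z y := by rw [sup_comm, h2s]
    · exact h2t x y z
  -- quotient by the relation D p q = ⊥
  let s : Setoid (B₁ ⊕ B₂) :=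
    ⟨fun p q => D p q = ⊥,
     fun {p} => Drefl p,
     fun {p q} h => by rw [Dsymm]; exact h,
     fun {p q r} h h' => le_bot_iff.1 (by
        calc D p r ≤ D p q ⊔ D q r := Dtri p q r
          _ = ⊥ := by rw [h, h', sup_idem])⟩
  refine ⟨Quotient s, Quotient.fintype s, ?_⟩
  have Dwd : ∀ p p' q q' : B₁ ⊕ B₂, D p p' = ⊥ → D q q' = ⊥ → D p q = D p' q' := by
    have half : ∀ p p' q q' : B₁ ⊕ B₂, D p p' = ⊥ → D q q' = ⊥ → D p q ≤ D p' q' := by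
      intro p p' q q' hp hq
      calc D p q ≤ D p p' ⊔ D p' q := Dtri _ _ _
        _ = D p' q := by rw [hp, bot_sup_eq]
        _ ≤ D p' q' ⊔ D q' q := Dtri _ _ _
        _ = D p' q' := by rw [Dsymm q' q, hq, sup_bot_eq]
    intro p p' q q' hp hq
    refine le_antisymm (half p p' q q' hp hq) (half p' p q' q ?_ ?_)
    · rw [Dsymm]; exact hp
    · rw [Dsymm]; exact hq
  refine ⟨Quotient.lift₂ D (fun p q p' q' hp hq => Dwd p p' q q' hp hq),
    fun x => Quotient.mk s (Sum.inl x),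
    fun x => Quotient.mk s (Sum.inr x), ⟨?_, ?_, ?_⟩, ?_, ?_, ?_⟩
  · intro p q
    induction p using Quotient.ind
    induction q using Quotient.ind
    exact ⟨fun h => Quotient.sound h, fun h => Quotient.exact h⟩
  · intro p q
    induction p using Quotient.ind
    induction q using Quotient.ind
    exact Dsymm _ _
  · intro p q r
    induction p using Quotient.ind
    induction q using Quotient.ind
    induction r using Quotient.ind
    exact Dtri _ _ _
  · intro x y; rfl
  · intro x y; rfl
  · intro a
    refine Quotient.sound ?_
    show e (f₁ a) (f₂ a) = ⊥
    refine le_bot_iff.1 ?_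
    calc e (f₁ a) (f₂ a) ≤ d₁ (f₁ a) (f₁ a) ⊔ d₂ (f₂ a) (f₂ a) := he_le _ _ a
      _ = ⊥ := by rw [(h10 _ _).2 rfl, (h20 _ _).2 rfl, sup_idem]
end

section
/- Let Λ be a finite distributive lattice, let n ≥ 0, and for each i ∈ {1,…,n} fix elements Eᵢ ≤ Fᵢ of Λ with Eᵢ meet-irreducible. Let K be the class of all structures (A, d, R₁, …, Rₙ) where (A,d) is a finite Λ-ultrametric space and each Rᵢ is a subquotient order on A from Eᵢ to Fᵢ; an embedding of such structures is an isometry f that additionally satisfies Rᵢ x y ↔ Rᵢ (f x) (f y) for every i and all x,y. Then K has the amalgamation property. -/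
/-- A subquotient order from `E` to `F` on a `Λ`-ultrametric space `(X, d)`:
a transitive relation comparing `x` and `y` exactly when `d x y ≤ F` but
`¬ d x y ≤ E`, and for which `E`-closeness is a congruence. -/
def IsSubquotientOrder {Λ X : Type*} [Lattice Λ] (d : X → X → Λ) (E F : Λ)
    (R : X → X → Prop) : Prop :=
  (∀ x y z, R x y → R y z → R x z) ∧
  (∀ x y, (R x y ∨ R y x) ↔ (d x y ≤ F ∧ ¬ d x y ≤ E)) ∧
  (∀ x x' y y', d x x' ≤ E → d y y' ≤ E → (R x y ↔ R x' y'))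

/-- `E` is meet-irreducible in the lattice `Λ`. -/
def MeetIrreducible {Λ : Type*} [Lattice Λ] (E : Λ) : Prop :=
  ∀ y z, E = y ⊓ z → E = y ∨ E = z

set_option linter.unusedSectionVars false

namespace Stmt2Aux

variable {Λ : Type} [DistribLattice Λ] [OrderBot Λ] [Fintype Λ]

noncomputable scoped instance instTopL : OrderTop Λ where
  top := Finset.univ.sup id
  le_top a := Finset.le_sup (f := id) (Finset.mem_univ a)

theorem top_le_all {E : Λ} (h : (⊤ : Λ) ≤ E) : ∀ v : Λ, v ≤ E := fun _ =>
  le_top.trans h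

theorem meet_prime {E : Λ} (h : MeetIrreducible E) {p q : Λ} (hpq : p ⊓ q ≤ E) :
    p ≤ E ∨ q ≤ E := by
  have h1 : E = (E ⊔ p) ⊓ (E ⊔ q) := by
    rw [← sup_inf_left, sup_eq_left.mpr hpq]
  rcases h _ _ h1 with h2 | h2
  · exact Or.inl (le_sup_right.trans h2.ge)
  · exact Or.inr (le_sup_right.trans h2.ge)

theorem inf_le_prime {E : Λ} (h : MeetIrreducible E) {ι : Type} (f : ι → Λ) :
    ∀ s : Finset ι, s.inf f ≤ E → (∃ b ∈ s, f b ≤ E) ∨ ∀ v : Λ, v ≤ E := by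
  classical
  intro s
  induction s using Finset.induction with
  | empty => intro hle; exact Or.inr (top_le_all (by simpa using hle))
  | @insert a s ha ih =>
      intro hle
      rw [Finset.inf_insert] at hle
      rcases meet_prime h hle with h2 | h2
      · exact Or.inl ⟨a, Finset.mem_insert_self _ _, h2⟩
      · rcases ih h2 with ⟨b, hb, hfb⟩ | h3
        · exact Or.inl ⟨b, Finset.mem_insert_of_mem hb, hfb⟩
        · exact Or.inr h3

theorem le_sup_inf' {ι : Type} (f : ι → Λ) (x a : Λ) :
    ∀ s : Finset ι, (∀ b ∈ s, x ≤ a ⊔ f b) → x ≤ a ⊔ s.inf f := by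
  classical
  intro s
  induction s using Finset.induction with
  | empty => intro _; simp
  | @insert c s hc ih =>
      intro h
      rw [Finset.inf_insert, sup_inf_left]
      exact le_inf (h c (Finset.mem_insert_self c s))
        (ih fun b hb => h b (Finset.mem_insert_of_mem hb))

theorem le_inf_sup' {ι : Type} (f : ι → Λ) (x a : Λ) (s : Finset ι)
    (h : ∀ b ∈ s, x ≤ f b ⊔ a) : x ≤ s.inf f ⊔ a := by
  rw [sup_comm]
  exact le_sup_inf' f x a s fun b hb => by rw [sup_comm]; exact h b hb

theorem le_inf_sup_inf {ι κ : Type} (f : ι → Λ) (g : κ → Λ) (x : Λ) (s : Finset ι)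
    (t : Finset κ) (h : ∀ b ∈ s, ∀ c ∈ t, x ≤ f b ⊔ g c) : x ≤ s.inf f ⊔ t.inf g :=
  le_inf_sup' f x (t.inf g) s fun b hb => le_sup_inf' g x (f b) t (h b hb)


section Main

variable {A B₁ B₂ : Type} [Fintype A]

/-- The amalgamated distance on the disjoint sum. -/
noncomputable def dS (d₁ : B₁ → B₁ → Λ) (d₂ : B₂ → B₂ → Λ) (f₁ : A → B₁) (f₂ : A → B₂) :
    B₁ ⊕ B₂ → B₁ ⊕ B₂ → Λ
  | .inl x, .inl y => d₁ x y
  | .inr x, .inr y => d₂ x y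
  | .inl x, .inr y => Finset.univ.inf fun a => d₁ x (f₁ a) ⊔ d₂ (f₂ a) y
  | .inr y, .inl x => Finset.univ.inf fun a => d₁ x (f₁ a) ⊔ d₂ (f₂ a) y

/-- Metric context: the hypotheses on `d₁, d₂, f₁, f₂`. -/
structure MCtx (d₁ : B₁ → B₁ → Λ) (d₂ : B₂ → B₂ → Λ) (f₁ : A → B₁) (f₂ : A → B₂) :
    Prop where
  z₁ : ∀ x y, d₁ x y = ⊥ ↔ x = y
  s₁ : ∀ x y, d₁ x y = d₁ y x
  t₁ : ∀ x y z, d₁ x z ≤ d₁ x y ⊔ d₁ y z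
  z₂ : ∀ x y, d₂ x y = ⊥ ↔ x = y
  s₂ : ∀ x y, d₂ x y = d₂ y x
  t₂ : ∀ x y z, d₂ x z ≤ d₂ x y ⊔ d₂ y z
  hd : ∀ a b, d₁ (f₁ a) (f₁ b) = d₂ (f₂ a) (f₂ b)

variable {d₁ : B₁ → B₁ → Λ} {d₂ : B₂ → B₂ → Λ} {f₁ : A → B₁} {f₂ : A → B₂}

theorem dS_cross_le (x : B₁) (y : B₂) (a : A) :
    dS d₁ d₂ f₁ f₂ (.inl x) (.inr y) ≤ d₁ x (f₁ a) ⊔ d₂ (f₂ a) y :=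
  Finset.inf_le (Finset.mem_univ a)

namespace MCtx

theorem dS_symm (M : MCtx d₁ d₂ f₁ f₂) : ∀ u v, dS d₁ d₂ f₁ f₂ u v = dS d₁ d₂ f₁ f₂ v u := by
  rintro (x | x) (y | y)
  · exact M.s₁ x y
  · rfl
  · rfl
  · exact M.s₂ x y

theorem dS_self (M : MCtx d₁ d₂ f₁ f₂) : ∀ u, dS d₁ d₂ f₁ f₂ u u = ⊥ := by
  rintro (x | x)
  · exact (M.z₁ x x).mpr rfl
  · exact (M.z₂ x x).mpr rfl

theorem dS_tri (M : MCtx d₁ d₂ f₁ f₂) :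
    ∀ u v w, dS d₁ d₂ f₁ f₂ u w ≤ dS d₁ d₂ f₁ f₂ u v ⊔ dS d₁ d₂ f₁ f₂ v w := by
  rintro (x | x) (y | y) (z | z)
  · exact M.t₁ x y z
  · -- l l r
    refine le_sup_inf' _ _ _ _ fun a _ => ?_
    calc dS d₁ d₂ f₁ f₂ (.inl x) (.inr z) ≤ d₁ x (f₁ a) ⊔ d₂ (f₂ a) z := dS_cross_le x z a
    _ ≤ (d₁ x y ⊔ d₁ y (f₁ a)) ⊔ d₂ (f₂ a) z := sup_le_sup_right (M.t₁ _ _ _) _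
    _ = d₁ x y ⊔ (d₁ y (f₁ a) ⊔ d₂ (f₂ a) z) := sup_assoc _ _ _
  · -- l r l
    refine le_inf_sup_inf _ _ _ _ _ fun a _ b _ => ?_
    show d₁ x z ≤ (d₁ x (f₁ a) ⊔ d₂ (f₂ a) y) ⊔ (d₁ z (f₁ b) ⊔ d₂ (f₂ b) y)
    rw [M.s₁ z (f₁ b)]
    have h2 : d₁ (f₁ a) (f₁ b) ≤ d₂ (f₂ a) y ⊔ d₂ (f₂ b) y := by
      rw [M.hd]
      exact (M.t₂ _ y _).trans (le_of_eq (by rw [M.s₂ y (f₂ b)]))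
    calc d₁ x z ≤ d₁ x (f₁ a) ⊔ (d₁ (f₁ a) (f₁ b) ⊔ d₁ (f₁ b) z) :=
          (M.t₁ x (f₁ a) z).trans (sup_le_sup_left (M.t₁ _ (f₁ b) _) _)
    _ ≤ d₁ x (f₁ a) ⊔ ((d₂ (f₂ a) y ⊔ d₂ (f₂ b) y) ⊔ d₁ (f₁ b) z) :=
          sup_le_sup_left (sup_le_sup_right h2 _) _
    _ ≤ _ := le_of_eq (by ac_rfl)
  · -- l r r
    refine le_inf_sup' _ _ _ _ fun a _ => ?_
    calc dS d₁ d₂ f₁ f₂ (.inl x) (.inr z) ≤ d₁ x (f₁ a) ⊔ d₂ (f₂ a) z := dS_cross_le x z a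
    _ ≤ d₁ x (f₁ a) ⊔ (d₂ (f₂ a) y ⊔ d₂ y z) := sup_le_sup_left (M.t₂ _ y _) _
    _ = (d₁ x (f₁ a) ⊔ d₂ (f₂ a) y) ⊔ d₂ y z := (sup_assoc _ _ _).symm
  · -- r l l
    refine le_inf_sup' _ _ _ _ fun a _ => ?_
    show dS d₁ d₂ f₁ f₂ (.inl z) (.inr x) ≤ (d₁ y (f₁ a) ⊔ d₂ (f₂ a) x) ⊔ d₁ y z
    calc dS d₁ d₂ f₁ f₂ (.inl z) (.inr x) ≤ d₁ z (f₁ a) ⊔ d₂ (f₂ a) x := dS_cross_le z x a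
    _ ≤ (d₁ z y ⊔ d₁ y (f₁ a)) ⊔ d₂ (f₂ a) x := sup_le_sup_right (M.t₁ z y _) _
    _ = (d₁ y z ⊔ d₁ y (f₁ a)) ⊔ d₂ (f₂ a) x := by rw [M.s₁ z y]
    _ ≤ _ := le_of_eq (by ac_rfl)
  · -- r l r
    refine le_inf_sup_inf _ _ _ _ _ fun a _ b _ => ?_
    show d₂ x z ≤ (d₁ y (f₁ a) ⊔ d₂ (f₂ a) x) ⊔ (d₁ y (f₁ b) ⊔ d₂ (f₂ b) z)
    have h2 : d₂ (f₂ a) (f₂ b) ≤ d₁ y (f₁ a) ⊔ d₁ y (f₁ b) := by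
      rw [← M.hd]
      exact (M.t₁ _ y _).trans (le_of_eq (by rw [M.s₁ (f₁ a) y]))
    calc d₂ x z ≤ d₂ x (f₂ a) ⊔ (d₂ (f₂ a) (f₂ b) ⊔ d₂ (f₂ b) z) :=
          (M.t₂ x (f₂ a) z).trans (sup_le_sup_left (M.t₂ _ (f₂ b) _) _)
    _ = d₂ (f₂ a) x ⊔ (d₂ (f₂ a) (f₂ b) ⊔ d₂ (f₂ b) z) := by rw [M.s₂ x (f₂ a)]
    _ ≤ d₂ (f₂ a) x ⊔ ((d₁ y (f₁ a) ⊔ d₁ y (f₁ b)) ⊔ d₂ (f₂ b) z) :=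
          sup_le_sup_left (sup_le_sup_right h2 _) _
    _ ≤ _ := le_of_eq (by ac_rfl)
  · -- r r l
    refine le_sup_inf' _ _ _ _ fun a _ => ?_
    show dS d₁ d₂ f₁ f₂ (.inl z) (.inr x) ≤ d₂ x y ⊔ (d₁ z (f₁ a) ⊔ d₂ (f₂ a) y)
    calc dS d₁ d₂ f₁ f₂ (.inl z) (.inr x) ≤ d₁ z (f₁ a) ⊔ d₂ (f₂ a) x := dS_cross_le z x a
    _ ≤ d₁ z (f₁ a) ⊔ (d₂ (f₂ a) y ⊔ d₂ y x) := sup_le_sup_left (M.t₂ _ y _) _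
    _ = d₁ z (f₁ a) ⊔ (d₂ (f₂ a) y ⊔ d₂ x y) := by rw [M.s₂ y x]
    _ ≤ _ := le_of_eq (by ac_rfl)
  · exact M.t₂ x y z

theorem wd (M : MCtx d₁ d₂ f₁ f₂) (u₁ v₁ u₂ v₂ : B₁ ⊕ B₂)
    (hu : dS d₁ d₂ f₁ f₂ u₁ u₂ = ⊥) (hv : dS d₁ d₂ f₁ f₂ v₁ v₂ = ⊥) :
    dS d₁ d₂ f₁ f₂ u₁ v₁ = dS d₁ d₂ f₁ f₂ u₂ v₂ := by
  have key : ∀ p q p' q' : B₁ ⊕ B₂, dS d₁ d₂ f₁ f₂ p p' = ⊥ → dS d₁ d₂ f₁ f₂ q q' = ⊥ →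
      dS d₁ d₂ f₁ f₂ p' q' ≤ dS d₁ d₂ f₁ f₂ p q := by
    intro p q p' q' hp hq
    calc dS d₁ d₂ f₁ f₂ p' q' ≤ dS d₁ d₂ f₁ f₂ p' p ⊔ dS d₁ d₂ f₁ f₂ p q' :=
          M.dS_tri _ _ _
    _ ≤ dS d₁ d₂ f₁ f₂ p' p ⊔ (dS d₁ d₂ f₁ f₂ p q ⊔ dS d₁ d₂ f₁ f₂ q q') :=
          sup_le_sup_left (M.dS_tri _ _ _) _
    _ = dS d₁ d₂ f₁ f₂ p q := by rw [M.dS_symm p' p, hp, hq]; simp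
  exact le_antisymm (key _ _ _ _ ((M.dS_symm u₁ u₂) ▸ hu) ((M.dS_symm v₁ v₂) ▸ hv))
    (key _ _ _ _ hu hv)

end MCtx

/-- The cross relation: `x < y` iff there is `a ∈ A` with `x ≤ f₁ a`, `f₂ a ≤ y`,
and one of the two inequalities strict. -/
def crossLt (d₁ : B₁ → B₁ → Λ) (d₂ : B₂ → B₂ → Λ) (f₁ : A → B₁) (f₂ : A → B₂)
    (E : Λ) (R₁ : B₁ → B₁ → Prop) (R₂ : B₂ → B₂ → Prop) (x : B₁) (y : B₂) : Prop :=
  ∃ a : A, (R₁ x (f₁ a) ∨ d₁ x (f₁ a) ≤ E) ∧ (R₂ (f₂ a) y ∨ d₂ (f₂ a) y ≤ E) ∧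
    (R₁ x (f₁ a) ∨ R₂ (f₂ a) y)

/-- The amalgamated subquotient order on the disjoint sum. -/
noncomputable def SRel (d₁ : B₁ → B₁ → Λ) (d₂ : B₂ → B₂ → Λ) (f₁ : A → B₁) (f₂ : A → B₂)
    (E F : Λ) (R₁ : B₁ → B₁ → Prop) (R₂ : B₂ → B₂ → Prop) :
    B₁ ⊕ B₂ → B₁ ⊕ B₂ → Prop
  | .inl x, .inl y => R₁ x y
  | .inr x, .inr y => R₂ x y
  | .inl x, .inr y => dS d₁ d₂ f₁ f₂ (.inl x) (.inr y) ≤ F ∧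
      ¬ dS d₁ d₂ f₁ f₂ (.inl x) (.inr y) ≤ E ∧ crossLt d₁ d₂ f₁ f₂ E R₁ R₂ x y
  | .inr y, .inl x => dS d₁ d₂ f₁ f₂ (.inr y) (.inl x) ≤ F ∧
      ¬ dS d₁ d₂ f₁ f₂ (.inr y) (.inl x) ≤ E ∧ ¬ crossLt d₁ d₂ f₁ f₂ E R₁ R₂ x y

/-- Full context: metric plus order hypotheses. -/
structure Ctx (d₁ : B₁ → B₁ → Λ) (d₂ : B₂ → B₂ → Λ) (f₁ : A → B₁) (f₂ : A → B₂)
    (E F : Λ) (R₁ : B₁ → B₁ → Prop) (R₂ : B₂ → B₂ → Prop) extends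
    MCtx d₁ d₂ f₁ f₂ : Prop where
  hEF : E ≤ F
  hirr : MeetIrreducible E
  tr₁ : ∀ x y z, R₁ x y → R₁ y z → R₁ x z
  tot₁ : ∀ x y, (R₁ x y ∨ R₁ y x) ↔ (d₁ x y ≤ F ∧ ¬ d₁ x y ≤ E)
  cg₁ : ∀ x x' y y', d₁ x x' ≤ E → d₁ y y' ≤ E → (R₁ x y ↔ R₁ x' y')
  tr₂ : ∀ x y z, R₂ x y → R₂ y z → R₂ x z
  tot₂ : ∀ x y, (R₂ x y ∨ R₂ y x) ↔ (d₂ x y ≤ F ∧ ¬ d₂ x y ≤ E)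
  cg₂ : ∀ x x' y y', d₂ x x' ≤ E → d₂ y y' ≤ E → (R₂ x y ↔ R₂ x' y')
  hT : ∀ a b, R₁ (f₁ a) (f₁ b) ↔ R₂ (f₂ a) (f₂ b)

namespace Ctx

variable {E F : Λ} {R₁ : B₁ → B₁ → Prop} {R₂ : B₂ → B₂ → Prop}
variable (H : Ctx d₁ d₂ f₁ f₂ E F R₁ R₂)
include H

theorem botE₁ (x : B₁) : d₁ x x ≤ E := by
  rw [(H.z₁ x x).mpr rfl]; exact bot_le

theorem botE₂ (x : B₂) : d₂ x x ≤ E := by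
  rw [(H.z₂ x x).mpr rfl]; exact bot_le

theorem symmE₁ {x y : B₁} (h : d₁ x y ≤ E) : d₁ y x ≤ E := by rw [H.s₁]; exact h

theorem symmE₂ {x y : B₂} (h : d₂ x y ≤ E) : d₂ y x ≤ E := by rw [H.s₂]; exact h

theorem asym₁ {x y : B₁} (h : R₁ x y) : ¬ R₁ y x := fun h' =>
  ((H.tot₁ x x).mp (Or.inl (H.tr₁ x y x h h'))).2 (H.botE₁ x)

theorem asym₂ {x y : B₂} (h : R₂ x y) : ¬ R₂ y x := fun h' =>
  ((H.tot₂ x x).mp (Or.inl (H.tr₂ x y x h h'))).2 (H.botE₂ x)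

theorem lelt₁ {x y z : B₁} (h : R₁ x y ∨ d₁ x y ≤ E) (h' : R₁ y z) : R₁ x z :=
  h.elim (fun h => H.tr₁ _ _ _ h h')
    (fun h => (H.cg₁ y x z z (H.symmE₁ h) (H.botE₁ z)).mp h')

theorem ltle₁ {x y z : B₁} (h : R₁ x y) (h' : R₁ y z ∨ d₁ y z ≤ E) : R₁ x z :=
  h'.elim (H.tr₁ _ _ _ h) (fun h' => (H.cg₁ x x y z (H.botE₁ x) h').mp h)

theorem lele₁ {x y z : B₁} (h : R₁ x y ∨ d₁ x y ≤ E) (h' : R₁ y z ∨ d₁ y z ≤ E) :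
    R₁ x z ∨ d₁ x z ≤ E := by
  rcases h' with h' | h'
  · exact Or.inl (H.lelt₁ h h')
  rcases h with h | h
  · exact Or.inl (H.ltle₁ h (Or.inr h'))
  · exact Or.inr ((H.t₁ x y z).trans (sup_le h h'))

theorem lelt₂ {x y z : B₂} (h : R₂ x y ∨ d₂ x y ≤ E) (h' : R₂ y z) : R₂ x z :=
  h.elim (fun h => H.tr₂ _ _ _ h h')
    (fun h => (H.cg₂ y x z z (H.symmE₂ h) (H.botE₂ z)).mp h')

theorem ltle₂ {x y z : B₂} (h : R₂ x y) (h' : R₂ y z ∨ d₂ y z ≤ E) : R₂ x z :=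
  h'.elim (H.tr₂ _ _ _ h) (fun h' => (H.cg₂ x x y z (H.botE₂ x) h').mp h)

theorem lele₂ {x y z : B₂} (h : R₂ x y ∨ d₂ x y ≤ E) (h' : R₂ y z ∨ d₂ y z ≤ E) :
    R₂ x z ∨ d₂ x z ≤ E := by
  rcases h' with h' | h'
  · exact Or.inl (H.lelt₂ h h')
  rcases h with h | h
  · exact Or.inl (H.ltle₂ h (Or.inr h'))
  · exact Or.inr ((H.t₂ x y z).trans (sup_le h h'))

theorem leT {a b : A} :
    (R₁ (f₁ a) (f₁ b) ∨ d₁ (f₁ a) (f₁ b) ≤ E) ↔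
      (R₂ (f₂ a) (f₂ b) ∨ d₂ (f₂ a) (f₂ b) ≤ E) :=
  or_congr (H.hT a b) (by rw [H.hd a b])

theorem notR₁ (hall : ∀ v : Λ, v ≤ E) {x y : B₁} : ¬ R₁ x y := fun h =>
  ((H.tot₁ x y).mp (Or.inl h)).2 (hall _)

theorem notR₂ (hall : ∀ v : Λ, v ≤ E) {x y : B₂} : ¬ R₂ x y := fun h =>
  ((H.tot₂ x y).mp (Or.inl h)).2 (hall _)

theorem cross_E {x : B₁} {y : B₂} (h : dS d₁ d₂ f₁ f₂ (.inl x) (.inr y) ≤ E) :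
    (∃ a, d₁ x (f₁ a) ≤ E ∧ d₂ (f₂ a) y ≤ E) ∨ ∀ v : Λ, v ≤ E := by
  rcases inf_le_prime H.hirr (fun a => d₁ x (f₁ a) ⊔ d₂ (f₂ a) y) Finset.univ h with
    ⟨a, -, ha⟩ | h2
  · exact Or.inl ⟨a, le_sup_left.trans ha, le_sup_right.trans ha⟩
  · exact Or.inr h2

theorem S_cmp : ∀ u v, SRel d₁ d₂ f₁ f₂ E F R₁ R₂ u v →
    dS d₁ d₂ f₁ f₂ u v ≤ F ∧ ¬ dS d₁ d₂ f₁ f₂ u v ≤ E := by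
  rintro (x | x) (y | y) h
  · exact (H.tot₁ x y).mp (Or.inl h)
  · exact ⟨h.1, h.2.1⟩
  · exact ⟨h.1, h.2.1⟩
  · exact (H.tot₂ x y).mp (Or.inl h)

theorem S_total : ∀ u v, dS d₁ d₂ f₁ f₂ u v ≤ F → ¬ dS d₁ d₂ f₁ f₂ u v ≤ E →
    SRel d₁ d₂ f₁ f₂ E F R₁ R₂ u v ∨ SRel d₁ d₂ f₁ f₂ E F R₁ R₂ v u := by
  rintro (x | x) (y | y) hF hE
  · exact (H.tot₁ x y).mpr ⟨hF, hE⟩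
  · by_cases hc : crossLt d₁ d₂ f₁ f₂ E R₁ R₂ x y
    · exact Or.inl ⟨hF, hE, hc⟩
    · exact Or.inr ⟨hF, hE, hc⟩
  · by_cases hc : crossLt d₁ d₂ f₁ f₂ E R₁ R₂ y x
    · exact Or.inr ⟨hF, hE, hc⟩
    · exact Or.inl ⟨hF, hE, hc⟩
  · exact (H.tot₂ x y).mpr ⟨hF, hE⟩

theorem S_asym : ∀ u v, SRel d₁ d₂ f₁ f₂ E F R₁ R₂ u v →
    ¬ SRel d₁ d₂ f₁ f₂ E F R₁ R₂ v u := by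
  rintro (x | x) (y | y) h h'
  · exact H.asym₁ h h'
  · exact h'.2.2 h.2.2
  · exact h.2.2 h'.2.2
  · exact H.asym₂ h h'

theorem cmp_congL {u u' v : B₁ ⊕ B₂} (hE' : dS d₁ d₂ f₁ f₂ u u' ≤ E)
    (hF : dS d₁ d₂ f₁ f₂ u v ≤ F) (hE : ¬ dS d₁ d₂ f₁ f₂ u v ≤ E) :
    dS d₁ d₂ f₁ f₂ u' v ≤ F ∧ ¬ dS d₁ d₂ f₁ f₂ u' v ≤ E := by
  have h0 : dS d₁ d₂ f₁ f₂ u' u ≤ E := by rw [H.dS_symm u' u]; exact hE'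
  constructor
  · exact (H.dS_tri u' u v).trans (sup_le (h0.trans H.hEF) hF)
  · exact fun hc => hE ((H.dS_tri u u' v).trans (sup_le hE' hc))

theorem S_congL_aux : ∀ u u' v, dS d₁ d₂ f₁ f₂ u u' ≤ E →
    SRel d₁ d₂ f₁ f₂ E F R₁ R₂ u v → SRel d₁ d₂ f₁ f₂ E F R₁ R₂ u' v := by
  rintro (x | x) (x' | x') (z | z) hE' h
  · -- l l l
    exact H.lelt₁ (Or.inr (H.symmE₁ hE')) h
  · -- l l r
    obtain ⟨hF, hE, a, h1, h2, h3⟩ := h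
    obtain ⟨cF, cE⟩ := H.cmp_congL hE' hF hE
    refine ⟨cF, cE, a, H.lele₁ (Or.inr (H.symmE₁ hE')) h1, h2, ?_⟩
    rcases h3 with h3 | h3
    · exact Or.inl (H.lelt₁ (Or.inr (H.symmE₁ hE')) h3)
    · exact Or.inr h3
  · -- l r l : x ∈ B₁ is E-glued to x' ∈ B₂, both compared with z ∈ B₁
    rcases H.cross_E hE' with ⟨a₀, ha₁, ha₂⟩ | hall
    · have cxz := (H.tot₁ x z).mp (Or.inl h)
      obtain ⟨cF, cE⟩ := H.cmp_congL (u := Sum.inl x) (v := Sum.inl z) hE' cxz.1 cxz.2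
      refine ⟨cF, cE, ?_⟩
      rintro ⟨a, h1, h2, h3⟩
      have k1 : R₂ (f₂ a) (f₂ a₀) ∨ d₂ (f₂ a) (f₂ a₀) ≤ E :=
        H.lele₂ h2 (Or.inr (H.symmE₂ ha₂))
      have k3 : R₁ (f₁ a) x ∨ d₁ (f₁ a) x ≤ E :=
        H.lele₁ (H.leT.mpr k1) (Or.inr (H.symmE₁ ha₁))
      have hzx : R₁ z x := by
        rcases h3 with h3 | h3
        · exact H.ltle₁ h3 k3
        · have h4 : R₁ (f₁ a) (f₁ a₀) :=
            (H.hT a a₀).mpr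
              ((H.cg₂ (f₂ a) (f₂ a) x' (f₂ a₀) (H.botE₂ _) (H.symmE₂ ha₂)).mp h3)
          exact H.lelt₁ h1 (H.ltle₁ h4 (Or.inr (H.symmE₁ ha₁)))
      exact H.asym₁ h hzx
    · exact absurd (hall _) ((H.tot₁ x z).mp (Or.inl h)).2
  · -- l r r : x E-glued to x' ∈ B₂, compared with z ∈ B₂
    obtain ⟨hF, hE, a, h1, h2, h3⟩ := h
    rcases H.cross_E hE' with ⟨a₀, ha₁, ha₂⟩ | hall
    · have k1 : R₁ (f₁ a₀) (f₁ a) ∨ d₁ (f₁ a₀) (f₁ a) ≤ E :=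
        H.lele₁ (Or.inr (H.symmE₁ ha₁)) h1
      have k2 : R₂ x' (f₂ a) ∨ d₂ x' (f₂ a) ≤ E :=
        H.lele₂ (Or.inr (H.symmE₂ ha₂)) (H.leT.mp k1)
      rcases h3 with h3 | h3
      · have h4 : R₂ (f₂ a₀) (f₂ a) :=
          (H.hT a₀ a).mp ((H.cg₁ x (f₁ a₀) (f₁ a) (f₁ a) ha₁ (H.botE₁ _)).mp h3)
        have h5 : R₂ x' (f₂ a) :=
          (H.cg₂ (f₂ a₀) x' (f₂ a) (f₂ a) ha₂ (H.botE₂ _)).mp h4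
        exact H.ltle₂ h5 h2
      · exact H.lelt₂ k2 h3
    · exact absurd (hall _) hE
  · -- r l l : x ∈ B₂ glued to x' ∈ B₁, compared with z ∈ B₁
    obtain ⟨hF, hE, hnc⟩ := h
    rcases H.cross_E (x := x') (y := x) hE' with ⟨a₀, ha₁, ha₂⟩ | hall
    · obtain ⟨cF, cE⟩ := H.cmp_congL (u := Sum.inr x) (v := Sum.inl z) hE' hF hE
      rcases (H.tot₁ x' z).mpr ⟨cF, cE⟩ with hgood | hbad
      · exact hgood
      · exfalso
        have k1 : R₁ z (f₁ a₀) := H.ltle₁ hbad (Or.inr ha₁)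
        exact hnc ⟨a₀, Or.inl k1, Or.inr ha₂, Or.inl k1⟩
    · exact absurd (hall _) hE
  · -- r l r : x ∈ B₂ glued to x' ∈ B₁, compared with z ∈ B₂
    rcases H.cross_E (x := x') (y := x) hE' with ⟨a₀, ha₁, ha₂⟩ | hall
    · have cxz := (H.tot₂ x z).mp (Or.inl h)
      obtain ⟨cF, cE⟩ := H.cmp_congL (u := Sum.inr x) (v := Sum.inr z) hE' cxz.1 cxz.2
      have h5 : R₂ (f₂ a₀) z := (H.cg₂ x (f₂ a₀) z z (H.symmE₂ ha₂) (H.botE₂ _)).mp h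
      exact ⟨cF, cE, a₀, Or.inr ha₁, Or.inl h5, Or.inr h5⟩
    · exact absurd h (H.notR₂ hall)
  · -- r r l
    obtain ⟨hF, hE, hnc⟩ := h
    obtain ⟨cF, cE⟩ := H.cmp_congL hE' hF hE
    refine ⟨cF, cE, ?_⟩
    rintro ⟨a, h1, h2, h3⟩
    refine hnc ⟨a, h1, H.lele₂ h2 (Or.inr (H.symmE₂ hE')), ?_⟩
    rcases h3 with h3 | h3
    · exact Or.inl h3
    · exact Or.inr (H.ltle₂ h3 (Or.inr (H.symmE₂ hE')))
  · -- r r r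
    exact H.lelt₂ (Or.inr (H.symmE₂ hE')) h

theorem S_congR_aux {u v v' : B₁ ⊕ B₂} (h : dS d₁ d₂ f₁ f₂ v v' ≤ E)
    (huv : SRel d₁ d₂ f₁ f₂ E F R₁ R₂ u v) : SRel d₁ d₂ f₁ f₂ E F R₁ R₂ u v' := by
  have c := H.S_cmp u v huv
  have hF' : dS d₁ d₂ f₁ f₂ u v' ≤ F :=
    (H.dS_tri u v v').trans (sup_le c.1 (h.trans H.hEF))
  have hE' : ¬ dS d₁ d₂ f₁ f₂ u v' ≤ E := fun hc =>
    c.2 ((H.dS_tri u v' v).trans (sup_le hc (by rw [H.dS_symm v' v]; exact h)))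
  rcases H.S_total u v' hF' hE' with h' | h'
  · exact h'
  · exact absurd (H.S_congL_aux v' v u (by rw [H.dS_symm v' v]; exact h) h')
      (H.S_asym u v huv)

theorem S_cong {u u' v v' : B₁ ⊕ B₂} (hu : dS d₁ d₂ f₁ f₂ u u' ≤ E)
    (hv : dS d₁ d₂ f₁ f₂ v v' ≤ E) :
    SRel d₁ d₂ f₁ f₂ E F R₁ R₂ u v ↔ SRel d₁ d₂ f₁ f₂ E F R₁ R₂ u' v' := by
  constructor
  · exact fun h => H.S_congR_aux hv (H.S_congL_aux u u' v hu h)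
  · intro h
    refine H.S_congR_aux (by rw [H.dS_symm v' v]; exact hv)
      (H.S_congL_aux u' u v' (by rw [H.dS_symm u' u]; exact hu) h)

theorem S_trans : ∀ u v w, SRel d₁ d₂ f₁ f₂ E F R₁ R₂ u v →
    SRel d₁ d₂ f₁ f₂ E F R₁ R₂ v w → SRel d₁ d₂ f₁ f₂ E F R₁ R₂ u w := by
  intro u v w h1 h2
  have c1 := H.S_cmp u v h1
  have c2 := H.S_cmp v w h2
  have hFuw : dS d₁ d₂ f₁ f₂ u w ≤ F := (H.dS_tri u v w).trans (sup_le c1.1 c2.1)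
  have hEuw : ¬ dS d₁ d₂ f₁ f₂ u w ≤ E := by
    intro hc
    refine H.S_asym u v h1 (H.S_congR_aux ?_ h2)
    rw [H.dS_symm w u]; exact hc
  clear c1 c2
  revert h1 h2 hFuw hEuw
  rcases u with x | x <;> rcases v with y | y <;> rcases w with z | z <;>
    intro h1 h2 hFuw hEuw
  · exact H.tr₁ x y z h1 h2
  · -- l l r
    obtain ⟨_, _, a, k1, k2, k3⟩ := h2
    have k1' : R₁ x (f₁ a) := H.ltle₁ h1 k1
    exact ⟨hFuw, hEuw, a, Or.inl k1', k2, Or.inl k1'⟩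
  · -- l r l
    obtain ⟨_, _, a, k1, k2, k3⟩ := h1
    obtain ⟨_, _, hnc⟩ := h2
    rcases (H.tot₁ x z).mpr ⟨hFuw, hEuw⟩ with hgood | hbad
    · exact hgood
    · exfalso
      have k1' : R₁ z (f₁ a) := H.ltle₁ hbad k1
      exact hnc ⟨a, Or.inl k1', k2, Or.inl k1'⟩
  · -- l r r
    obtain ⟨_, _, a, k1, k2, k3⟩ := h1
    exact ⟨hFuw, hEuw, a, k1, Or.inl (H.lelt₂ k2 h2), Or.inr (H.lelt₂ k2 h2)⟩
  · -- r l l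
    obtain ⟨_, _, hnc⟩ := h1
    refine ⟨hFuw, hEuw, ?_⟩
    rintro ⟨a, k1, k2, k3⟩
    have k1' : R₁ y (f₁ a) := H.ltle₁ h2 k1
    exact hnc ⟨a, Or.inl k1', k2, Or.inl k1'⟩
  · -- r l r
    obtain ⟨_, _, hnc⟩ := h1
    obtain ⟨_, _, b, k1, k2, k3⟩ := h2
    rcases (H.tot₂ x z).mpr ⟨hFuw, hEuw⟩ with hgood | hbad
    · exact hgood
    · exfalso
      have k2' : R₂ (f₂ b) x := H.lelt₂ k2 hbad
      exact hnc ⟨b, k1, Or.inl k2', Or.inr k2'⟩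
  · -- r r l
    obtain ⟨_, _, hnc⟩ := h2
    refine ⟨hFuw, hEuw, ?_⟩
    rintro ⟨a, k1, k2, k3⟩
    have k2' : R₂ (f₂ a) y := H.lelt₂ k2 h1
    exact hnc ⟨a, k1, Or.inl k2', Or.inr k2'⟩
  · exact H.tr₂ x y z h1 h2

end Ctx

/-- The setoid identifying points at distance `⊥`. -/
def QSetoid (M : MCtx d₁ d₂ f₁ f₂) : Setoid (B₁ ⊕ B₂) where
  r u v := dS d₁ d₂ f₁ f₂ u v = ⊥
  iseqv := by
    refine ⟨fun u => M.dS_self u, ?_, ?_⟩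
    · intro u v h; rw [M.dS_symm v u]; exact h
    · intro u v w h h'
      refine le_antisymm ?_ bot_le
      exact (M.dS_tri u v w).trans (by rw [h, h']; simp)

/-- The quotient distance. -/
noncomputable def qd (M : MCtx d₁ d₂ f₁ f₂) :
    Quotient (QSetoid M) → Quotient (QSetoid M) → Λ :=
  Quotient.lift₂ (dS d₁ d₂ f₁ f₂) fun _ _ _ _ ha hb => M.wd _ _ _ _ ha hb

theorem qd_ultra (M : MCtx d₁ d₂ f₁ f₂) : IsLambdaUltrametric (qd M) := by
  refine ⟨fun p q => ?_, fun p q => ?_, fun p q r => ?_⟩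
  · refine Quotient.inductionOn₂ p q fun u v => ?_
    show dS d₁ d₂ f₁ f₂ u v = ⊥ ↔ _
    rw [Quotient.eq]
    exact Iff.rfl
  · exact Quotient.inductionOn₂ p q fun u v => M.dS_symm u v
  · exact Quotient.inductionOn₃ p q r fun u v w => M.dS_tri u v w

variable {E F : Λ} {R₁ : B₁ → B₁ → Prop} {R₂ : B₂ → B₂ → Prop}

/-- The quotient order. -/
noncomputable def qS (M : MCtx d₁ d₂ f₁ f₂) (H : Ctx d₁ d₂ f₁ f₂ E F R₁ R₂) :
    Quotient (QSetoid M) → Quotient (QSetoid M) → Prop :=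
  Quotient.lift₂ (SRel d₁ d₂ f₁ f₂ E F R₁ R₂) fun _ _ _ _ ha hb =>
    propext (H.S_cong (ha.le.trans bot_le) (hb.le.trans bot_le))

theorem qS_subq (M : MCtx d₁ d₂ f₁ f₂) (H : Ctx d₁ d₂ f₁ f₂ E F R₁ R₂) :
    IsSubquotientOrder (qd M) E F (qS M H) := by
  refine ⟨fun p q r => Quotient.inductionOn₃ p q r fun u v w => H.S_trans u v w,
    fun p q => Quotient.inductionOn₂ p q fun u v => ?_,
    fun p p' q q' => Quotient.inductionOn₂ p p' fun u u' =>
      Quotient.inductionOn₂ q q' fun v v' hu hv => H.S_cong hu hv⟩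
  constructor
  · rintro (h | h)
    · exact H.S_cmp u v h
    · have c := H.S_cmp v u h
      rw [M.dS_symm v u] at c
      exact c
  · exact fun h => H.S_total u v h.1 h.2

end Main

theorem main {Λ : Type} [DistribLattice Λ] [OrderBot Λ] [Fintype Λ]
    (n : ℕ) (E F : Fin n → Λ) (hEF : ∀ i, E i ≤ F i)
    (hirr : ∀ i, MeetIrreducible (E i))
    (A B₁ B₂ : Type) [Fintype A] [Fintype B₁] [Fintype B₂]
    (dA : A → A → Λ) (d₁ : B₁ → B₁ → Λ) (d₂ : B₂ → B₂ → Λ)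
    (RA : Fin n → A → A → Prop) (R₁ : Fin n → B₁ → B₁ → Prop)
    (R₂ : Fin n → B₂ → B₂ → Prop)
    (hA : IsLambdaUltrametric dA) (h₁ : IsLambdaUltrametric d₁)
    (h₂ : IsLambdaUltrametric d₂)
    (hRA : ∀ i, IsSubquotientOrder dA (E i) (F i) (RA i))
    (hR₁ : ∀ i, IsSubquotientOrder d₁ (E i) (F i) (R₁ i))
    (hR₂ : ∀ i, IsSubquotientOrder d₂ (E i) (F i) (R₂ i))
    (f₁ : A → B₁) (f₂ : A → B₂)
    (hf₁d : ∀ x y, d₁ (f₁ x) (f₁ y) = dA x y)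
    (hf₂d : ∀ x y, d₂ (f₂ x) (f₂ y) = dA x y)
    (hf₁R : ∀ i x y, RA i x y ↔ R₁ i (f₁ x) (f₁ y))
    (hf₂R : ∀ i x y, RA i x y ↔ R₂ i (f₂ x) (f₂ y)) :
    ∃ (C : Type) (_ : Fintype C) (dC : C → C → Λ)
      (RC : Fin n → C → C → Prop) (g₁ : B₁ → C) (g₂ : B₂ → C),
      IsLambdaUltrametric dC ∧
      (∀ i, IsSubquotientOrder dC (E i) (F i) (RC i)) ∧
      (∀ x y, dC (g₁ x) (g₁ y) = d₁ x y) ∧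
      (∀ x y, dC (g₂ x) (g₂ y) = d₂ x y) ∧
      (∀ i x y, R₁ i x y ↔ RC i (g₁ x) (g₁ y)) ∧
      (∀ i x y, R₂ i x y ↔ RC i (g₂ x) (g₂ y)) ∧
      (∀ a, g₁ (f₁ a) = g₂ (f₂ a)) := by
  classical
  have M : MCtx d₁ d₂ f₁ f₂ :=
    ⟨h₁.1, h₁.2.1, h₁.2.2, h₂.1, h₂.2.1, h₂.2.2, fun a b => by rw [hf₁d, hf₂d]⟩
  have Hc : ∀ i, Ctx d₁ d₂ f₁ f₂ (E i) (F i) (R₁ i) (R₂ i) := fun i =>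
    { toMCtx := M
      hEF := hEF i
      hirr := hirr i
      tr₁ := (hR₁ i).1
      tot₁ := (hR₁ i).2.1
      cg₁ := (hR₁ i).2.2
      tr₂ := (hR₂ i).1
      tot₂ := (hR₂ i).2.1
      cg₂ := (hR₂ i).2.2
      hT := fun a b => (hf₁R i a b).symm.trans (hf₂R i a b) }
  refine ⟨Quotient (QSetoid M), Quotient.fintype _, qd M, fun i => qS M (Hc i),
    fun b => Quotient.mk (QSetoid M) (Sum.inl b),
    fun b => Quotient.mk (QSetoid M) (Sum.inr b),
    qd_ultra M, fun i => qS_subq M (Hc i), fun x y => rfl, fun x y => rfl,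
    fun i x y => Iff.rfl, fun i x y => Iff.rfl, fun a => Quotient.sound ?_⟩
  show dS d₁ d₂ f₁ f₂ (Sum.inl (f₁ a)) (Sum.inr (f₂ a)) = ⊥
  refine le_antisymm ?_ bot_le
  have h := dS_cross_le (d₁ := d₁) (d₂ := d₂) (f₁ := f₁) (f₂ := f₂) (f₁ a) (f₂ a) a
  simpa [(h₁.1 (f₁ a) (f₁ a)).mpr rfl, (h₂.1 (f₂ a) (f₂ a)).mpr rfl] using h

end Stmt2Aux

/-- the class of finite Λ-ultrametric spaces equipped with
subquotient orders from meet-irreducible `Eᵢ` to `Fᵢ` has amalgamation. -/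


theorem stmt_2 {Λ : Type} [DistribLattice Λ] [OrderBot Λ] [Fintype Λ]
    (n : ℕ) (E F : Fin n → Λ) (hEF : ∀ i, E i ≤ F i)
    (hirr : ∀ i, MeetIrreducible (E i))
    (A B₁ B₂ : Type) [Fintype A] [Fintype B₁] [Fintype B₂]
    (dA : A → A → Λ) (d₁ : B₁ → B₁ → Λ) (d₂ : B₂ → B₂ → Λ)
    (RA : Fin n → A → A → Prop) (R₁ : Fin n → B₁ → B₁ → Prop)
    (R₂ : Fin n → B₂ → B₂ → Prop)
    (hA : IsLambdaUltrametric dA) (h₁ : IsLambdaUltrametric d₁)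
    (h₂ : IsLambdaUltrametric d₂)
    (hRA : ∀ i, IsSubquotientOrder dA (E i) (F i) (RA i))
    (hR₁ : ∀ i, IsSubquotientOrder d₁ (E i) (F i) (R₁ i))
    (hR₂ : ∀ i, IsSubquotientOrder d₂ (E i) (F i) (R₂ i))
    (f₁ : A → B₁) (f₂ : A → B₂)
    (hf₁d : ∀ x y, d₁ (f₁ x) (f₁ y) = dA x y)
    (hf₂d : ∀ x y, d₂ (f₂ x) (f₂ y) = dA x y)
    (hf₁R : ∀ i x y, RA i x y ↔ R₁ i (f₁ x) (f₁ y))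
    (hf₂R : ∀ i x y, RA i x y ↔ R₂ i (f₂ x) (f₂ y)) :
    ∃ (C : Type) (_ : Fintype C) (dC : C → C → Λ)
      (RC : Fin n → C → C → Prop) (g₁ : B₁ → C) (g₂ : B₂ → C),
      IsLambdaUltrametric dC ∧
      (∀ i, IsSubquotientOrder dC (E i) (F i) (RC i)) ∧
      (∀ x y, dC (g₁ x) (g₁ y) = d₁ x y) ∧
      (∀ x y, dC (g₂ x) (g₂ y) = d₂ x y) ∧
      (∀ i x y, R₁ i x y ↔ RC i (g₁ x) (g₁ y)) ∧
      (∀ i x y, R₂ i x y ↔ RC i (g₂ x) (g₂ y)) ∧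
      (∀ a, g₁ (f₁ a) = g₂ (f₂ a)) := by
  exact Stmt2Aux.main n E F hEF hirr A B₁ B₂ dA d₁ d₂ RA R₁ R₂ hA h₁ h₂ hRA hR₁ hR₂
    f₁ f₂ hf₁d hf₂d hf₁R hf₂R
end

section
/- Let Λ be a finite lattice. If the class of all finite Λ-ultrametric spaces has the amalgamation property (with isometries as embeddings), then Λ is a distributive lattice. -/
set_option maxHeartbeats 2000000

/-- The 3-point base space: `p`, `q1`, `q2`. -/
inductive Amalg.A3 : Type | p | q1 | q2
  deriving DecidableEq

instance : Fintype Amalg.A3 := ⟨{.p, .q1, .q2}, fun x => by cases x <;> simp⟩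

/-- The base together with a point `w` at distances `a`, `b`, `c` from the base. -/
inductive Amalg.B4 : Type | p | q1 | q2 | w
  deriving DecidableEq

instance : Fintype Amalg.B4 := ⟨{.p, .q1, .q2, .w}, fun x => by cases x <;> simp⟩

/-- The base together with points `z1`, `z2` at distance `a ⊓ (b ⊔ c)` apart. -/
inductive Amalg.B5 : Type | p | q1 | q2 | z1 | z2
  deriving DecidableEq

instance : Fintype Amalg.B5 := ⟨{.p, .q1, .q2, .z1, .z2}, fun x => by cases x <;> simp⟩

namespace Amalg

variable {Λ : Type} [Lattice Λ] [OrderBot Λ]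

/-- Distances on the base: `d(p,q1)=a⊔b`, `d(p,q2)=a⊔c`, `d(q1,q2)=b⊔c`. -/
def dA3 (a b c : Λ) : A3 → A3 → Λ
  | .p, .p => ⊥ | .p, .q1 => a⊔b | .p, .q2 => a⊔c
  | .q1, .p => a⊔b | .q1, .q1 => ⊥ | .q1, .q2 => b⊔c
  | .q2, .p => a⊔c | .q2, .q1 => b⊔c | .q2, .q2 => ⊥

/-- Distances on `B4`: the base, plus `d(w,p)=a`, `d(w,q1)=b`, `d(w,q2)=c`. -/
def dB4 (a b c : Λ) : B4 → B4 → Λ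
  | .p, .p => ⊥ | .p, .q1 => a⊔b | .p, .q2 => a⊔c | .p, .w => a
  | .q1, .p => a⊔b | .q1, .q1 => ⊥ | .q1, .q2 => b⊔c | .q1, .w => b
  | .q2, .p => a⊔c | .q2, .q1 => b⊔c | .q2, .q2 => ⊥ | .q2, .w => c
  | .w, .p => a | .w, .q1 => b | .w, .q2 => c | .w, .w => ⊥

/-- Distances on `B5`: the base, plus `z1`, `z2` with `d(z1,z2) = a ⊓ (b ⊔ c)`,
`d(z1,p)=d(z2,p)=a`, `d(z1,q1)=b`, `d(z2,q2)=c`, and the remaining distances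
padded by `a ⊓ (b ⊔ c)`. -/
def dB5 (a b c : Λ) : B5 → B5 → Λ
  | .p, .p => ⊥ | .p, .q1 => a⊔b | .p, .q2 => a⊔c | .p, .z1 => a | .p, .z2 => a
  | .q1, .p => a⊔b | .q1, .q1 => ⊥ | .q1, .q2 => b⊔c | .q1, .z1 => b | .q1, .z2 => b⊔(a⊓(b⊔c))
  | .q2, .p => a⊔c | .q2, .q1 => b⊔c | .q2, .q2 => ⊥ | .q2, .z1 => c⊔(a⊓(b⊔c)) | .q2, .z2 => c
  | .z1, .p => a | .z1, .q1 => b | .z1, .q2 => c⊔(a⊓(b⊔c)) | .z1, .z1 => ⊥ | .z1, .z2 => a⊓(b⊔c)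
  | .z2, .p => a | .z2, .q1 => b⊔(a⊓(b⊔c)) | .z2, .q2 => c | .z2, .z1 => a⊓(b⊔c) | .z2, .z2 => ⊥

theorem dA3_ultra (a b c : Λ) (ha : a ≠ ⊥) (hb : b ≠ ⊥) (hc : c ≠ ⊥) :
    IsLambdaUltrametric (dA3 a b c) := by
  refine ⟨?_, ?_, ?_⟩
  · intro x y; cases x <;> cases y <;> simp_all [dA3, sup_eq_bot_iff]
  · intro x y; cases x <;> cases y <;> rfl
  · intro x y z
    cases x <;> cases y <;> cases z <;> dsimp only [dA3] <;>
      solve_by_elim (maxDepth := 8) [sup_le, le_sup_of_le_left,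
        le_sup_of_le_right, le_sup_left, le_sup_right, le_refl, bot_le]

theorem dB4_ultra (a b c : Λ) (ha : a ≠ ⊥) (hb : b ≠ ⊥) (hc : c ≠ ⊥) :
    IsLambdaUltrametric (dB4 a b c) := by
  refine ⟨?_, ?_, ?_⟩
  · intro x y; cases x <;> cases y <;> simp_all [dB4, sup_eq_bot_iff]
  · intro x y; cases x <;> cases y <;> rfl
  · intro x y z
    cases x <;> cases y <;> cases z <;> dsimp only [dB4] <;>
      solve_by_elim (maxDepth := 8) [sup_le, le_sup_of_le_left,
        le_sup_of_le_right, le_sup_left, le_sup_right, le_refl, bot_le]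

theorem dB5_ultra (a b c : Λ) (ha : a ≠ ⊥) (hb : b ≠ ⊥) (hc : c ≠ ⊥)
    (hm : a ⊓ (b ⊔ c) ≠ ⊥) :
    IsLambdaUltrametric (dB5 a b c) := by
  have hma : a ⊓ (b ⊔ c) ≤ a := inf_le_left
  have hmbc : a ⊓ (b ⊔ c) ≤ b ⊔ c := inf_le_right
  refine ⟨?_, ?_, ?_⟩
  · intro x y; cases x <;> cases y <;> simp_all [dB5, sup_eq_bot_iff]
  · intro x y; cases x <;> cases y <;> rfl
  · intro x y z
    cases x <;> cases y <;> cases z <;> dsimp only [dB5] <;>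
      solve_by_elim (maxDepth := 8) [sup_le, le_sup_of_le_left,
        le_sup_of_le_right, le_sup_left, le_sup_right, le_refl, bot_le, hma, hmbc]

/-- Inclusion of the base into `B5`. -/
def f₁ : A3 → B5 | .p => .p | .q1 => .q1 | .q2 => .q2

/-- Inclusion of the base into `B4`. -/
def f₂ : A3 → B4 | .p => .p | .q1 => .q1 | .q2 => .q2

theorem f₁_iso (a b c : Λ) : ∀ x y, dB5 a b c (f₁ x) (f₁ y) = dA3 a b c x y := by
  intro x y; cases x <;> cases y <;> rfl

theorem f₂_iso (a b c : Λ) : ∀ x y, dB4 a b c (f₂ x) (f₂ y) = dA3 a b c x y := by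
  intro x y; cases x <;> cases y <;> rfl

end Amalg

/-- if the class of all finite Λ-ultrametric spaces (Λ a finite
lattice) has the amalgamation property, then Λ is distributive. -/
theorem stmt_3 {Λ : Type} [Lattice Λ] [OrderBot Λ] [Fintype Λ]
    (amalg : ∀ (A B₁ B₂ : Type) [Fintype A] [Fintype B₁] [Fintype B₂]
      (dA : A → A → Λ) (d₁ : B₁ → B₁ → Λ) (d₂ : B₂ → B₂ → Λ),
      IsLambdaUltrametric dA → IsLambdaUltrametric d₁ → IsLambdaUltrametric d₂ →
      ∀ (f₁ : A → B₁) (f₂ : A → B₂),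
        (∀ x y, d₁ (f₁ x) (f₁ y) = dA x y) →
        (∀ x y, d₂ (f₂ x) (f₂ y) = dA x y) →
        ∃ (C : Type) (_ : Fintype C) (dC : C → C → Λ)
          (g₁ : B₁ → C) (g₂ : B₂ → C),
          IsLambdaUltrametric dC ∧
          (∀ x y, dC (g₁ x) (g₁ y) = d₁ x y) ∧
          (∀ x y, dC (g₂ x) (g₂ y) = d₂ x y) ∧
          (∀ a, g₁ (f₁ a) = g₂ (f₂ a))) :
    ∀ a b c : Λ, a ⊓ (b ⊔ c) ≤ (a ⊓ b) ⊔ (a ⊓ c) := by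
  intro a b c
  -- degenerate cases
  by_cases hm : a ⊓ (b ⊔ c) = ⊥
  · simp [hm]
  by_cases hb : b = ⊥
  · simp [hb]
  by_cases hc : c = ⊥
  · simp [hc]
  have ha : a ≠ ⊥ := by
    intro h; exact hm (le_bot_iff.mp (h ▸ inf_le_left))
  obtain ⟨C, _, dC, g₁, g₂, ⟨hC0, hCs, hCt⟩, h1, h2, hcomm⟩ :=
    amalg Amalg.A3 Amalg.B5 Amalg.B4 (Amalg.dA3 a b c) (Amalg.dB5 a b c)
      (Amalg.dB4 a b c) (Amalg.dA3_ultra a b c ha hb hc)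
      (Amalg.dB5_ultra a b c ha hb hc hm) (Amalg.dB4_ultra a b c ha hb hc)
      Amalg.f₁ Amalg.f₂ (Amalg.f₁_iso a b c) (Amalg.f₂_iso a b c)
  -- images of the base points coincide
  have hp : g₁ Amalg.B5.p = g₂ Amalg.B4.p := hcomm Amalg.A3.p
  have hq1 : g₁ Amalg.B5.q1 = g₂ Amalg.B4.q1 := hcomm Amalg.A3.q1
  have hq2 : g₁ Amalg.B5.q2 = g₂ Amalg.B4.q2 := hcomm Amalg.A3.q2
  set e₁ := dC (g₁ Amalg.B5.z1) (g₂ Amalg.B4.w) with he₁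
  set e₂ := dC (g₁ Amalg.B5.z2) (g₂ Amalg.B4.w) with he₂
  -- e₁ ≤ a (via p), e₁ ≤ b (via q1)
  have he1a : e₁ ≤ a := by
    have := hCt (g₁ Amalg.B5.z1) (g₁ Amalg.B5.p) (g₂ Amalg.B4.w)
    rw [h1, hp, h2] at this
    simpa [Amalg.dB5, Amalg.dB4] using this
  have he1b : e₁ ≤ b := by
    have := hCt (g₁ Amalg.B5.z1) (g₁ Amalg.B5.q1) (g₂ Amalg.B4.w)
    rw [h1, hq1, h2] at this
    simpa [Amalg.dB5, Amalg.dB4] using this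
  -- e₂ ≤ a (via p), e₂ ≤ c (via q2)
  have he2a : e₂ ≤ a := by
    have := hCt (g₁ Amalg.B5.z2) (g₁ Amalg.B5.p) (g₂ Amalg.B4.w)
    rw [h1, hp, h2] at this
    simpa [Amalg.dB5, Amalg.dB4] using this
  have he2c : e₂ ≤ c := by
    have := hCt (g₁ Amalg.B5.z2) (g₁ Amalg.B5.q2) (g₂ Amalg.B4.w)
    rw [h1, hq2, h2] at this
    simpa [Amalg.dB5, Amalg.dB4] using this
  -- the key triangle inequality through w
  have hkey : a ⊓ (b ⊔ c) ≤ e₁ ⊔ e₂ := by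
    have := hCt (g₁ Amalg.B5.z1) (g₂ Amalg.B4.w) (g₁ Amalg.B5.z2)
    rw [h1] at this
    have hsymm : dC (g₂ Amalg.B4.w) (g₁ Amalg.B5.z2) = e₂ :=
      (hCs _ _).symm
    rw [hsymm] at this
    simpa [Amalg.dB5] using this
  calc a ⊓ (b ⊔ c) ≤ e₁ ⊔ e₂ := hkey
    _ ≤ (a ⊓ b) ⊔ (a ⊓ c) := sup_le_sup (le_inf he1a he1b) (le_inf he2a he2c)
end

section
/- Let Λ be a lattice with least element ⊥, let (X,d) be a Λ-ultrametric space, and let E, F₁, F₂ ∈ Λ with E = F₁ ⊓ F₂. If R is a subquotient order on X from F₁ to F₁ ⊔ F₂, then the relation R' defined by R' x y :↔ (d(x,y) ≤ F₂ and R x y) is a subquotient order on X from E to F₂. -/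
/-- if `E = F₁ ⊓ F₂` and `R` is a subquotient order from `F₁` to
`F₁ ⊔ F₂`, then `R' x y :↔ (d x y ≤ F₂ ∧ R x y)` is a subquotient order from
`E` to `F₂`. -/
theorem stmt_4 {Λ X : Type*} [Lattice Λ] [OrderBot Λ]
    (d : X → X → Λ) (hd : IsLambdaUltrametric d)
    (E F₁ F₂ : Λ) (hE : E = F₁ ⊓ F₂)
    (R : X → X → Prop) (hR : IsSubquotientOrder d F₁ (F₁ ⊔ F₂) R) :
    IsSubquotientOrder d E F₂ (fun x y => d x y ≤ F₂ ∧ R x y) := by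
  obtain ⟨hzero, hsymm, htri⟩ := hd
  obtain ⟨htrans, hcomp, hcong⟩ := hR
  subst hE
  refine ⟨?_, ?_, ?_⟩
  · rintro x y z ⟨hxy, rxy⟩ ⟨hyz, ryz⟩
    exact ⟨(htri x y z).trans (sup_le hxy hyz), htrans x y z rxy ryz⟩
  · intro x y
    constructor
    · rintro (⟨h2, r⟩ | ⟨h2, r⟩)
      · have := (hcomp x y).mp (Or.inl r)
        exact ⟨h2, fun h => this.2 (h.trans inf_le_left)⟩
      · have := (hcomp x y).mp (Or.inr r)
        rw [hsymm y x] at h2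
        exact ⟨h2, fun h => this.2 (h.trans inf_le_left)⟩
    · rintro ⟨h2, hni⟩
      have hnF1 : ¬ d x y ≤ F₁ := fun h => hni (le_inf h h2)
      rcases (hcomp x y).mpr ⟨h2.trans le_sup_right, hnF1⟩ with r | r
      · exact Or.inl ⟨h2, r⟩
      · exact Or.inr ⟨(hsymm x y ▸ h2), r⟩
  · intro x x' y y' hx hy
    have hx1 : d x x' ≤ F₁ := hx.trans inf_le_left
    have hy1 : d y y' ≤ F₁ := hy.trans inf_le_left
    have hx2 : d x x' ≤ F₂ := hx.trans inf_le_right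
    have hy2 : d y y' ≤ F₂ := hy.trans inf_le_right
    have hRiff := hcong x x' y y' hx1 hy1
    have hdiff : d x y ≤ F₂ ↔ d x' y' ≤ F₂ := by
      constructor
      · intro h
        calc d x' y' ≤ d x' x ⊔ d x y' := htri _ _ _
          _ ≤ d x' x ⊔ (d x y ⊔ d y y') := sup_le_sup_left (htri _ _ _) _
          _ ≤ F₂ := by
              rw [hsymm x' x]
              exact sup_le hx2 (sup_le h hy2)
      · intro h
        calc d x y ≤ d x x' ⊔ d x' y := htri _ _ _
          _ ≤ d x x' ⊔ (d x' y' ⊔ d y' y) := sup_le_sup_left (htri _ _ _) _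
          _ ≤ F₂ := by
              rw [hsymm y' y]
              exact sup_le hx2 (sup_le h hy2)
    exact and_congr hdiff hRiff
end

section
/- Let X be a set and let S be a finite set of equivalence relations on X that contains the equality relation and is closed under binary intersection. Assume the infinite index property: for all E, F ∈ S with F strictly contained in E (as relations), for every x ∈ X there are infinitely many pairwise F-inequivalent elements that are E-equivalent to x. Let E ∈ S, let C be an E-class (the set of elements E-equivalent to some fixed x₀), and let (Eᵢ, Bᵢ) for i in a finite index set be pairs where Eᵢ ∈ S, Bᵢ is an Eᵢ-class, and E is not contained in Eᵢ (as relations). Then there exists c ∈ C with c ∉ Bᵢ for every i. -/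
/-- Auxiliary: Neumann-style covering lemma, by strong induction on the finite
index set. -/
theorem stmt_5_aux {X : Type*} {ι : Type*} [DecidableEq ι] (S : Set (X → X → Prop))
    (hequiv : ∀ E ∈ S, Equivalence E)
    (hinter : ∀ E ∈ S, ∀ F ∈ S, (fun x y => E x y ∧ F x y) ∈ S)
    (hIIP : ∀ E ∈ S, ∀ F ∈ S, (∀ x y, F x y → E x y) →
      (¬ ∀ x y, E x y → F x y) →
      ∀ x : X, ∃ T : Set X, T.Infinite ∧ (∀ y ∈ T, E x y) ∧
        T.Pairwise fun a b => ¬ F a b)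
    (ER : ι → X → X → Prop) (b : ι → X) :
    ∀ s : Finset ι, (∀ i ∈ s, ER i ∈ S) →
      ∀ E ∈ S, (∀ i ∈ s, ¬ ∀ x y, E x y → ER i x y) →
      ∀ x₀ : X, ∃ c, E x₀ c ∧ ∀ i ∈ s, ¬ ER i (b i) c := by
  classical
  intro s
  induction s using Finset.strongInduction with
  | _ s IH =>
    intro hER E hE hnot x₀
    rcases s.eq_empty_or_nonempty with rfl | ⟨j₀, hj₀⟩
    · exact ⟨x₀, (hequiv E hE).refl x₀, fun i hi => absurd hi (by simp)⟩
    -- the meets with E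
    set Fi : ι → X → X → Prop := fun i x y => E x y ∧ ER i x y with hFi
    -- pick a maximal meet
    obtain ⟨F, hFt, hFmax⟩ : ∃ m ∈ s.image Fi, ∀ x ∈ s.image Fi, ¬ m < x := by
      obtain ⟨m, hm⟩ := Finset.exists_maximal (s := s.image Fi) ((Finset.image_nonempty).2 ⟨j₀, hj₀⟩)
      exact ⟨m, hm.1, fun x hx hlt => absurd (hm.2 hx hlt.le) (not_le_of_gt hlt)⟩
    obtain ⟨j, hj, hjF⟩ := Finset.mem_image.1 hFt
    have hFS : F ∈ S := hjF ▸ hinter E hE (ER j) (hER j hj)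
    have hFE : ∀ x y, F x y → E x y := by
      rw [← hjF]; exact fun x y h => h.1
    have hEF : ¬ ∀ x y, E x y → F x y := by
      intro h
      exact hnot j hj (fun x y hxy => ((hjF ▸ h) x y hxy).2)
    -- key property of indices whose meet contains F
    have hKmax : ∀ i ∈ s, (∀ x y, F x y → ER i x y) →
        ∀ x y, E x y → ER i x y → F x y := by
      intro i hi hP
      have hle : F ≤ Fi i := fun x y h => ⟨hFE x y h, hP x y h⟩
      have hmax := hFmax (Fi i) (Finset.mem_image_of_mem Fi hi)
      have hle2 : Fi i ≤ F := by
        by_contra hcon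
        exact hmax (lt_of_le_not_ge hle hcon)
      exact fun x y h1 h2 => hle2 x y ⟨h1, h2⟩
    -- the IIP transversal
    obtain ⟨T, hTinf, hTE, hTpair⟩ := hIIP E hE F hFS hFE hEF x₀
    -- for each "maximal" index, at most one element of T lies in its class
    have hsub : ∀ i ∈ s, (∀ x y, F x y → ER i x y) →
        {y ∈ T | ER i (b i) y}.Subsingleton := by
      intro i hi hP a ha c hc
      by_contra hne
      refine hTpair ha.1 hc.1 hne ?_
      have hEac : E a c :=
        (hequiv E hE).trans ((hequiv E hE).symm (hTE a ha.1)) (hTE c hc.1)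
      have hRac : ER i a c :=
        (hequiv (ER i) (hER i hi)).trans
          ((hequiv (ER i) (hER i hi)).symm ha.2) hc.2
      exact hKmax i hi hP a c hEac hRac
    -- remove the finitely many bad elements of T
    have hbadfin : (⋃ i ∈ s.filter (fun i => ∀ x y, F x y → ER i x y),
        {y ∈ T | ER i (b i) y}).Finite := by
      refine Set.Finite.biUnion (s.filter _).finite_toSet (fun i hi => ?_)
      simp only [Finset.coe_filter, Set.mem_setOf_eq] at hi
      exact (hsub i hi.1 hi.2).finite
    obtain ⟨t₀, ht₀⟩ := (hTinf.diff hbadfin).nonempty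
    have ht₀T : t₀ ∈ T := ht₀.1
    have ht₀good : ∀ i ∈ s, (∀ x y, F x y → ER i x y) → ¬ ER i (b i) t₀ := by
      intro i hi hP hcon
      refine ht₀.2 ?_
      refine Set.mem_biUnion (x := i) ?_ ⟨ht₀T, hcon⟩
      exact Finset.mem_filter.2 ⟨hi, hP⟩
    -- recurse on the non-maximal indices
    set s' : Finset ι := s.filter (fun i => ¬ ∀ x y, F x y → ER i x y) with hs'
    have hss' : s' ⊂ s := by
      refine Finset.ssubset_iff_of_subset (Finset.filter_subset _ _) |>.2 ⟨j, hj, ?_⟩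
      simp only [hs', Finset.mem_filter, not_and, not_not]
      intro _
      rw [← hjF]; exact fun x y h => h.2
    have hER' : ∀ i ∈ s', ER i ∈ S := fun i hi => hER i (Finset.filter_subset _ _ hi)
    have hnot' : ∀ i ∈ s', ¬ ∀ x y, F x y → ER i x y := by
      intro i hi
      exact (Finset.mem_filter.1 hi).2
    obtain ⟨c, hFc, hc⟩ := IH s' hss' hER' F hFS hnot' t₀
    refine ⟨c, (hequiv E hE).trans (hTE t₀ ht₀T) (hFE t₀ c hFc), ?_⟩
    intro i hi
    by_cases hP : ∀ x y, F x y → ER i x y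
    · intro hcon
      refine ht₀good i hi hP ?_
      exact (hequiv (ER i) (hER i hi)).trans hcon
        ((hequiv (ER i) (hER i hi)).symm (hP t₀ c hFc))
    · exact hc i (Finset.mem_filter.2 ⟨hi, hP⟩)

/-- Neumann-style covering lemma for a finite meet-closed family
of equivalence relations with the infinite index property: an `E`-class is not
covered by finitely many classes of relations not containing `E`. -/
theorem stmt_5 {X : Type*} (S : Set (X → X → Prop)) (hfin : S.Finite)
    (hequiv : ∀ E ∈ S, Equivalence E)
    (heq : (fun x y : X => x = y) ∈ S)
    (hinter : ∀ E ∈ S, ∀ F ∈ S, (fun x y => E x y ∧ F x y) ∈ S)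
    -- infinite index property
    (hIIP : ∀ E ∈ S, ∀ F ∈ S, (∀ x y, F x y → E x y) →
      (¬ ∀ x y, E x y → F x y) →
      ∀ x : X, ∃ T : Set X, T.Infinite ∧ (∀ y ∈ T, E x y) ∧
        T.Pairwise fun a b => ¬ F a b)
    (E : X → X → Prop) (hE : E ∈ S) (x₀ : X)
    {ι : Type*} [Finite ι] (ER : ι → X → X → Prop) (hER : ∀ i, ER i ∈ S)
    (b : ι → X)
    (hnot : ∀ i, ¬ ∀ x y, E x y → ER i x y) :
    ∃ c, E x₀ c ∧ ∀ i, ¬ ER i (b i) c := by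
  classical
  have := Fintype.ofFinite ι
  obtain ⟨c, hc1, hc2⟩ := stmt_5_aux S hequiv hinter hIIP ER b Finset.univ
    (fun i _ => hER i) E hE (fun i _ => hnot i) x₀
  exact ⟨c, hc1, fun i => hc2 i (Finset.mem_univ i)⟩
end

section
/- Let X be a set and let S be a finite set of equivalence relations on X that contains the equality relation and the total (always-true) relation and is closed under binary intersection. For E, G ∈ S let E ∨ G denote the least member of S containing both E and G, namely the intersection of all members of S containing both (this exists since S is finite, closed under intersection, and contains the total relation). Assume the infinite index property: for all E, F ∈ S with F strictly contained in E, for every x ∈ X there are infinitely many pairwise F-inequivalent elements that are E-equivalent to x. Assume the structure (X, (E)_{E∈S}) is ultrahomogeneous: every bijection f between finite subsets of X satisfying E x y ↔ E (f x) (f y) for all E ∈ S extends to a bijection g of X onto itself satisfying E x y ↔ E (g x) (g y) for all E ∈ S and all x, y. Then the lattice (S, ⊆) is distributive: for all E, F, G ∈ S, (E ∨ G) ∩ (F ∨ G) ⊆ (E ∩ F) ∨ G. -/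
universe u

namespace Stmt6

def rle {X : Type u} (A B : X → X → Prop) : Prop := ∀ a b, A a b → B a b

theorem rle.trans {X : Type u} {A B C : X → X → Prop} (h1 : rle A B) (h2 : rle B C) : rle A C :=
  fun a b h => h2 a b (h1 a b h)

theorem rle.refl {X : Type u} (A : X → X → Prop) : rle A A := fun _ _ h => h

theorem rle.le {X : Type u} {A B : X → X → Prop} (h : rle A B) : A ≤ B := by
  intro a
  intro b
  exact fun hab => h a b hab

structure Ctx (X : Type u) where
  S : Set (X → X → Prop)
  hfin : S.Finite
  hequiv : ∀ E ∈ S, Equivalence E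
  heq : (fun x y : X => x = y) ∈ S
  htot : (fun _ _ : X => True) ∈ S
  hinter : ∀ E ∈ S, ∀ F ∈ S, (fun x y => E x y ∧ F x y) ∈ S
  hIIP : ∀ E ∈ S, ∀ F ∈ S, (∀ x y, F x y → E x y) → (¬ ∀ x y, E x y → F x y) →
      ∀ x : X, ∃ T : Set X, T.Infinite ∧ (∀ y ∈ T, E x y) ∧
        T.Pairwise fun a b => ¬ F a b
  hhom : ∀ s : Set X, s.Finite → ∀ f : X → X, Set.InjOn f s →
      (∀ E ∈ S, ∀ x ∈ s, ∀ y ∈ s, E x y ↔ E (f x) (f y)) →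
      ∃ g : X ≃ X, (∀ E ∈ S, ∀ x y, E x y ↔ E (g x) (g y)) ∧ ∀ x ∈ s, g x = f x

namespace Ctx

variable {X : Type u} (C : Ctx X)

theorem rrefl {E : X → X → Prop} (hE : E ∈ C.S) (a : X) : E a a := (C.hequiv E hE).refl a

theorem rsymm {E : X → X → Prop} (hE : E ∈ C.S) {a b : X} (h : E a b) : E b a :=
  (C.hequiv E hE).symm h

theorem rtrans {E : X → X → Prop} (hE : E ∈ C.S) {a b c : X} (h : E a b) (h' : E b c) : E a c :=
  (C.hequiv E hE).trans h h'

theorem bot_rle {E : X → X → Prop} (hE : E ∈ C.S) : rle (fun x y : X => x = y) E :=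
  fun a b h => h ▸ C.rrefl hE a

/-- a finite nonempty intersection-closed family has a least element -/
theorem exists_least (T : Set (X → X → Prop)) (hsub : T ⊆ C.S) (hne : T.Nonempty)
    (hcl : ∀ a ∈ T, ∀ b ∈ T, (fun x y => a x y ∧ b x y) ∈ T) :
    ∃ m ∈ T, ∀ b ∈ T, rle m b := by
  obtain ⟨m, hm, hmin⟩ := Set.Finite.exists_minimalFor id T (C.hfin.subset hsub) hne
  refine ⟨m, hm, fun b hb => ?_⟩
  have hc : (fun x y => m x y ∧ b x y) ∈ T := hcl m hm b hb
  have hle : (fun x y => m x y ∧ b x y) ≤ m := rle.le (fun a b h => h.1)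
  have heq2 := le_antisymm (hmin hc hle) hle
  intro x y hxy
  have h2 : m x y = (m x y ∧ b x y) := by
    have := congrFun (congrFun heq2 x) y
    simpa only [id] using this
  exact (h2 ▸ hxy).2


/-- homogeneity for pairs: pairs with the same type are automorphic -/
theorem hom_pair {a b c d : X} (h : ∀ H ∈ C.S, H a b ↔ H c d) :
    ∃ g : X ≃ X, (∀ E ∈ C.S, ∀ x y, E x y ↔ E (g x) (g y)) ∧ g a = c ∧ g b = d := by
  classical
  have hcd : a = b → c = d := by
    intro h'
    exact (h _ C.heq).mp h'
  have hdc : c = d → a = b := by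
    intro h'
    exact (h _ C.heq).mpr h'
  set f : X → X := fun p => if p = a then c else if p = b then d else p with hf
  have hfa : f a = c := by simp [hf]
  have hfb : f b = d := by
    by_cases hba : b = a
    · simp [hf, hba]
      exact hcd hba.symm
    · simp [hf, hba]
  have hs : ({a, b} : Set X).Finite := (Set.finite_singleton b).insert a
  have hmem : ∀ p ∈ ({a, b} : Set X), p = a ∨ p = b := by
    intro p hp
    rcases hp with hp | hp
    · exact Or.inl hp
    · exact Or.inr hp
  have hfval : ∀ p ∈ ({a, b} : Set X), (p = a ∧ f p = c) ∨ (p = b ∧ f p = d) := by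
    intro p hp
    rcases hmem p hp with rfl | rfl
    · exact Or.inl ⟨rfl, hfa⟩
    · exact Or.inr ⟨rfl, hfb⟩
  have hinj : Set.InjOn f ({a, b} : Set X) := by
    intro p hp q hq hpq
    rcases hfval p hp with ⟨rfl, hc1⟩ | ⟨rfl, hc1⟩ <;>
      rcases hfval q hq with ⟨rfl, hc2⟩ | ⟨rfl, hc2⟩
    · rfl
    · rw [hc1, hc2] at hpq; exact hdc hpq
    · rw [hc1, hc2] at hpq; exact (hdc hpq.symm).symm
    · rfl
  have hpres : ∀ H ∈ C.S, ∀ p ∈ ({a, b} : Set X), ∀ q ∈ ({a, b} : Set X),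
      H p q ↔ H (f p) (f q) := by
    intro H hH p hp q hq
    rcases hfval p hp with ⟨hp1, hc1⟩ | ⟨hp1, hc1⟩ <;>
      rcases hfval q hq with ⟨hq1, hc2⟩ | ⟨hq1, hc2⟩ <;> rw [hc1, hc2, hp1, hq1]
    · exact Iff.intro (fun _ => C.rrefl hH c) (fun _ => C.rrefl hH a)
    · exact h H hH
    · exact Iff.intro (fun h' => C.rsymm hH ((h H hH).mp (C.rsymm hH h')))
        (fun h' => C.rsymm hH ((h H hH).mpr (C.rsymm hH h')))
    · exact Iff.intro (fun _ => C.rrefl hH d) (fun _ => C.rrefl hH b)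
  obtain ⟨g, hg1, hg2⟩ := C.hhom _ hs f hinj hpres
  exact ⟨g, hg1, (hg2 a (Or.inl rfl)).trans hfa, (hg2 b (Or.inr rfl)).trans hfb⟩


theorem pigeon {α : Type u} {κ : Type*} [Finite κ] {T : Set α} (hT : T.Infinite) (c : α → κ) :
    ∃ t1 ∈ T, ∃ t2 ∈ T, t1 ≠ t2 ∧ c t1 = c t2 := by
  by_contra hcon
  push_neg at hcon
  have hinj : Set.InjOn c T := by
    intro p hp q hq hpq
    by_contra hne
    exact hcon p hp q hq hne hpq
  exact hT (Set.Finite.of_finite_image (Set.finite_univ.subset (Set.subset_univ _)) hinj)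

/-- The free extension lemma: for every `A ∈ S`, every point `v` and finite set `Y`,
there is `w` with `d(u,w) = d(u,v) ∨ A` for all `u ∈ Y`. -/
theorem ext_aux : ∀ (k : ℕ) (A : X → X → Prop), A ∈ C.S →
    ({B | B ∈ C.S ∧ rle B A}).ncard ≤ k → ∀ (v : X) (Y : Finset X),
    ∃ w : X, ∀ u ∈ Y, ∀ H ∈ C.S, H u w ↔ (H u v ∧ rle A H) := by
  intro k
  induction k with
  | zero =>
    intro A hA hk v Y
    exfalso
    have hmem : A ∈ {B | B ∈ C.S ∧ rle B A} := ⟨hA, rle.refl A⟩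
    have hfin : ({B | B ∈ C.S ∧ rle B A}).Finite := C.hfin.subset (fun B hB => hB.1)
    have hemp := (Set.ncard_eq_zero hfin).mp (Nat.le_zero.mp hk)
    rw [hemp] at hmem
    exact hmem
  | succ k IH =>
    intro A hA hk v Y
    classical
    by_cases ha : rle A (fun x y : X => x = y)
    · refine ⟨v, fun u hu H hH => ?_⟩
      have hAH : rle A H := fun a b hab => (ha a b hab) ▸ C.rrefl hH a
      exact ⟨fun h => ⟨h, hAH⟩, fun h => h.1⟩
    by_cases hb : ∃ A1 ∈ C.S, ∃ A2 ∈ C.S, (rle A1 A ∧ ¬ rle A A1) ∧ (rle A2 A ∧ ¬ rle A A2) ∧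
        (∀ H ∈ C.S, rle A1 H → rle A2 H → rle A H)
    · obtain ⟨A1, hA1, A2, hA2, ⟨h11, h12⟩, ⟨h21, h22⟩, hjoin⟩ := hb
      have hcard : ∀ B ∈ C.S, rle B A → ¬ rle A B → ({B' | B' ∈ C.S ∧ rle B' B}).ncard ≤ k := by
        intro B hB hBA hAB
        have hss : {B' | B' ∈ C.S ∧ rle B' B} ⊂ {B' | B' ∈ C.S ∧ rle B' A} := by
          constructor
          · intro B' hB'; exact ⟨hB'.1, hB'.2.trans hBA⟩
          · intro hcon
            exact hAB (hcon ⟨hA, rle.refl A⟩).2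
        have hfin : ({B' | B' ∈ C.S ∧ rle B' A}).Finite := C.hfin.subset (fun B' hB' => hB'.1)
        have := Set.ncard_lt_ncard hss hfin
        omega
      obtain ⟨w1, hw1⟩ := IH A1 hA1 (hcard A1 hA1 h11 h12) v (insert v Y)
      obtain ⟨w, hw⟩ := IH A2 hA2 (hcard A2 hA2 h21 h22) w1 (insert w1 (insert v Y))
      refine ⟨w, fun u hu H hH => ?_⟩
      have e1 := hw u (Finset.mem_insert_of_mem (Finset.mem_insert_of_mem hu)) H hH
      have e2 := hw1 u (Finset.mem_insert_of_mem hu) H hH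
      constructor
      · intro h
        obtain ⟨huw1, h2⟩ := e1.mp h
        obtain ⟨huv, h1⟩ := e2.mp huw1
        exact ⟨huv, hjoin H hH h1 h2⟩
      · intro h
        obtain ⟨huv, hAH⟩ := h
        exact e1.mpr ⟨e2.mpr ⟨huv, h11.trans hAH⟩, h21.trans hAH⟩
    · -- join-irreducible case: use the infinite index property
      have hfamsub : {H | H ∈ C.S ∧ ∀ B ∈ C.S, rle B A → ¬ rle A B → rle B H} ⊆ C.S :=
        fun H hH => hH.1
      have hfamne : {H | H ∈ C.S ∧ ∀ B ∈ C.S, rle B A → ¬ rle A B → rle B H}.Nonempty :=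
        ⟨(fun _ _ : X => True), C.htot, fun B hB _ _ => fun a b _ => trivial⟩
      have hfamcl : ∀ a ∈ {H | H ∈ C.S ∧ ∀ B ∈ C.S, rle B A → ¬ rle A B → rle B H},
          ∀ b ∈ {H | H ∈ C.S ∧ ∀ B ∈ C.S, rle B A → ¬ rle A B → rle B H},
          (fun x y => a x y ∧ b x y) ∈
            {H | H ∈ C.S ∧ ∀ B ∈ C.S, rle B A → ¬ rle A B → rle B H} := by
        intro a ha' b hb'
        exact ⟨C.hinter a ha'.1 b hb'.1, fun B hB h1 h2 a' b' hab =>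
          ⟨ha'.2 B hB h1 h2 a' b' hab, hb'.2 B hB h1 h2 a' b' hab⟩⟩
      obtain ⟨Am, hAmM, hAmleast⟩ := C.exists_least _ hfamsub hfamne hfamcl
      have hAmS : Am ∈ C.S := hAmM.1
      have hAmA : rle Am A := hAmleast A ⟨hA, fun B _ h1 _ => h1⟩
      have hnAAm : ¬ rle A Am := by
        intro hAAm
        by_cases hT'ne : {B | B ∈ C.S ∧ rle B A ∧ ¬ rle A B}.Nonempty
        · have hT'fin : {B | B ∈ C.S ∧ rle B A ∧ ¬ rle A B}.Finite :=
            C.hfin.subset (fun B hB => hB.1)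
          have hJT : ∀ B1 ∈ {B | B ∈ C.S ∧ rle B A ∧ ¬ rle A B},
              ∀ B2 ∈ {B | B ∈ C.S ∧ rle B A ∧ ¬ rle A B},
              ∃ J ∈ {B | B ∈ C.S ∧ rle B A ∧ ¬ rle A B}, rle B1 J ∧ rle B2 J := by
            intro B1 hB1 B2 hB2
            obtain ⟨J, hJmem, hJleast⟩ := C.exists_least {H | H ∈ C.S ∧ rle B1 H ∧ rle B2 H}
              (fun H hH => hH.1)
              ⟨(fun _ _ : X => True), C.htot, fun a b _ => trivial, fun a b _ => trivial⟩
              (fun a ha' b hb' => ⟨C.hinter a ha'.1 b hb'.1,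
                fun x y h => ⟨ha'.2.1 x y h, hb'.2.1 x y h⟩,
                fun x y h => ⟨ha'.2.2 x y h, hb'.2.2 x y h⟩⟩)
            have hJA : rle J A := hJleast A ⟨hA, hB1.2.1, hB2.2.1⟩
            have hnAJ : ¬ rle A J := by
              intro hAJ
              exact hb ⟨B1, hB1.1, B2, hB2.1, ⟨hB1.2.1, hB1.2.2⟩, ⟨hB2.2.1, hB2.2.2⟩,
                fun H hH h1 h2 => hAJ.trans (hJleast H ⟨hH, h1, h2⟩)⟩
            exact ⟨J, ⟨hJmem.1, hJA, hnAJ⟩, hJmem.2.1, hJmem.2.2⟩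
          obtain ⟨Amax, hAmax, hmax⟩ :=
            Set.Finite.exists_maximalFor id _ hT'fin hT'ne
          have hub : ∀ B ∈ {B | B ∈ C.S ∧ rle B A ∧ ¬ rle A B}, rle B Amax := by
            intro B hB
            obtain ⟨J, hJ, hBJ, hAJ⟩ := hJT B hB Amax hAmax
            have heqJ : Amax = J := le_antisymm (rle.le hAJ) (hmax hJ (rle.le hAJ))
            intro x y hxy
            rw [heqJ]
            exact hBJ x y hxy
          have hAmaxM : Amax ∈ {H | H ∈ C.S ∧ ∀ B ∈ C.S, rle B A → ¬ rle A B → rle B H} :=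
            ⟨hAmax.1, fun B hB h1 h2 => hub B ⟨hB, h1, h2⟩⟩
          exact hAmax.2.2 (hAAm.trans (hAmleast Amax hAmaxM))
        · have hbotM : (fun x y : X => x = y) ∈
              {H | H ∈ C.S ∧ ∀ B ∈ C.S, rle B A → ¬ rle A B → rle B H} :=
            ⟨C.heq, fun B hB h1 h2 => absurd ⟨B, hB, h1, h2⟩ hT'ne⟩
          exact ha (hAAm.trans (hAmleast _ hbotM))
      obtain ⟨Tset, hTinf, hTA, hTpair⟩ :=
        C.hIIP A hA Am hAmS (fun x y h => hAmA x y h) hnAAm v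
      haveI := C.hfin.to_subtype
      obtain ⟨t1, ht1, t2, ht2, hne12, hcc⟩ := pigeon hTinf
        (fun t => (fun (u : {z // z ∈ Y}) (H : {R // R ∈ C.S}) => H.1 u.1 t))
      have hkey : ∀ H ∈ C.S, H t1 t2 → rle A H := by
        intro H hH h12
        have hAt : A t1 t2 := C.rtrans hA (C.rsymm hA (hTA t1 ht1)) (hTA t2 ht2)
        by_cases hAB : rle A (fun x y => H x y ∧ A x y)
        · exact fun a b hab => (hAB a b hab).1
        · have hBAm : rle (fun x y => H x y ∧ A x y) Am :=
            hAmM.2 _ (C.hinter H hH A hA) (fun a b h => h.2) hAB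
          exact absurd (hBAm t1 t2 ⟨h12, hAt⟩) (hTpair ht1 ht2 hne12)
      refine ⟨t1, fun u hu H hH => ?_⟩
      constructor
      · intro h
        have h2 : H u t2 := by
          have hc2 := congrFun (congrFun hcc ⟨u, hu⟩) ⟨H, hH⟩
          exact Eq.mp hc2 h
        have h12 : H t1 t2 := C.rtrans hH (C.rsymm hH h) h2
        have hAH := hkey H hH h12
        exact ⟨C.rtrans hH h (C.rsymm hH (hAH v t1 (hTA t1 ht1))), hAH⟩
      · intro h
        exact C.rtrans hH h.1 (h.2 v t1 (hTA t1 ht1))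

/-- convenient form of the extension lemma -/
theorem EXT (A : X → X → Prop) (hA : A ∈ C.S) (v : X) (Y : Finset X) :
    ∃ w : X, ∀ u ∈ Y, ∀ H ∈ C.S, H u w ↔ (H u v ∧ rle A H) :=
  C.ext_aux _ A hA le_rfl v Y


/-- permutability: if every member of `S` above `A` and `B` relates `x` and `y`,
then `x (A∘B) y`. -/
theorem perm {A B : X → X → Prop} (hA : A ∈ C.S) (hB : B ∈ C.S) {x y : X}
    (hxy : ∀ H ∈ C.S, rle A H → rle B H → H x y) : ∃ z, A x z ∧ B z y := by
  classical
  obtain ⟨u', hu'⟩ := C.EXT A hA x {x, y}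
  obtain ⟨u'', hu''⟩ := C.EXT B hB y {x, y, u'}
  obtain ⟨p1, hp1⟩ := C.EXT A hA x {x}
  obtain ⟨p2, hp2⟩ := C.EXT B hB p1 {x, p1}
  have hxu' : A x u' := (hu' x (by simp) A hA).mpr ⟨C.rrefl hA x, rle.refl A⟩
  have hyu'' : B y u'' := (hu'' y (by simp) B hB).mpr ⟨C.rrefl hB y, rle.refl B⟩
  have hxp1 : A x p1 := (hp1 x (by simp) A hA).mpr ⟨C.rrefl hA x, rle.refl A⟩
  have hp1p2 : B p1 p2 := (hp2 p1 (by simp) B hB).mpr ⟨C.rrefl hB p1, rle.refl B⟩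
  have hiff : ∀ H ∈ C.S, H x p2 ↔ H u' u'' := by
    intro H hH
    have e1 : H x p2 ↔ (H x p1 ∧ rle B H) := hp2 x (by simp) H hH
    have e2 : H x p1 ↔ (H x x ∧ rle A H) := hp1 x (by simp) H hH
    have e3 : H u' u'' ↔ (H u' y ∧ rle B H) := hu'' u' (by simp) H hH
    have e4 : H y u' ↔ (H y x ∧ rle A H) := hu' y (by simp) H hH
    constructor
    · intro h
      obtain ⟨h1, hBH⟩ := e1.mp h
      obtain ⟨-, hAH⟩ := e2.mp h1
      have hxy' : H x y := hxy H hH hAH hBH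
      exact e3.mpr ⟨C.rsymm hH (e4.mpr ⟨C.rsymm hH hxy', hAH⟩), hBH⟩
    · intro h
      obtain ⟨h1, hBH⟩ := e3.mp h
      obtain ⟨-, hAH⟩ := e4.mp (C.rsymm hH h1)
      exact e1.mpr ⟨e2.mpr ⟨C.rrefl hH x, hAH⟩, hBH⟩
  obtain ⟨g, hg, hgx, hgp2⟩ := C.hom_pair hiff
  refine ⟨g p1, ?_, ?_⟩
  · have h1 := (hg A hA x p1).mp hxp1
    rw [hgx] at h1
    exact C.rtrans hA hxu' h1
  · have h1 := (hg B hB p1 p2).mp hp1p2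
    rw [hgp2] at h1
    exact C.rtrans hB h1 (C.rsymm hB hyu'')


/-- the key base case: if `E ∨ G` and `F ∨ G` are both total,
then `(E ∧ F) ∨ G` is total. -/
theorem heart {E F G : X → X → Prop} (hE : E ∈ C.S) (hF : F ∈ C.S) (hG : G ∈ C.S)
    (hnE : ¬ rle E (fun a b : X => a = b)) (hnF : ¬ rle F (fun a b : X => a = b))
    (baseE : ∀ H ∈ C.S, rle E H → rle G H → ∀ a b, H a b)
    (baseF : ∀ H ∈ C.S, rle F H → rle G H → ∀ a b, H a b)
    (w : X) :
    ∀ H ∈ C.S, rle (fun a b => E a b ∧ F a b) H → rle G H → ∀ a b, H a b := by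
  classical
  obtain ⟨x1, hx1⟩ := C.EXT E hE w {w}
  obtain ⟨y1, hy1⟩ := C.EXT F hF w {w, x1}
  obtain ⟨y2, hy2⟩ := C.EXT G hG w {w, x1, y1}
  obtain ⟨y3, hy3⟩ := C.EXT (fun _ _ => True) C.htot w {w, x1, y1}
  have dwx1 : ∀ H ∈ C.S, (H w x1 ↔ rle E H) := by
    intro H hH
    rw [hx1 w (by simp) H hH]
    exact ⟨fun h => h.2, fun h => ⟨C.rrefl hH w, h⟩⟩
  have dwy1 : ∀ H ∈ C.S, (H w y1 ↔ rle F H) := by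
    intro H hH
    rw [hy1 w (by simp) H hH]
    exact ⟨fun h => h.2, fun h => ⟨C.rrefl hH w, h⟩⟩
  have dwy2 : ∀ H ∈ C.S, (H w y2 ↔ rle G H) := by
    intro H hH
    rw [hy2 w (by simp) H hH]
    exact ⟨fun h => h.2, fun h => ⟨C.rrefl hH w, h⟩⟩
  have dwy3 : ∀ H ∈ C.S, (H w y3 ↔ ∀ a b, H a b) := by
    intro H hH
    rw [hy3 w (by simp) H hH]
    exact ⟨fun h a b => h.2 a b trivial, fun h => ⟨C.rrefl hH w, fun a b _ => h a b⟩⟩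
  have dx1y1 : ∀ H ∈ C.S, (H x1 y1 ↔ (rle E H ∧ rle F H)) := by
    intro H hH
    rw [hy1 x1 (by simp) H hH]
    constructor
    · intro h; exact ⟨(dwx1 H hH).mp (C.rsymm hH h.1), h.2⟩
    · intro h; exact ⟨C.rsymm hH ((dwx1 H hH).mpr h.1), h.2⟩
  have dx1y2 : ∀ H ∈ C.S, (H x1 y2 ↔ (rle E H ∧ rle G H)) := by
    intro H hH
    rw [hy2 x1 (by simp) H hH]
    constructor
    · intro h; exact ⟨(dwx1 H hH).mp (C.rsymm hH h.1), h.2⟩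
    · intro h; exact ⟨C.rsymm hH ((dwx1 H hH).mpr h.1), h.2⟩
  have dy1y2 : ∀ H ∈ C.S, (H y1 y2 ↔ (rle F H ∧ rle G H)) := by
    intro H hH
    rw [hy2 y1 (by simp) H hH]
    constructor
    · intro h; exact ⟨(dwy1 H hH).mp (C.rsymm hH h.1), h.2⟩
    · intro h; exact ⟨C.rsymm hH ((dwy1 H hH).mpr h.1), h.2⟩
  have dx1y3 : ∀ H ∈ C.S, (H x1 y3 ↔ (rle E H ∧ ∀ a b, H a b)) := by
    intro H hH
    rw [hy3 x1 (by simp) H hH]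
    constructor
    · intro h; exact ⟨(dwx1 H hH).mp (C.rsymm hH h.1), fun a b => h.2 a b trivial⟩
    · intro h; exact ⟨C.rsymm hH ((dwx1 H hH).mpr h.1), fun a b _ => h.2 a b⟩
  have dy1y3 : ∀ H ∈ C.S, (H y1 y3 ↔ (rle F H ∧ ∀ a b, H a b)) := by
    intro H hH
    rw [hy3 y1 (by simp) H hH]
    constructor
    · intro h; exact ⟨(dwy1 H hH).mp (C.rsymm hH h.1), fun a b => h.2 a b trivial⟩
    · intro h; exact ⟨C.rsymm hH ((dwy1 H hH).mpr h.1), fun a b _ => h.2 a b⟩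
  have hx1y1 : x1 ≠ y1 := fun h => hnE ((dx1y1 _ C.heq).mp h).1
  have hx1y3 : x1 ≠ y3 := fun h => hnE ((dx1y3 _ C.heq).mp h).1
  have hy1y3 : y1 ≠ y3 := fun h => hnF ((dy1y3 _ C.heq).mp h).1
  have hx1y2 : x1 ≠ y2 := fun h => hnE ((dx1y2 _ C.heq).mp h).1
  have hy1y2 : y1 ≠ y2 := fun h => hnF ((dy1y2 _ C.heq).mp h).1
  set f : X → X := fun p => if p = y2 then y3 else p with hf
  have hfx1 : f x1 = x1 := if_neg hx1y2
  have hfy1 : f y1 = y1 := if_neg hy1y2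
  have hfy2 : f y2 = y3 := if_pos rfl
  have hsfin : ({x1, y1, y2} : Set X).Finite :=
    Set.Finite.insert _ (Set.Finite.insert _ (Set.finite_singleton _))
  have hmem3 : ∀ p ∈ ({x1, y1, y2} : Set X), p = x1 ∨ p = y1 ∨ p = y2 := by
    intro p hp; simpa using hp
  have hinj : Set.InjOn f ({x1, y1, y2} : Set X) := by
    intro p hp q hq hpq
    rcases hmem3 p hp with rfl | rfl | rfl <;> rcases hmem3 q hq with rfl | rfl | rfl
    · rfl
    · rw [hfx1, hfy1] at hpq; exact hpq
    · rw [hfx1, hfy2] at hpq; exact absurd hpq hx1y3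
    · rw [hfy1, hfx1] at hpq; exact hpq
    · rfl
    · rw [hfy1, hfy2] at hpq; exact absurd hpq hy1y3
    · rw [hfy2, hfx1] at hpq; exact absurd hpq.symm hx1y3
    · rw [hfy2, hfy1] at hpq; exact absurd hpq.symm hy1y3
    · rfl
  have hpres : ∀ H ∈ C.S, ∀ p ∈ ({x1, y1, y2} : Set X), ∀ q ∈ ({x1, y1, y2} : Set X),
      H p q ↔ H (f p) (f q) := by
    intro H hH p hp q hq
    have key1 : H x1 y2 ↔ H x1 y3 := by
      rw [dx1y2 H hH, dx1y3 H hH]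
      exact ⟨fun h => ⟨h.1, baseE H hH h.1 h.2⟩, fun h => ⟨h.1, fun a b _ => h.2 a b⟩⟩
    have key2 : H y1 y2 ↔ H y1 y3 := by
      rw [dy1y2 H hH, dy1y3 H hH]
      exact ⟨fun h => ⟨h.1, baseF H hH h.1 h.2⟩, fun h => ⟨h.1, fun a b _ => h.2 a b⟩⟩
    rcases hmem3 p hp with rfl | rfl | rfl <;> rcases hmem3 q hq with rfl | rfl | rfl
    · rw [hfx1]
    · rw [hfx1, hfy1]
    · rw [hfx1, hfy2]; exact key1
    · rw [hfy1, hfx1]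
    · rw [hfy1]
    · rw [hfy1, hfy2]; exact key2
    · rw [hfy2, hfx1]
      exact ⟨fun h => C.rsymm hH (key1.mp (C.rsymm hH h)),
        fun h => C.rsymm hH (key1.mpr (C.rsymm hH h))⟩
    · rw [hfy2, hfy1]
      exact ⟨fun h => C.rsymm hH (key2.mp (C.rsymm hH h)),
        fun h => C.rsymm hH (key2.mpr (C.rsymm hH h))⟩
    · rw [hfy2]
      exact ⟨fun _ => C.rrefl hH _, fun _ => C.rrefl hH _⟩
  obtain ⟨g, hg, hgs⟩ := C.hhom _ hsfin f hinj hpres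
  have hgx1 : g x1 = x1 := (hgs x1 (by simp)).trans hfx1
  have hgy1 : g y1 = y1 := (hgs y1 (by simp)).trans hfy1
  have hgy2 : g y2 = y3 := (hgs y2 (by simp)).trans hfy2
  have hEwx1 : E w x1 := (dwx1 E hE).mpr (rle.refl E)
  have hFwy1 : F w y1 := (dwy1 F hF).mpr (rle.refl F)
  have hGwy2 : G w y2 := (dwy2 G hG).mpr (rle.refl G)
  have hE2 : E (g w) x1 := by
    have := (hg E hE w x1).mp hEwx1; rwa [hgx1] at this
  have hF2 : F (g w) y1 := by
    have := (hg F hF w y1).mp hFwy1; rwa [hgy1] at this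
  have hG2 : G (g w) y3 := by
    have := (hg G hG w y2).mp hGwy2; rwa [hgy2] at this
  intro H hH hEF hGH a b
  have hEwg : E w (g w) := C.rtrans hE hEwx1 (C.rsymm hE hE2)
  have hFwg : F w (g w) := C.rtrans hF hFwy1 (C.rsymm hF hF2)
  have hHwg : H w (g w) := hEF w (g w) ⟨hEwg, hFwg⟩
  have hHwy3 : H w y3 := C.rtrans hH hHwg (hGH _ _ hG2)
  exact ((dwy3 H hH).mp hHwy3) a b

end Ctx

theorem main : ∀ (n : ℕ) {X : Type u} (C : Ctx X), C.S.ncard ≤ n →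
    ∀ E ∈ C.S, ∀ F ∈ C.S, ∀ G ∈ C.S, ∀ x y : X,
    (∀ H ∈ C.S, rle E H → rle G H → H x y) →
    (∀ H ∈ C.S, rle F H → rle G H → H x y) →
    ∀ H ∈ C.S, rle (fun a b => E a b ∧ F a b) H → rle G H → H x y := by
  intro n
  induction n with
  | zero =>
    intro X C hn
    exfalso
    have h2 := (Set.ncard_pos C.hfin).mpr ⟨_, C.htot⟩
    omega
  | succ n IH =>
    intro X C hn E hE F hF G hG x y hyp1 hyp2
    by_cases hnE : rle E (fun a b : X => a = b)
    · intro H hH _ hGH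
      exact hyp1 H hH (fun a b h => (hnE a b h) ▸ C.rrefl hH a) hGH
    by_cases hnF : rle F (fun a b : X => a = b)
    · intro H hH _ hGH
      exact hyp2 H hH (fun a b h => (hnF a b h) ▸ C.rrefl hH a) hGH
    have key : ∀ A ∈ C.S, ∀ B ∈ C.S,
        (∀ H ∈ C.S, rle A H → rle G H → H x y) →
        (∀ H ∈ C.S, rle B H → rle G H → H x y) →
        (¬ ∀ H ∈ C.S, rle A H → rle G H → ∀ a b, H a b) →
        ∀ H ∈ C.S, rle (fun a b => A a b ∧ B a b) H → rle G H → H x y := by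
      intro A hA B hB h1 h2 hnb
      classical
      obtain ⟨T, hTmem, hTleast⟩ := C.exists_least {H | H ∈ C.S ∧ rle A H ∧ rle G H}
        (fun H hH => hH.1)
        ⟨(fun _ _ => True), C.htot, fun a b _ => trivial, fun a b _ => trivial⟩
        (fun a ha b hb => ⟨C.hinter a ha.1 b hb.1,
          fun p q h => ⟨ha.2.1 p q h, hb.2.1 p q h⟩, fun p q h => ⟨ha.2.2 p q h, hb.2.2 p q h⟩⟩)
      obtain ⟨hTS, hAT, hGT⟩ := hTmem
      have hTxy : T x y := h1 T hTS hAT hGT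
      have hnT : ∃ a b, ¬ T a b := by
        push_neg at hnb
        obtain ⟨H0, hH0S, hH0A, hH0G, a0, b0, hnH0⟩ := hnb
        exact ⟨a0, b0, fun h => hnH0 (hTleast H0 ⟨hH0S, hH0A, hH0G⟩ a0 b0 h)⟩
      have hTrel : ∀ p q : {p : X // T x p}, T p.1 q.1 :=
        fun p q => C.rtrans hTS (C.rsymm hTS p.2) q.2
      set S' : Set ({p : X // T x p} → {p : X // T x p} → Prop) :=
        (fun H => (fun p q : {p : X // T x p} => H p.1 q.1)) '' {H | H ∈ C.S ∧ rle H T}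
        with hS'
      have hfin' : S'.Finite := (C.hfin.subset (fun H hH => hH.1)).image _
      have hequiv' : ∀ H' ∈ S', Equivalence H' := by
        intro H' hH'
        obtain ⟨H, ⟨hHS, -⟩, rfl⟩ := hH'
        exact ⟨fun p => C.rrefl hHS p.1, fun h => C.rsymm hHS h, fun h h' => C.rtrans hHS h h'⟩
      have heq' : (fun p q : {p : X // T x p} => p = q) ∈ S' := by
        refine ⟨(fun a b : X => a = b), ⟨C.heq, C.bot_rle hTS⟩, ?_⟩
        funext p q
        exact propext ⟨fun h => Subtype.ext h, fun h => by rw [h]⟩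
      have htot' : (fun _ _ : {p : X // T x p} => True) ∈ S' := by
        refine ⟨T, ⟨hTS, rle.refl T⟩, ?_⟩
        funext p q
        exact propext ⟨fun _ => trivial, fun _ => hTrel p q⟩
      have hinter' : ∀ H1' ∈ S', ∀ H2' ∈ S', (fun p q => H1' p q ∧ H2' p q) ∈ S' := by
        intro H1' h1' H2' h2'
        obtain ⟨H1, ⟨hH1S, hH1T⟩, rfl⟩ := h1'
        obtain ⟨H2, ⟨hH2S, hH2T⟩, rfl⟩ := h2'
        exact ⟨(fun a b => H1 a b ∧ H2 a b),
          ⟨C.hinter H1 hH1S H2 hH2S, fun a b h => hH1T a b h.1⟩, rfl⟩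
      have hIIP' : ∀ E1' ∈ S', ∀ F1' ∈ S', (∀ p q, F1' p q → E1' p q) →
          (¬ ∀ p q, E1' p q → F1' p q) → ∀ p : {p : X // T x p},
          ∃ Ts : Set {p : X // T x p}, Ts.Infinite ∧ (∀ q ∈ Ts, E1' p q) ∧
            Ts.Pairwise fun a b => ¬ F1' a b := by
        intro E1' hE1' F1' hF1' hsub hnsub p
        obtain ⟨E1, ⟨hE1S, hE1T⟩, rfl⟩ := hE1'
        obtain ⟨F1, ⟨hF1S, hF1T⟩, rfl⟩ := hF1'
        have hnsub2 : ¬ ∀ a b, E1 a b → (F1 a b ∧ E1 a b) := by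
          intro hcon
          apply hnsub
          intro p q h
          exact (hcon p.1 q.1 h).1
        obtain ⟨Tset, hinf, hrel, hpair⟩ := C.hIIP E1 hE1S (fun a b => F1 a b ∧ E1 a b)
          (C.hinter F1 hF1S E1 hE1S) (fun a b h => h.2) hnsub2 p.1
        have hmemT : ∀ t ∈ Tset, T x t := fun t ht =>
          C.rtrans hTS p.2 (hE1T p.1 t (hrel t ht))
        have himg : Tset ⊆ Subtype.val '' {q : {p : X // T x p} | q.1 ∈ Tset} := by
          intro t ht
          exact ⟨⟨t, hmemT t ht⟩, ht, rfl⟩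
        refine ⟨{q : {p : X // T x p} | q.1 ∈ Tset}, ?_, ?_, ?_⟩
        · intro hfin2
          exact hinf (Set.Finite.subset (hfin2.image _) himg)
        · intro q hq
          exact hrel q.1 hq
        · intro q1 hq1 q2 hq2 hne hFq
          have hvalne : q1.1 ≠ q2.1 := fun h => hne (Subtype.ext h)
          have hE12 : E1 q1.1 q2.1 :=
            C.rtrans hE1S (C.rsymm hE1S (hrel q1.1 hq1)) (hrel q2.1 hq2)
          exact hpair hq1 hq2 hvalne ⟨hFq, hE12⟩
      have hhom' : ∀ s' : Set {p : X // T x p}, s'.Finite →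
          ∀ f' : {p : X // T x p} → {p : X // T x p}, Set.InjOn f' s' →
          (∀ E' ∈ S', ∀ p ∈ s', ∀ q ∈ s', E' p q ↔ E' (f' p) (f' q)) →
          ∃ g : {p : X // T x p} ≃ {p : X // T x p},
            (∀ E' ∈ S', ∀ p q, E' p q ↔ E' (g p) (g q)) ∧ ∀ p ∈ s', g p = f' p := by
        intro s' hs' f' hinj' hpres'
        by_cases hne : s'.Nonempty
        · obtain ⟨a0, ha0⟩ := hne
          have hsfin : (Subtype.val '' s').Finite := hs'.image _
          set fup : X → X := fun a => if h : T x a then (f' ⟨a, h⟩).1 else a with hfup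
          have hfup_eq : ∀ p : {p : X // T x p}, fup p.1 = (f' p).1 := by
            intro p
            simp only [hfup]
            rw [dif_pos p.2]
          have hinj : Set.InjOn fup (Subtype.val '' s') := by
            intro p hp q hq hpq
            obtain ⟨p', hp', rfl⟩ := hp
            obtain ⟨q', hq', rfl⟩ := hq
            rw [hfup_eq p', hfup_eq q'] at hpq
            exact congrArg _ (hinj' hp' hq' (Subtype.ext hpq))
          have hpres : ∀ H ∈ C.S, ∀ a ∈ Subtype.val '' s', ∀ b ∈ Subtype.val '' s',
              H a b ↔ H (fup a) (fup b) := by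
            intro H hH a ha b hb
            obtain ⟨p', hp', rfl⟩ := ha
            obtain ⟨q', hq', rfl⟩ := hb
            rw [hfup_eq p', hfup_eq q']
            have hmem' : (fun p q : {p : X // T x p} => H p.1 q.1 ∧ T p.1 q.1) ∈ S' :=
              ⟨(fun a b => H a b ∧ T a b), ⟨C.hinter H hH T hTS, fun a b h => h.2⟩, rfl⟩
            have hiff := hpres' _ hmem' p' hp' q' hq'
            constructor
            · intro h
              exact (hiff.mp ⟨h, hTrel p' q'⟩).1
            · intro h
              exact (hiff.mpr ⟨h, hTrel (f' p') (f' q')⟩).1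
          obtain ⟨g, hg, hgs⟩ := C.hhom _ hsfin fup hinj hpres
          have hga0 : g a0.1 = (f' a0).1 := by
            rw [hgs a0.1 ⟨a0, ha0, rfl⟩]; exact hfup_eq a0
          have hgx' : ∀ p : {p : X // T x p}, T x (g p.1) := by
            intro p
            have h3 : T (g a0.1) (g p.1) := (hg T hTS _ _).mp (hTrel a0 p)
            rw [hga0] at h3
            exact C.rtrans hTS (f' a0).2 h3
          have hgsymm' : ∀ p : {p : X // T x p}, T x (g.symm p.1) := by
            intro p
            have h2 : T (g a0.1) p.1 := by
              rw [hga0]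
              exact hTrel (f' a0) p
            have h3 : T (g a0.1) (g (g.symm p.1)) := by
              rw [Equiv.apply_symm_apply]; exact h2
            have h4 : T a0.1 (g.symm p.1) := (hg T hTS _ _).mpr h3
            exact C.rtrans hTS a0.2 h4
          refine ⟨⟨fun p => ⟨g p.1, hgx' p⟩, fun p => ⟨g.symm p.1, hgsymm' p⟩, ?_, ?_⟩, ?_, ?_⟩
          · intro p; exact Subtype.ext (g.symm_apply_apply p.1)
          · intro p; exact Subtype.ext (g.apply_symm_apply p.1)
          · intro E1' hE1' p q
            obtain ⟨E1, ⟨hE1S, -⟩, rfl⟩ := hE1'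
            exact hg E1 hE1S p.1 q.1
          · intro p hp
            exact Subtype.ext (by
              show g p.1 = (f' p).1
              rw [hgs p.1 ⟨p, hp, rfl⟩]
              exact hfup_eq p)
        · refine ⟨Equiv.refl _, ?_, ?_⟩
          · intro E1' hE1' p q; exact Iff.rfl
          · intro p hp; exact absurd ⟨p, hp⟩ hne
      have hcard' : S'.ncard ≤ n := by
        have hle1 : S'.ncard ≤ {H | H ∈ C.S ∧ rle H T}.ncard :=
          Set.ncard_image_le (C.hfin.subset (fun H hH => hH.1))
        have hss : {H | H ∈ C.S ∧ rle H T} ⊂ C.S := by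
          constructor
          · exact fun H hH => hH.1
          · intro hcon
            obtain ⟨a0, b0, hnT0⟩ := hnT
            exact hnT0 ((hcon C.htot).2 a0 b0 trivial)
        have hlt := Set.ncard_lt_ncard hss C.hfin
        exact Nat.le_of_lt_succ (lt_of_le_of_lt hle1 (lt_of_lt_of_le hlt hn))
      obtain ⟨z1, hAz1, hGz1⟩ := C.perm hA hG h1
      obtain ⟨z2, hBz2, hGz2⟩ := C.perm hB hG h2
      have hTxz1 : T x z1 := hAT x z1 hAz1
      have hTxz2 : T x z2 := C.rtrans hTS hTxy (C.rsymm hTS (hGT z2 y hGz2))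
      have memA' : (fun p q : {p : X // T x p} => A p.1 q.1) ∈ S' := ⟨A, ⟨hA, hAT⟩, rfl⟩
      have memB' : (fun p q : {p : X // T x p} => B p.1 q.1 ∧ T p.1 q.1) ∈ S' :=
        ⟨(fun a b => B a b ∧ T a b), ⟨C.hinter B hB T hTS, fun a b h => h.2⟩, rfl⟩
      have memG' : (fun p q : {p : X // T x p} => G p.1 q.1) ∈ S' := ⟨G, ⟨hG, hGT⟩, rfl⟩
      have hyp1' : ∀ H' ∈ S', rle (fun p q : {p : X // T x p} => A p.1 q.1) H' →
          rle (fun p q : {p : X // T x p} => G p.1 q.1) H' →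
          H' ⟨x, C.rrefl hTS x⟩ ⟨y, hTxy⟩ := by
        intro H' hH' hA' hG'
        obtain ⟨H, ⟨hHS, hHT⟩, rfl⟩ := hH'
        have hxz : H x z1 := hA' ⟨x, C.rrefl hTS x⟩ ⟨z1, hTxz1⟩ hAz1
        have hzy : H z1 y := hG' ⟨z1, hTxz1⟩ ⟨y, hTxy⟩ hGz1
        exact C.rtrans hHS hxz hzy
      have hyp2' : ∀ H' ∈ S',
          rle (fun p q : {p : X // T x p} => B p.1 q.1 ∧ T p.1 q.1) H' →
          rle (fun p q : {p : X // T x p} => G p.1 q.1) H' →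
          H' ⟨x, C.rrefl hTS x⟩ ⟨y, hTxy⟩ := by
        intro H' hH' hB' hG'
        obtain ⟨H, ⟨hHS, hHT⟩, rfl⟩ := hH'
        have hxz : H x z2 := hB' ⟨x, C.rrefl hTS x⟩ ⟨z2, hTxz2⟩ ⟨hBz2, hTxz2⟩
        have hzy : H z2 y := hG' ⟨z2, hTxz2⟩ ⟨y, hTxy⟩ hGz2
        exact C.rtrans hHS hxz hzy
      have concl := IH ⟨S', hfin', hequiv', heq', htot', hinter', hIIP', hhom'⟩ hcard'
        _ memA' _ memB' _ memG' ⟨x, C.rrefl hTS x⟩ ⟨y, hTxy⟩ hyp1' hyp2'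
      intro H hH hABH hGH
      have memH' : (fun p q : {p : X // T x p} => H p.1 q.1 ∧ T p.1 q.1) ∈ S' :=
        ⟨(fun a b => H a b ∧ T a b), ⟨C.hinter H hH T hTS, fun a b h => h.2⟩, rfl⟩
      have hfinal := concl _ memH'
        (fun p q h => ⟨hABH p.1 q.1 ⟨h.1, h.2.1⟩, hTrel p q⟩)
        (fun p q h => ⟨hGH p.1 q.1 h, hTrel p q⟩)
      exact hfinal.1
    by_cases hbE : ∀ H ∈ C.S, rle E H → rle G H → ∀ a b, H a b
    · by_cases hbF : ∀ H ∈ C.S, rle F H → rle G H → ∀ a b, H a b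
      · intro H hH hEF hGH
        exact C.heart hE hF hG hnE hnF hbE hbF x H hH hEF hGH x y
      · intro H hH hEF hGH
        exact key F hF E hE hyp2 hyp1 hbF H hH (fun a b h => hEF a b ⟨h.2, h.1⟩) hGH
    · exact key E hE F hF hyp1 hyp2 hbE

end Stmt6


/-- for an ultrahomogeneous structure in a finite language of
equivalence relations satisfying the infinite index property, the lattice of
these equivalence relations is distributive:
`(E ∨ G) ∩ (F ∨ G) ⊆ (E ∩ F) ∨ G`, where the join of two members of `S` is the
intersection of all members of `S` containing both. -/
theorem stmt_6 {X : Type*} (S : Set (X → X → Prop)) (hfin : S.Finite)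
    (hequiv : ∀ E ∈ S, Equivalence E)
    (heq : (fun x y : X => x = y) ∈ S)
    (htot : (fun _ _ : X => True) ∈ S)
    (hinter : ∀ E ∈ S, ∀ F ∈ S, (fun x y => E x y ∧ F x y) ∈ S)
    -- infinite index property
    (hIIP : ∀ E ∈ S, ∀ F ∈ S, (∀ x y, F x y → E x y) →
      (¬ ∀ x y, E x y → F x y) →
      ∀ x : X, ∃ T : Set X, T.Infinite ∧ (∀ y ∈ T, E x y) ∧
        T.Pairwise fun a b => ¬ F a b)
    -- ultrahomogeneity
    (hhom : ∀ s : Set X, s.Finite → ∀ f : X → X,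
      Set.InjOn f s →
      (∀ E ∈ S, ∀ x ∈ s, ∀ y ∈ s, E x y ↔ E (f x) (f y)) →
      ∃ g : X ≃ X, (∀ E ∈ S, ∀ x y, E x y ↔ E (g x) (g y)) ∧
        ∀ x ∈ s, g x = f x) :
    ∀ E ∈ S, ∀ F ∈ S, ∀ G ∈ S, ∀ x y : X,
      (∀ H ∈ S, (∀ a b, E a b → H a b) → (∀ a b, G a b → H a b) → H x y) →
      (∀ H ∈ S, (∀ a b, F a b → H a b) → (∀ a b, G a b → H a b) → H x y) →
      (∀ H ∈ S, (∀ a b, E a b ∧ F a b → H a b) → (∀ a b, G a b → H a b) →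
        H x y) := by
  intro E hE F hF G hG x y h1 h2
  exact Stmt6.main S.ncard ⟨S, hfin, hequiv, heq, htot, hinter, hIIP, hhom⟩ le_rfl
    E hE F hF G hG x y h1 h2
end

section
/- Let n ≥ 1 and let M be a set equipped with n strict linear orders <₁,…,<ₙ that is ultrahomogeneous. Let E and F be equivalence relations on M, each invariant under every automorphism of M (every bijection of M onto itself preserving each <ᵢ in both directions), and suppose F is strictly contained in E. Then every E-class contains infinitely many F-classes: for every x ∈ M there are infinitely many pairwise F-inequivalent elements that are E-equivalent to x. -/
/-- `M`, equipped with the family of strict linear orders `lt i`, is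
ultrahomogeneous: every isomorphism between finite substructures extends to an
automorphism. -/
def Ultrahomog {n : ℕ} {M : Type*} (lt : Fin n → M → M → Prop) : Prop :=
  ∀ s : Set M, s.Finite → ∀ f : M → M,
    (∀ x ∈ s, ∀ y ∈ s, ∀ i, lt i x y ↔ lt i (f x) (f y)) →
    ∃ g : M ≃ M, (∀ x y i, lt i x y ↔ lt i (g x) (g y)) ∧ ∀ x ∈ s, g x = f x

/-- in an ultrahomogeneous finite-dimensional permutation
structure, if `F` is an automorphism-invariant equivalence relation strictly
contained in the automorphism-invariant equivalence relation `E`, then every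
`E`-class contains infinitely many `F`-classes. -/
theorem stmt_7 {n : ℕ} (hn : 1 ≤ n) {M : Type*} (lt : Fin n → M → M → Prop)
    (hlt : ∀ i, IsStrictTotalOrder M (lt i))
    (hhom : Ultrahomog lt)
    (E F : M → M → Prop) (hEe : Equivalence E) (hFe : Equivalence F)
    (hEinv : ∀ g : M ≃ M, (∀ x y i, lt i x y ↔ lt i (g x) (g y)) →
      ∀ x y, E x y ↔ E (g x) (g y))
    (hFinv : ∀ g : M ≃ M, (∀ x y i, lt i x y ↔ lt i (g x) (g y)) →
      ∀ x y, F x y ↔ F (g x) (g y))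
    (hFE : ∀ x y, F x y → E x y) (hne : ¬ ∀ x y, E x y → F x y) :
    ∀ x : M, ∃ T : Set M, T.Infinite ∧ (∀ y ∈ T, E x y) ∧
      T.Pairwise fun a b => ¬ F a b := by
  classical
  have irr : ∀ (i : Fin n) (u : M), ¬ lt i u u := fun i u => (hlt i).irrefl u
  have asym : ∀ (i : Fin n) (u v : M), lt i u v → ¬ lt i v u := fun i u v h1 h2 =>
    (hlt i).irrefl u ((hlt i).trans u v u h1 h2)
  set i0 : Fin n := ⟨0, hn⟩ with hi0
  obtain ⟨a0, b0, hab0E, hab0F⟩ : ∃ a b, E a b ∧ ¬ F a b := by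
    push_neg at hne; exact hne
  have hne0 : a0 ≠ b0 := fun h => hab0F (h ▸ hFe.refl a0)
  obtain ⟨a, b, habE, habF, hab0⟩ : ∃ a b, E a b ∧ ¬ F a b ∧ lt i0 a b := by
    rcases (haveI := hlt i0; trichotomous_of (r := lt i0) a0 b0) with h | h | h
    · exact ⟨a0, b0, hab0E, hab0F, h⟩
    · exact absurd h hne0
    · exact ⟨b0, a0, hEe.symm hab0E, fun hf => hab0F (hFe.symm hf), h⟩
  have hne1 : a ≠ b := fun h => habF (h ▸ hFe.refl a)
  set rel : M → M → Prop := fun x y => ∀ i, lt i x y ↔ lt i a b with hreldef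
  have rel_ne : ∀ x y, rel x y → x ≠ y := by
    intro x y h hxy
    exact irr i0 y (hxy ▸ (h i0).mpr hab0)
  have rel_flip : ∀ x y, rel x y → ∀ i, lt i y x ↔ lt i b a := by
    intro x y h i
    have hxy := rel_ne x y h
    constructor
    · intro hyx
      rcases (haveI := hlt i; trichotomous_of (r := lt i) b a) with h' | h' | h'
      · exact h'
      · exact absurd h'.symm hne1
      · exact absurd ((h i).mpr h') (asym i y x hyx)
    · intro hba
      rcases (haveI := hlt i; trichotomous_of (r := lt i) y x) with h' | h' | h'
      · exact h'
      · exact absurd h'.symm hxy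
      · exact absurd hba (asym i a b ((h i).mp h'))
  have rel_trans : ∀ x y z, rel x y → rel y z → rel x z := by
    intro x y z h1 h2 i
    constructor
    · intro hxz
      by_contra hab
      have hba : lt i b a := by
        rcases (haveI := hlt i; trichotomous_of (r := lt i) a b) with h' | h' | h'
        · exact absurd h' hab
        · exact absurd h' hne1
        · exact h'
      have hyx : lt i y x := (rel_flip x y h1 i).mpr hba
      have hzy : lt i z y := (rel_flip y z h2 i).mpr hba
      exact asym i x z hxz ((hlt i).trans z y x hzy hyx)
    · intro hab
      exact (hlt i).trans x y z ((h1 i).mpr hab) ((h2 i).mpr hab)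
  have rel_EF : ∀ x y, rel x y → E x y ∧ ¬ F x y := by
    intro x y h
    have hxy := rel_ne x y h
    set f : M → M := fun z => if z = x then a else b with hf
    have hfx : f x = a := if_pos rfl
    have hfy : f y = b := if_neg (Ne.symm hxy)
    have hside : ∀ u ∈ ({x, y} : Set M), ∀ v ∈ ({x, y} : Set M), ∀ i,
        lt i u v ↔ lt i (f u) (f v) := by
      intro u hu v hv i
      simp only [Set.mem_insert_iff, Set.mem_singleton_iff] at hu hv
      rcases hu with rfl | rfl <;> rcases hv with rfl | rfl
      · rw [hfx]; exact iff_of_false (irr i _) (irr i a)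
      · rw [hfx, hfy]; exact h i
      · rw [hfy, hfx]; exact rel_flip _ _ h i
      · rw [hfy]; exact iff_of_false (irr i _) (irr i b)
    obtain ⟨g, hg, hgs⟩ := hhom {x, y} ((Set.finite_singleton y).insert x) f hside
    have hgx : g x = a := by rw [hgs x (by simp), hfx]
    have hgy : g y = b := by rw [hgs y (by simp), hfy]
    refine ⟨(hEinv g hg x y).mpr ?_, fun hF => habF ?_⟩
    · rw [hgx, hgy]; exact habE
    · have := (hFinv g hg x y).mp hF; rwa [hgx, hgy] at this
  -- an automorphism sending a to b
  have hside2 : ∀ u ∈ ({a} : Set M), ∀ v ∈ ({a} : Set M), ∀ i,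
      lt i u v ↔ lt i b b := by
    intro u hu v hv i
    simp only [Set.mem_singleton_iff] at hu hv
    subst hu; subst hv
    exact iff_of_false (irr i _) (irr i b)
  obtain ⟨h0, hh0, hh0s⟩ := hhom {a} (Set.finite_singleton a) (fun _ => b) hside2
  have hh0a : h0 a = b := hh0s a rfl
  have rel_h0 : ∀ u v, rel u v → rel (h0 u) (h0 v) := fun u v h i =>
    (hh0 u v i).symm.trans (h i)
  set xs : ℕ → M := fun k => h0^[k] a with hxs
  have hstep : ∀ k, rel (xs k) (xs (k + 1)) := by
    intro k
    induction k with
    | zero =>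
      show rel (h0^[0] a) (h0^[1] a)
      simp only [Function.iterate_zero_apply, Function.iterate_one, hh0a]
      intro i; exact Iff.rfl
    | succ k ih =>
      have := rel_h0 _ _ ih
      simpa only [hxs, Function.iterate_succ_apply'] using this
  have hchain : ∀ j k, j < k → rel (xs j) (xs k) := by
    intro j k hjk
    induction k with
    | zero => omega
    | succ k ih =>
      rcases Nat.lt_succ_iff_lt_or_eq.mp hjk with h | rfl
      · exact rel_trans _ _ _ (ih h) (hstep k)
      · exact hstep j
  have hxs0 : xs 0 = a := rfl
  have hEaxs : ∀ k, E a (xs k) := by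
    intro k
    rcases Nat.eq_zero_or_pos k with rfl | hk
    · exact hEe.refl a
    · exact (rel_EF _ _ (hchain 0 k hk)).1
  have hxsinj : Function.Injective xs := by
    intro j k h
    by_contra hjk
    rcases lt_or_gt_of_ne hjk with h' | h'
    · exact rel_ne _ _ (hchain j k h') h
    · exact rel_ne _ _ (hchain k j h') h.symm
  intro x
  have hside3 : ∀ u ∈ ({x} : Set M), ∀ v ∈ ({x} : Set M), ∀ i,
      lt i u v ↔ lt i a a := by
    intro u hu v hv i
    simp only [Set.mem_singleton_iff] at hu hv
    subst hu; subst hv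
    exact iff_of_false (irr i _) (irr i a)
  obtain ⟨g0, hg0, hg0s⟩ := hhom {x} (Set.finite_singleton x) (fun _ => a) hside3
  have hg0x : g0 x = a := hg0s x rfl
  refine ⟨Set.range (fun k => g0.symm (xs k)), ?_, ?_, ?_⟩
  · exact Set.infinite_range_of_injective (g0.symm.injective.comp hxsinj)
  · rintro y ⟨k, rfl⟩
    have := (hEinv g0 hg0 x (g0.symm (xs k))).mpr
    apply this
    rw [hg0x, Equiv.apply_symm_apply]
    exact hEaxs k
  · rintro y ⟨j, rfl⟩ z ⟨k, rfl⟩ hyz hF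
    have hjk : j ≠ k := by rintro rfl; exact hyz rfl
    have hF' : F (xs j) (xs k) := by
      have := (hFinv g0 hg0 _ _).mp hF
      rwa [Equiv.apply_symm_apply, Equiv.apply_symm_apply] at this
    rcases lt_or_gt_of_ne hjk with h' | h'
    · exact (rel_EF _ _ (hchain j k h')).2 hF'
    · exact (rel_EF _ _ (hchain k j h')).2 (hFe.symm hF')
end

section
/- Let n ≥ 1, let X be a set, let < be a strict linear order on X, and let E₁ ⊆ E₂ ⊆ … ⊆ E_{2ⁿ−1} be a chain of equivalence relations on X, each of which is <-convex: if x < y < z and Eᵢ x z, then Eᵢ x y and Eᵢ y z. Then there exist strict linear orders <₁,…,<ₙ on X such that: (i) for all x, y, x', y' with x < y and x' < y', if Eᵢ x y ↔ Eᵢ x' y' for every i ∈ {1,…,2ⁿ−1}, then x <ⱼ y ↔ x' <ⱼ y' for every j ∈ {1,…,n}; and (ii) for all x, y, x', y' with x < y and x' < y', if x <ⱼ y ↔ x' <ⱼ y' for every j ∈ {1,…,n}, then Eᵢ x y ↔ Eᵢ x' y' for every i ∈ {1,…,2ⁿ−1}. -/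
open Finset in
lemma upclosed_mem_iff {N : ℕ} (S : Finset (Fin N))
    (hS : ∀ i j : Fin N, i ≤ j → i ∈ S → j ∈ S) (i : Fin N) :
    i ∈ S ↔ N - S.card ≤ i.val := by
  constructor
  · intro hi
    have hsub : Finset.Ici i ⊆ S := fun j hj => hS i j (Finset.mem_Ici.mp hj) hi
    have := Finset.card_le_card hsub
    rw [Fin.card_Ici] at this
    omega
  · intro h
    by_contra hi
    have hsub : S ⊆ Finset.Ioi i := by
      intro j hj
      rcases le_or_gt j i with hji | hij
      · exact absurd (hS j i hji hj) hi
      · exact Finset.mem_Ioi.mpr hij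
    have := Finset.card_le_card hsub
    rw [Fin.card_Ioi] at this
    have := i.isLt
    omega

/-- a chain of `2^n - 1` convex equivalence relations with
respect to a linear order `<` can be encoded by `n` additional linear orders:
each new order is quantifier-free definable from the chain and `<` (i), and
each relation of the chain is quantifier-free definable from `<` and the new
orders (ii). -/
theorem stmt_8 {n : ℕ} (hn : 1 ≤ n) {X : Type*} (lt : X → X → Prop)
    (hlt : IsStrictTotalOrder X lt)
    (E : Fin (2 ^ n - 1) → X → X → Prop)
    (hEe : ∀ i, Equivalence (E i))
    (hchain : ∀ i j : Fin (2 ^ n - 1), i ≤ j → ∀ x y, E i x y → E j x y)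
    (hconv : ∀ i x y z, lt x y → lt y z → E i x z → E i x y ∧ E i y z) :
    ∃ lt' : Fin n → X → X → Prop,
      (∀ j, IsStrictTotalOrder X (lt' j)) ∧
      -- (i) the new orders are determined on `<`-increasing pairs
      -- by the pattern of the `E i`
      (∀ x y x' y', lt x y → lt x' y' →
        (∀ i, E i x y ↔ E i x' y') → ∀ j, (lt' j x y ↔ lt' j x' y')) ∧
      -- (ii) the `E i` are determined on `<`-increasing pairs
      -- by the pattern of the new orders
      (∀ x y x' y', lt x y → lt x' y' →
        (∀ j, lt' j x y ↔ lt' j x' y') → ∀ i, (E i x y ↔ E i x' y')) := by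
  classical
  set S : X → X → Finset (Fin (2 ^ n - 1)) :=
    fun x y => Finset.univ.filter (fun i => E i x y) with hS
  set m : X → X → ℕ := fun x y => (S x y).card with hm
  have hup : ∀ x y, ∀ i j : Fin (2 ^ n - 1), i ≤ j → i ∈ S x y → j ∈ S x y := by
    intro x y i j hij hi
    simp only [hS, Finset.mem_filter, Finset.mem_univ, true_and] at hi ⊢
    exact hchain i j hij x y hi
  have hmem : ∀ (i : Fin (2 ^ n - 1)) x y, E i x y ↔ (2 ^ n - 1) - m x y ≤ i.val := by
    intro i x y
    have := upclosed_mem_iff (S x y) (hup x y) i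
    simpa [hS, hm] using this
  have hmle : ∀ x y, m x y ≤ 2 ^ n - 1 := by
    intro x y
    have : (S x y).card ≤ (Finset.univ : Finset (Fin (2 ^ n - 1))).card :=
      Finset.card_le_card (Finset.subset_univ _)
    simpa [hm] using this
  -- asymmetry of lt
  have hasymm : ∀ x y, lt x y → ¬ lt y x := by
    intro x y h h'
    exact hlt.irrefl x (hlt.trans _ _ _ h h')
  -- the ultrametric / min property
  have hmin : ∀ x y z, lt x y → lt y z → m x z = m x y ∨ m x z = m y z := by
    intro x y z hxy hyz
    have hinter : S x z = S x y ∩ S y z := by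
      ext i
      simp only [hS, Finset.mem_filter, Finset.mem_univ, true_and, Finset.mem_inter]
      constructor
      · intro h; exact hconv i x y z hxy hyz h
      · rintro ⟨h1, h2⟩; exact (hEe i).trans h1 h2
    have htot : S x y ⊆ S y z ∨ S y z ⊆ S x y := by
      by_contra h
      push_neg at h
      obtain ⟨i, hi1, hi2⟩ := Finset.not_subset.mp h.1
      obtain ⟨j, hj1, hj2⟩ := Finset.not_subset.mp h.2
      rcases le_total i j with hij | hji
      · exact hj2 (hup x y i j hij hi1)
      · exact hi2 (hup y z j i hji hj1)
    rcases htot with h | h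
    · exact Or.inl (congrArg Finset.card (by rw [hinter, Finset.inter_eq_left.mpr h]))
    · exact Or.inr (congrArg Finset.card (by rw [hinter, Finset.inter_eq_right.mpr h]))
  -- the new orders
  set lt' : Fin n → X → X → Prop := fun j x y =>
    (lt x y ∧ Nat.testBit (m x y) j.val = true) ∨
    (lt y x ∧ ¬ Nat.testBit (m y x) j.val = true) with hlt'
  have fwd : ∀ (j : Fin n) x y, lt x y → (lt' j x y ↔ Nat.testBit (m x y) j.val = true) := by
    intro j x y h
    simp only [hlt']
    constructor
    · rintro (⟨_, hb⟩ | ⟨h', _⟩)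
      · exact hb
      · exact absurd h' (hasymm x y h)
    · intro hb; exact Or.inl ⟨h, hb⟩
  have bwd : ∀ (j : Fin n) x y, lt x y → (lt' j y x ↔ ¬ Nat.testBit (m x y) j.val = true) := by
    intro j x y h
    simp only [hlt']
    constructor
    · rintro (⟨h', _⟩ | ⟨_, hb⟩)
      · exact absurd h' (hasymm x y h)
      · exact hb
    · intro hb; exact Or.inr ⟨h, hb⟩
  have hirr' : ∀ (j : Fin n) x, ¬ lt' j x x := by
    rintro j x (⟨h, _⟩ | ⟨h, _⟩) <;> exact hlt.irrefl x h
  have hasym' : ∀ (j : Fin n) x y, lt' j x y → ¬ lt' j y x := by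
    rintro j x y (⟨h1, h2⟩ | ⟨h1, h2⟩) (⟨h3, h4⟩ | ⟨h3, h4⟩) <;>
      first
        | exact hasymm x y h1 h3
        | exact hasymm y x h1 h3
        | exact h4 h2
        | exact h2 h4
  -- no directed 3-cycles
  have hcyc : ∀ (j : Fin n) x y z, lt' j x y → lt' j y z → lt' j z x → False := by
    intro j x y z hxy hyz hzx
    have hne_xy : x ≠ y := by rintro rfl; exact hirr' j x hxy
    have hne_yz : y ≠ z := by rintro rfl; exact hirr' j y hyz
    have hne_zx : z ≠ x := by rintro rfl; exact hirr' j z hzx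
    rcases (haveI := hlt; trichotomous_of lt) x y with h1 | h1 | h1
    · rcases (haveI := hlt; trichotomous_of lt) y z with h2 | h2 | h2
      · -- x < y < z
        have h3 : lt x z := hlt.trans _ _ _ h1 h2
        rw [fwd j x y h1] at hxy
        rw [fwd j y z h2] at hyz
        rw [bwd j x z h3] at hzx
        rcases hmin x y z h1 h2 with h | h <;> rw [h] at hzx <;> exact hzx ‹_›
      · exact absurd h2 hne_yz
      · rcases (haveI := hlt; trichotomous_of lt) x z with h3 | h3 | h3
        · -- x < z < y
          rw [fwd j x y h1] at hxy
          rw [bwd j z y h2] at hyz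
          rw [bwd j x z h3] at hzx
          rcases hmin x z y h3 h2 with h | h <;> rw [h] at hxy
          · exact hzx hxy
          · exact hyz hxy
        · exact absurd h3 (Ne.symm hne_zx)
        · -- z < x < y
          rw [fwd j x y h1] at hxy
          rw [bwd j z y h2] at hyz
          rw [fwd j z x h3] at hzx
          rcases hmin z x y h3 h1 with h | h <;> rw [h] at hyz
          · exact hyz hzx
          · exact hyz hxy
    · exact absurd h1 hne_xy
    · rcases (haveI := hlt; trichotomous_of lt) y z with h2 | h2 | h2
      · rcases (haveI := hlt; trichotomous_of lt) x z with h3 | h3 | h3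
        · -- y < x < z
          rw [bwd j y x h1] at hxy
          rw [fwd j y z h2] at hyz
          rw [bwd j x z h3] at hzx
          rcases hmin y x z h1 h3 with h | h <;> rw [h] at hyz
          · exact hxy hyz
          · exact hzx hyz
        · exact absurd h3 (Ne.symm hne_zx)
        · -- y < z < x
          rw [bwd j y x h1] at hxy
          rw [fwd j y z h2] at hyz
          rw [fwd j z x h3] at hzx
          rcases hmin y z x h2 h3 with h | h <;> rw [h] at hxy
          · exact hxy hyz
          · exact hxy hzx
      · exact absurd h2 hne_yz
      · -- z < y < x
        have h3 : lt z x := hlt.trans _ _ _ h2 h1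
        rw [bwd j y x h1] at hxy
        rw [bwd j z y h2] at hyz
        rw [fwd j z x h3] at hzx
        rcases hmin z y x h2 h1 with h | h <;> rw [h] at hzx
        · exact hyz hzx
        · exact hxy hzx
  have htot' : ∀ (j : Fin n) x y, x ≠ y → lt' j x y ∨ lt' j y x := by
    intro j x y hne
    rcases (haveI := hlt; trichotomous_of lt) x y with h | h | h
    · by_cases hb : Nat.testBit (m x y) j.val = true
      · exact Or.inl ((fwd j x y h).mpr hb)
      · exact Or.inr ((bwd j x y h).mpr hb)
    · exact absurd h hne
    · by_cases hb : Nat.testBit (m y x) j.val = true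
      · exact Or.inr ((fwd j y x h).mpr hb)
      · exact Or.inl ((bwd j y x h).mpr hb)
  refine ⟨lt', fun j => ?_, ?_, ?_⟩
  · refine { trichotomous := ?_, irrefl := hirr' j, trans := ?_ }
    · intro x y hxy hyx
      by_contra h
      rcases htot' j x y h with h' | h'
      · exact hxy h'
      · exact hyx h'
    · intro x y z hxy hyz
      have hne : x ≠ z := by
        rintro rfl; exact hasym' j x y hxy hyz
      rcases htot' j x z hne with h | h
      · exact h
      · exact absurd h (fun h => hcyc j x y z hxy hyz h)
  · -- (i)
    intro x y x' y' hxy hxy' hE j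
    have hSm : m x y = m x' y' := by
      have : S x y = S x' y' := by
        ext i
        simp only [hS, Finset.mem_filter, Finset.mem_univ, true_and]
        exact hE i
      exact congrArg Finset.card this
    rw [fwd j x y hxy, fwd j x' y' hxy', hSm]
  · -- (ii)
    intro x y x' y' hxy hxy' hlt'' i
    have hmeq : m x y = m x' y' := by
      apply Nat.eq_of_testBit_eq
      intro k
      by_cases hk : k < n
      · have := hlt'' ⟨k, hk⟩
        rw [fwd ⟨k, hk⟩ x y hxy, fwd ⟨k, hk⟩ x' y' hxy'] at this
        simp only at this
        rcases Bool.eq_false_or_eq_true (Nat.testBit (m x y) k) with h | h <;>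
          rcases Bool.eq_false_or_eq_true (Nat.testBit (m x' y') k) with h' | h' <;>
          simp [h, h'] at this ⊢
      · have h1 : m x y < 2 ^ k := by
          have : (2:ℕ) ^ n ≤ 2 ^ k := Nat.pow_le_pow_right (by norm_num) (le_of_not_gt hk)
          have := hmle x y
          have h0 : 0 < 2 ^ n := Nat.pow_pos (by norm_num)
          omega
        have h2 : m x' y' < 2 ^ k := by
          have : (2:ℕ) ^ n ≤ 2 ^ k := Nat.pow_le_pow_right (by norm_num) (le_of_not_gt hk)
          have := hmle x' y'
          have h0 : 0 < 2 ^ n := Nat.pow_pos (by norm_num)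
          omega
        rw [Nat.testBit_eq_false_of_lt h1, Nat.testBit_eq_false_of_lt h2]
    rw [hmem i x y, hmem i x' y', hmeq]
end

section
/- Let X be a finite set of size N equipped with k ≥ 1 strict linear orders <₁,…,<_k, let ℓ = ⌊N/2⌋, and suppose N!/(N−ℓ)! > 2^ℓ · k. Then there exists a family P of ℓ pairwise disjoint 2-element subsets of X such that for every i ∈ {1,…,k} there is a pair {a,a'} ∈ P and an element b ∈ X with a <ᵢ b <ᵢ a' or a' <ᵢ b <ᵢ a. -/
namespace Stmt11Aux

lemma descFactorial_add' (n a b : ℕ) :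
    n.descFactorial (a + b) = n.descFactorial a * (n - a).descFactorial b := by
  induction b with
  | zero => simp
  | succ b ih =>
    rw [show a + (b + 1) = (a + b) + 1 from rfl, Nat.descFactorial_succ, ih,
      Nat.descFactorial_succ, Nat.sub_sub]
    ring

variable {N ℓ : ℕ}

def Adj (f : (Fin ℓ × Bool) ↪ Fin N) : Prop :=
  ∀ j : Fin ℓ, (f (j, true)).val + 1 = (f (j, false)).val ∨
    (f (j, false)).val + 1 = (f (j, true)).val

def gOf (f : (Fin ℓ × Bool) ↪ Fin N) (j : Fin ℓ) : ℕ :=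
  min (f (j, true)).val (f (j, false)).val

def bitOf (f : (Fin ℓ × Bool) ↪ Fin N) (j : Fin ℓ) : Bool :=
  decide ((f (j, true)).val < (f (j, false)).val)

def hOf (f : (Fin ℓ × Bool) ↪ Fin N) (jb : Fin ℓ × Bool) : ℕ :=
  gOf f jb.1 + (if jb.2 then 1 else 0)

def cOf (f : (Fin ℓ × Bool) ↪ Fin N) (j : Fin ℓ) : ℕ :=
  (Finset.univ.filter fun j' => gOf f j' < gOf f j).card

def vOf (f : (Fin ℓ × Bool) ↪ Fin N) (j : Fin ℓ) : ℕ :=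
  gOf f j - cOf f j

variable {f : (Fin ℓ × Bool) ↪ Fin N}

lemma val_eq (hf : Adj f) (j : Fin ℓ) (b : Bool) :
    (f (j, b)).val = gOf f j + (if bitOf f j = b then 0 else 1) := by
  rcases hf j with h | h <;> cases b <;>
    simp only [gOf, bitOf, decide_eq_true_eq, decide_eq_false_iff_not, Nat.min_def] <;>
    split_ifs <;> omega

lemma hOf_eq_val (hf : Adj f) (jb : Fin ℓ × Bool) :
    hOf f jb = (f (jb.1, xor jb.2 (bitOf f jb.1))).val := by
  obtain ⟨j, b⟩ := jb
  rw [val_eq hf]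
  cases b <;> cases hbit : bitOf f j <;> simp [hOf, hbit]

lemma hOf_inj (hf : Adj f) : Function.Injective (hOf f) := by
  intro a a' h
  rw [hOf_eq_val hf, hOf_eq_val hf] at h
  have h2 := f.injective (Fin.val_injective h)
  obtain ⟨j, b⟩ := a; obtain ⟨j', b'⟩ := a'
  simp only [Prod.mk.injEq] at h2
  obtain ⟨rfl, h3⟩ := h2
  cases b <;> cases b' <;> simp_all

lemma hOf_lt (hf : Adj f) (jb : Fin ℓ × Bool) : hOf f jb < N := by
  rw [hOf_eq_val hf]; exact (f _).isLt

lemma g_inj (hf : Adj f) : Function.Injective (gOf f) := by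
  intro j j' h
  have := hOf_inj hf (a₁ := (j, false)) (a₂ := (j', false)) (by simp [hOf, h])
  exact (Prod.mk.injEq _ _ _ _).mp this |>.1


lemma two_mul_card (hf : Adj f) (S : Finset (Fin ℓ)) (lo hi : ℕ)
    (hS : ∀ j ∈ S, lo ≤ gOf f j ∧ gOf f j + 1 ≤ hi) :
    S.card * 2 ≤ hi + 1 - lo := by
  have key := Finset.card_le_card_of_injOn (s := S ×ˢ (Finset.univ : Finset Bool))
    (t := Finset.Icc lo hi) (hOf f) ?_ ((hOf_inj hf).injOn)
  · simpa [Finset.card_product] using key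
  · rintro ⟨j, b⟩ hmem
    rw [Finset.mem_coe, Finset.mem_product] at hmem
    have := hS j hmem.1
    rw [Finset.mem_coe, Finset.mem_Icc]
    cases b <;> simp [hOf] <;> omega

lemma c_le_g (hf : Adj f) (j : Fin ℓ) : cOf f j ≤ gOf f j := by
  have key := Finset.card_le_card_of_injOn (s := Finset.univ.filter fun j' => gOf f j' < gOf f j)
    (t := Finset.range (gOf f j)) (gOf f) ?_ ((g_inj hf).injOn)
  · simpa [cOf] using key
  · intro j' hj'
    rw [Finset.mem_coe, Finset.mem_filter] at hj'
    simpa using hj'.2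

lemma g_lt_N (hf : Adj f) (j : Fin ℓ) : gOf f j + 1 < N := by
  have := hOf_lt hf (j, true)
  simpa [hOf] using this

lemma g_ne_succ (hf : Adj f) {j j' : Fin ℓ} : gOf f j + 1 ≠ gOf f j' := by
  intro h
  have : hOf f (j, true) = hOf f (j', false) := by simpa [hOf] using h
  simpa using hOf_inj hf this

lemma v_strictmono (hf : Adj f) {j j' : Fin ℓ} (hlt : gOf f j < gOf f j') :
    vOf f j < vOf f j' := by
  classical
  set S : Finset (Fin ℓ) :=
    Finset.univ.filter (fun j'' => gOf f j ≤ gOf f j'' ∧ gOf f j'' < gOf f j') with hSdef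
  have hsplit : (Finset.univ.filter fun j'' => gOf f j'' < gOf f j') =
      (Finset.univ.filter fun j'' => gOf f j'' < gOf f j) ∪ S := by
    ext x
    simp only [hSdef, Finset.mem_union, Finset.mem_filter, Finset.mem_univ, true_and]
    omega
  have hdisj : Disjoint (Finset.univ.filter fun j'' => gOf f j'' < gOf f j) S := by
    rw [Finset.disjoint_left]
    intro x hx hx'
    simp only [hSdef, Finset.mem_filter, Finset.mem_univ, true_and] at hx hx'
    omega
  have hc : cOf f j' = cOf f j + S.card := by
    rw [cOf, hsplit, Finset.card_union_of_disjoint hdisj]; rfl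
  have hb : S.card * 2 ≤ gOf f j' + 1 - gOf f j := by
    apply two_mul_card hf
    intro x hx
    simp only [hSdef, Finset.mem_filter, Finset.mem_univ, true_and] at hx
    omega
  have hd : gOf f j + 1 ≠ gOf f j' := g_ne_succ hf
  have hcg := c_le_g hf j
  have hcg' := c_le_g hf j'
  simp only [vOf]
  omega

lemma v_lt (hf : Adj f) (j : Fin ℓ) : vOf f j < N - ℓ := by
  classical
  set T : Finset (Fin ℓ) := Finset.univ.filter (fun j'' => gOf f j ≤ gOf f j'') with hTdef
  have hT : T.card + cOf f j = ℓ := by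
    rw [cOf, hTdef]
    have := Finset.card_filter_add_card_filter_not
      (s := (Finset.univ : Finset (Fin ℓ))) (p := fun j'' => gOf f j'' < gOf f j)
    rw [Finset.card_univ, Fintype.card_fin] at this
    have h2 : (Finset.univ.filter fun j'' => gOf f j ≤ gOf f j'') =
        (Finset.univ.filter fun a => ¬ gOf f a < gOf f j) := by
      ext x; simp only [Finset.mem_filter, Finset.mem_univ, true_and]; omega
    rw [h2]; omega
  have hjT : j ∈ T := by simp [hTdef]
  have hTpos : 1 ≤ T.card := Finset.card_pos.mpr ⟨j, hjT⟩
  have hb : T.card * 2 ≤ (N - 1) + 1 - gOf f j := by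
    apply two_mul_card hf
    intro x hx
    simp only [hTdef, Finset.mem_filter, Finset.mem_univ, true_and] at hx
    have := g_lt_N hf x
    omega
  have hgN := g_lt_N hf j
  have hcg := c_le_g hf j
  simp only [vOf]
  omega

lemma v_lt_iff (hf : Adj f) {j j' : Fin ℓ} :
    vOf f j' < vOf f j ↔ gOf f j' < gOf f j := by
  constructor
  · intro h
    rcases lt_trichotomy (gOf f j') (gOf f j) with h1 | h1 | h1
    · exact h1
    · exact absurd (congrArg (vOf f) (g_inj hf h1)) (by omega)
    · exact absurd (v_strictmono hf h1) (by omega)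
  · exact v_strictmono hf

lemma v_inj (hf : Adj f) : Function.Injective (vOf f) := by
  intro j j' h
  rcases lt_trichotomy (gOf f j) (gOf f j') with h1 | h1 | h1
  · exact absurd (v_strictmono hf h1) (by omega)
  · exact g_inj hf h1
  · exact absurd (v_strictmono hf h1) (by omega)

lemma g_eq (hf : Adj f) (j : Fin ℓ) :
    gOf f j = vOf f j + (Finset.univ.filter fun j' => vOf f j' < vOf f j).card := by
  classical
  have : (Finset.univ.filter fun j' => vOf f j' < vOf f j) =
      (Finset.univ.filter fun j' => gOf f j' < gOf f j) := by
    ext x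
    simp only [Finset.mem_filter, Finset.mem_univ, true_and]
    exact v_lt_iff hf
  rw [this]
  have hcg := c_le_g hf j
  simp only [vOf]
  rw [cOf] at *
  omega


noncomputable def enc (f : {f : (Fin ℓ × Bool) ↪ Fin N // Adj f}) :
    (Fin ℓ → Bool) × (Fin ℓ ↪ Fin (N - ℓ)) :=
  (bitOf f.1, ⟨fun j => ⟨vOf f.1 j, v_lt f.2 j⟩,
    fun j j' h => v_inj f.2 (congrArg Fin.val h)⟩)

lemma enc_inj : Function.Injective (enc (N := N) (ℓ := ℓ)) := by
  rintro ⟨f, hf⟩ ⟨f', hf'⟩ heq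
  simp only [enc, Prod.mk.injEq] at heq
  obtain ⟨hbit, hv⟩ := heq
  have hv' : ∀ j, vOf f j = vOf f' j := by
    intro j
    have := congrArg (fun (e : Fin ℓ ↪ Fin (N - ℓ)) => (e j).val) hv
    exact this
  have hg : ∀ j, gOf f j = gOf f' j := by
    intro j
    rw [g_eq hf j, g_eq hf' j]
    simp only [hv']
  apply Subtype.ext
  apply DFunLike.ext
  rintro ⟨j, b⟩
  apply Fin.val_injective
  rw [val_eq hf, val_eq hf', hg, hbit]

lemma adjCardLe (N ℓ : ℕ) :
    Nat.card {f : (Fin ℓ × Bool) ↪ Fin N // Adj f} ≤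
      2 ^ ℓ * (N - ℓ).descFactorial ℓ := by
  classical
  calc Nat.card {f : (Fin ℓ × Bool) ↪ Fin N // Adj f}
      ≤ Nat.card ((Fin ℓ → Bool) × (Fin ℓ ↪ Fin (N - ℓ))) :=
        Nat.card_le_card_of_injective _ enc_inj
    _ = 2 ^ ℓ * (N - ℓ).descFactorial ℓ := by
        rw [Nat.card_eq_fintype_card, Fintype.card_prod, Fintype.card_embedding_eq]
        simp


lemma exists_orderEquiv {X : Type*} [Fintype X] {N : ℕ} (hcard : Fintype.card X = N)
    (r : X → X → Prop) (hr : IsStrictTotalOrder X r) :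
    ∃ e : X ≃ Fin N, ∀ a b, r a b ↔ (e a : Fin N) < e b := by
  classical
  letI : LinearOrder X := linearOrderOfSTO r
  refine ⟨(monoEquivOfFin X hcard).symm.toEquiv, fun a b => ?_⟩
  have : r a b ↔ a < b := Iff.rfl
  rw [this]
  exact ((monoEquivOfFin X hcard).symm.lt_iff_lt).symm

lemma between_fin {N : ℕ} (x y : Fin N) (hxy : x ≠ y)
    (h : ¬ ∃ m : Fin N, (x < m ∧ m < y) ∨ (y < m ∧ m < x)) :
    x.val + 1 = y.val ∨ y.val + 1 = x.val := by
  push_neg at h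
  by_contra hc
  push_neg at hc
  have hne : x.val ≠ y.val := fun hv => hxy (Fin.val_injective hv)
  rcases Nat.lt_or_ge x.val y.val with h1 | h1
  · have hm : x.val + 1 < N := by omega
    have := h ⟨x.val + 1, hm⟩
    simp only [Fin.lt_def, Fin.le_def] at this
    omega
  · have h1' : y.val < x.val := by omega
    have hm : y.val + 1 < N := by omega
    have := h ⟨y.val + 1, hm⟩
    simp only [Fin.lt_def, Fin.le_def] at this
    omega

end Stmt11Aux

open Stmt11Aux


/-- existence of a separated pairing. If `|X| = N`,
`ℓ = ⌊N/2⌋`, and `N!/(N-ℓ)! > 2^ℓ · k`, then there is a family of `ℓ`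
pairwise disjoint (ordered representations of) 2-element subsets of `X` such
that for every order `<ᵢ` some pair has an element strictly `<ᵢ`-between its
two points. -/
theorem stmt_11 {k N : ℕ} (hk : 1 ≤ k) {X : Type*} [Fintype X]
    (hcard : Fintype.card X = N)
    (lt : Fin k → X → X → Prop) (hlt : ∀ i, IsStrictTotalOrder X (lt i))
    (hineq : 2 ^ (N / 2) * k < N.descFactorial (N / 2)) :
    ∃ p : Fin (N / 2) → X × X,
      -- the 2·ℓ points of the pairs are pairwise distinct, i.e. the pairs are
      -- 2-element sets and pairwise disjoint
      Function.Injective (fun jb : Fin (N / 2) × Bool =>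
        if jb.2 then (p jb.1).1 else (p jb.1).2) ∧
      -- separation: for each order some pair is non-adjacent
      (∀ i : Fin k, ∃ (j : Fin (N / 2)) (b : X),
        (lt i (p j).1 b ∧ lt i b (p j).2) ∨
        (lt i (p j).2 b ∧ lt i b (p j).1)) := by
    classical
  set ℓ := N / 2 with hldef
  choose e he using fun i => exists_orderEquiv hcard (lt i) (hlt i)
  let Bad : Fin k → ((Fin ℓ × Bool) ↪ X) → Prop := fun i f =>
    ∀ j : Fin ℓ, ¬ ∃ b, (lt i (f (j, true)) b ∧ lt i b (f (j, false))) ∨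
      (lt i (f (j, false)) b ∧ lt i b (f (j, true)))
  -- card bound for each Bad i
  have hbadcard : ∀ i, (Finset.univ.filter (fun f => Bad i f)).card ≤
      2 ^ ℓ * (N - ℓ).descFactorial ℓ := by
    intro i
    rw [← Fintype.card_subtype]
    have hmap : ∀ fp : {f : (Fin ℓ × Bool) ↪ X // Bad i f},
        Adj (fp.1.trans (e i).toEmbedding) := by
      rintro ⟨f, hf⟩ j
      apply between_fin
      · intro hcontra
        simp only [Function.Embedding.trans_apply, Equiv.coe_toEmbedding,
          EmbeddingLike.apply_eq_iff_eq] at hcontra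
        simp at hcontra
      · rintro ⟨m, hm⟩
        refine hf j ⟨(e i).symm m, ?_⟩
        rcases hm with ⟨h1, h2⟩ | ⟨h1, h2⟩
        · left
          constructor
          · rw [he i]; simpa using h1
          · rw [he i]; simpa using h2
        · right
          constructor
          · rw [he i]; simpa using h1
          · rw [he i]; simpa using h2
    have hinj : Function.Injective
        (fun fp : {f : (Fin ℓ × Bool) ↪ X // Bad i f} =>
          (⟨fp.1.trans (e i).toEmbedding, hmap fp⟩ :
            {f : (Fin ℓ × Bool) ↪ Fin N // Adj f})) := by
      rintro ⟨f, hf⟩ ⟨f', hf'⟩ heq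
      simp only [Subtype.mk.injEq] at heq
      apply Subtype.ext
      apply DFunLike.ext
      intro jb
      have := DFunLike.congr_fun heq jb
      simp only [Function.Embedding.trans_apply, Equiv.coe_toEmbedding,
        EmbeddingLike.apply_eq_iff_eq] at this
      exact this
    calc Fintype.card {f : (Fin ℓ × Bool) ↪ X // Bad i f}
        = Nat.card {f : (Fin ℓ × Bool) ↪ X // Bad i f} :=
          (Nat.card_eq_fintype_card).symm
      _ ≤ Nat.card {f : (Fin ℓ × Bool) ↪ Fin N // Adj f} :=
          Nat.card_le_card_of_injective _ hinj
      _ ≤ 2 ^ ℓ * (N - ℓ).descFactorial ℓ := adjCardLe N ℓ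
  -- total count
  have hll : ℓ ≤ N - ℓ := by omega
  have hD : 0 < (N - ℓ).descFactorial ℓ := by
    rcases Nat.eq_zero_or_pos ((N - ℓ).descFactorial ℓ) with h0 | h0
    · rw [Nat.descFactorial_eq_zero_iff_lt] at h0; omega
    · exact h0
  have hcardE : Fintype.card ((Fin ℓ × Bool) ↪ X) =
      N.descFactorial ℓ * (N - ℓ).descFactorial ℓ := by
    rw [Fintype.card_embedding_eq, hcard]
    have : Fintype.card (Fin ℓ × Bool) = ℓ + ℓ := by
      simp [Fintype.card_prod]; ring
    rw [this, descFactorial_add']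
  -- pigeonhole
  set BadS : Finset ((Fin ℓ × Bool) ↪ X) :=
    Finset.univ.filter (fun f => ∃ i, Bad i f) with hBadS
  have h1 : BadS.card < Fintype.card ((Fin ℓ × Bool) ↪ X) := by
    have hsub : BadS ⊆ Finset.univ.biUnion
        (fun i => Finset.univ.filter (fun f => Bad i f)) := by
      intro f hf
      simp only [hBadS, Finset.mem_filter, Finset.mem_univ, true_and] at hf
      obtain ⟨i, hi⟩ := hf
      simp only [Finset.mem_biUnion, Finset.mem_filter, Finset.mem_univ, true_and]
      exact ⟨i, hi⟩
    calc BadS.card ≤ ∑ i : Fin k, (Finset.univ.filter (fun f => Bad i f)).card :=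
          le_trans (Finset.card_le_card hsub) Finset.card_biUnion_le
      _ ≤ ∑ _i : Fin k, 2 ^ ℓ * (N - ℓ).descFactorial ℓ :=
          Finset.sum_le_sum (fun i _ => hbadcard i)
      _ = (2 ^ ℓ * k) * (N - ℓ).descFactorial ℓ := by
          rw [Finset.sum_const, Finset.card_univ, Fintype.card_fin]; ring
      _ < N.descFactorial ℓ * (N - ℓ).descFactorial ℓ :=
          (Nat.mul_lt_mul_right hD).mpr hineq
      _ = Fintype.card ((Fin ℓ × Bool) ↪ X) := hcardE.symm
  obtain ⟨f, hfgood⟩ : ∃ f : (Fin ℓ × Bool) ↪ X, f ∉ BadS := by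
    by_contra hcon
    push_neg at hcon
    have : BadS = Finset.univ := Finset.eq_univ_iff_forall.mpr hcon
    rw [this, Finset.card_univ] at h1
    exact lt_irrefl _ h1
  have hfgood' : ∀ i, ¬ Bad i f := by
    intro i hi
    apply hfgood
    simp only [hBadS, Finset.mem_filter, Finset.mem_univ, true_and]
    exact ⟨i, hi⟩
  refine ⟨fun j => (f (j, true), f (j, false)), ?_, ?_⟩
  · have hfun : (fun jb : Fin ℓ × Bool =>
        if jb.2 then ((fun j => (f (j, true), f (j, false))) jb.1).1
        else ((fun j => (f (j, true), f (j, false))) jb.1).2) = fun jb => f jb := by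
      funext jb
      obtain ⟨j, b⟩ := jb
      cases b <;> rfl
    rw [hfun]
    exact f.injective
  · intro i
    have := hfgood' i
    simp only [Bad, not_forall, not_not] at this
    obtain ⟨j, b, hb⟩ := this
    exact ⟨j, b, hb⟩
end

section
/- Let n ≥ 1, let X be a set equipped with n strict linear orders <₁,…,<ₙ, and let p, q, r ∈ Bool^n. Suppose a₁, x₁, x₂, x₃, a₂ ∈ X satisfy: pattern(a₁,x₁) = p, pattern(a₁,x₂) = p, pattern(a₁,x₃) = q, pattern(x₁,x₂) = q, pattern(x₂,x₃) = q, pattern(x₁,a₂) = q, pattern(x₂,a₂) = r, and pattern(x₃,a₂) = r. Then for every i ∈ {1,…,n}, a₁ <ᵢ a₂ holds if and only if at least two of p(i), q(i), r(i) are true. -/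
/-- The pattern (2-type) of an ordered pair of distinct points in a set with
`n` strict linear orders. -/
def Pattern {n : ℕ} {M : Type*} (lt : Fin n → M → M → Prop) (x y : M)
    (v : Fin n → Bool) : Prop :=
  x ≠ y ∧ ∀ i, lt i x y ↔ v i = true

/-- the `(p,q,r)`-majority diagram has a unique solution, given
coordinatewise by majority vote among `p`, `q`, `r`. -/
theorem stmt_12 {n : ℕ} (hn : 1 ≤ n) {X : Type*} (lt : Fin n → X → X → Prop)
    (hlt : ∀ i, IsStrictTotalOrder X (lt i))
    (p q r : Fin n → Bool) (a₁ x₁ x₂ x₃ a₂ : X)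
    (h1 : Pattern lt a₁ x₁ p) (h2 : Pattern lt a₁ x₂ p)
    (h3 : Pattern lt a₁ x₃ q) (h4 : Pattern lt x₁ x₂ q)
    (h5 : Pattern lt x₂ x₃ q) (h6 : Pattern lt x₁ a₂ q)
    (h7 : Pattern lt x₂ a₂ r) (h8 : Pattern lt x₃ a₂ r) :
    ∀ i, lt i a₁ a₂ ↔
      ((p i = true ∧ q i = true) ∨ (p i = true ∧ r i = true) ∨
        (q i = true ∧ r i = true)) := by
  intro i
  have tri := (hlt i).trichotomous
  have tr : ∀ {x y z : X}, lt i x y → lt i y z → lt i x z := fun hxy hyz =>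
    (hlt i).trans _ _ _ hxy hyz
  have irr := (hlt i).irrefl
  have fwd : ∀ {x y : X} {v : Fin n → Bool}, Pattern lt x y v → v i = true →
      lt i x y := fun h hv => h.2 i |>.mpr hv
  have flip : ∀ {x y : X} {v : Fin n → Bool}, Pattern lt x y v → v i = false →
      lt i y x := by
    intro x y v h hv
    rcases (show lt i x y ∨ x = y ∨ lt i y x from (em (lt i x y)).elim Or.inl fun a => (em (lt i y x)).elim (fun b => Or.inr (Or.inr b)) fun b => Or.inr (Or.inl (tri x y a b))) with h' | h' | h'
    · rw [h.2 i, hv] at h'; exact absurd h' (by simp)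
    · exact absurd h' h.1
    · exact h'
  have asym : ∀ {x y : X}, lt i x y → ¬ lt i y x := fun hxy hyx =>
    irr _ (tr hxy hyx)
  rcases hp : p i with _ | _ <;> rcases hq : q i with _ | _ <;>
    rcases hr : r i with _ | _ <;> simp
  · exact asym (tr (flip h6 hq) (flip h1 hp))
  · exact asym (tr (flip h6 hq) (flip h1 hp))
  · exact asym (tr (flip h7 hr) (flip h2 hp))
  · exact tr (fwd h3 hq) (fwd h8 hr)
  · exact asym (tr (flip h8 hr) (flip h3 hq))
  · exact tr (fwd h2 hp) (fwd h7 hr)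
  · exact tr (fwd h1 hp) (fwd h6 hq)
  · exact tr (fwd h1 hp) (fwd h6 hq)
end

section
/- Let n ≥ 1 and let M be a set equipped with n strict linear orders <₁,…,<ₙ that is ultrahomogeneous and such that every finite set equipped with n strict linear orders embeds into M. Let R be a strict linear order on M that is invariant under every automorphism of M: R(x,y) ↔ R(σ x, σ y) for every bijection σ of M preserving each <ᵢ in both directions. Then there exists i ∈ {1,…,n} such that either R(x,y) ↔ x <ᵢ y for all x, y, or R(x,y) ↔ y <ᵢ x for all x, y. -/
private def pat3 (r0 r1 r2 : ℕ) : Fin 3 → ℕ := fun a => if a = 0 then r0 else if a = 1 then r1 else r2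

private def rk3 (ub vb wb : Bool) : Fin 3 → ℕ :=
  if ub then (if vb then pat3 0 1 2 else if wb then pat3 0 2 1 else pat3 1 2 0)
  else (if vb then (if wb then pat3 1 0 2 else pat3 2 0 1) else pat3 2 1 0)

private lemma rk3_inj : ∀ ub vb wb : Bool, Function.Injective (rk3 ub vb wb) := by decide

private lemma rk3_01 : ∀ ub vb wb : Bool, (rk3 ub vb wb 0 < rk3 ub vb wb 1 ↔ ub = true) := by
  decide

private lemma rk3_12 : ∀ ub vb wb : Bool, (rk3 ub vb wb 1 < rk3 ub vb wb 2 ↔ vb = true) := by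
  decide

private lemma rk3_02 : ∀ ub vb wb : Bool, (wb = ub ∨ wb = vb) →
    (rk3 ub vb wb 0 < rk3 ub vb wb 2 ↔ wb = true) := by decide

/-- every automorphism-invariant strict linear order on the
generic `n`-dimensional permutation structure equals one of the `n` orders or
its reversal. -/
theorem stmt_14 {n : ℕ} (hn : 1 ≤ n) {M : Type*} (lt : Fin n → M → M → Prop)
    (hlt : ∀ i, IsStrictTotalOrder M (lt i))
    (hhom : Ultrahomog lt)
    -- genericity: every finite n-dimensional permutation structure embeds
    (hgen : ∀ (A : Type) [Fintype A],
      ∀ la : Fin n → A → A → Prop, (∀ i, IsStrictTotalOrder A (la i)) →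
        ∃ f : A → M, ∀ x y i, la i x y ↔ lt i (f x) (f y))
    (R : M → M → Prop) (hR : IsStrictTotalOrder M R)
    (hRinv : ∀ g : M ≃ M, (∀ x y i, lt i x y ↔ lt i (g x) (g y)) →
      ∀ x y, R x y ↔ R (g x) (g y)) :
    ∃ i, (∀ x y, R x y ↔ lt i x y) ∨ (∀ x y, R x y ↔ lt i y x) := by
  classical
  haveI := hR
  have i0 : Fin n := ⟨0, hn⟩
  -- flipping lemmas
  have flip : ∀ (i : Fin n) (x y : M), x ≠ y → (lt i y x ↔ ¬ lt i x y) := by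
    intro i x y hxy
    haveI := hlt i
    constructor
    · intro h1 h2; exact irrefl_of (lt i) x (trans_of (lt i) h2 h1)
    · intro h2
      rcases trichotomous_of (lt i) x y with h | h | h
      · exact absurd h h2
      · exact absurd h hxy
      · exact h
  have flipR : ∀ (x y : M), x ≠ y → (R y x ↔ ¬ R x y) := by
    intro x y hxy
    constructor
    · intro h1 h2; exact irrefl_of R x (trans_of R h2 h1)
    · intro h2
      rcases trichotomous_of R x y with h | h | h
      · exact absurd h h2
      · exact absurd h hxy
      · exact h
  -- Step A: R depends only on the sign pattern of a pair
  have stepA : ∀ (x y x' y' : M), x ≠ y → x' ≠ y' →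
      (∀ i, lt i x y ↔ lt i x' y') → (R x y ↔ R x' y') := by
    intro x y x' y' hxy hxy' hsig
    set f : M → M := fun z => if z = x then x' else if z = y then y' else z with hf
    have hfx : f x = x' := by simp [hf]
    have hfy : f y = y' := by simp [hf, Ne.symm hxy]
    have hpres : ∀ a ∈ ({x, y} : Set M), ∀ b ∈ ({x, y} : Set M), ∀ i,
        lt i a b ↔ lt i (f a) (f b) := by
      intro a ha b hb i
      haveI := hlt i
      simp only [Set.mem_insert_iff, Set.mem_singleton_iff] at ha hb
      rcases ha with ha | ha <;> rcases hb with hb | hb <;> rw [ha, hb]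
      · rw [hfx]
        exact ⟨fun h => absurd h (irrefl_of (lt i) _), fun h => absurd h (irrefl_of (lt i) _)⟩
      · rw [hfx, hfy]; exact hsig i
      · rw [hfx, hfy, flip i x y hxy, flip i x' y' hxy']
        exact not_congr (hsig i)
      · rw [hfy]
        exact ⟨fun h => absurd h (irrefl_of (lt i) _), fun h => absurd h (irrefl_of (lt i) _)⟩
    obtain ⟨g, hg, hgs⟩ := hhom {x, y} ((Set.finite_singleton y).insert x) f hpres
    have hmx : x ∈ ({x, y} : Set M) := Set.mem_insert _ _
    have hmy : y ∈ ({x, y} : Set M) := Set.mem_insert_iff.mpr (Or.inr rfl)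
    have h := hRinv g hg x y
    rw [hgs x hmx, hgs y hmy, hfx, hfy] at h
    exact h
  -- Step C: realize any consistent triple of sign patterns
  have stepC : ∀ u v w : Fin n → Bool, (∀ i, w i = u i ∨ w i = v i) →
      ∃ x y z : M, x ≠ y ∧ y ≠ z ∧ x ≠ z ∧
        (∀ i, lt i x y ↔ u i = true) ∧ (∀ i, lt i y z ↔ v i = true) ∧
        (∀ i, lt i x z ↔ w i = true) := by
    intro u v w hw
    set la : Fin n → Fin 3 → Fin 3 → Prop :=
      fun i a b => rk3 (u i) (v i) (w i) a < rk3 (u i) (v i) (w i) b with hla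
    have hsto : ∀ i, IsStrictTotalOrder (Fin 3) (la i) := by
      intro i
      refine { trichotomous := ?_, irrefl := ?_, trans := ?_ }
      · intro a b
        rcases Nat.lt_trichotomy (rk3 (u i) (v i) (w i) a) (rk3 (u i) (v i) (w i) b) with h | h | h
        · exact fun h1 _ => absurd h h1
        · exact fun _ _ => rk3_inj _ _ _ h
        · exact fun _ h2 => absurd h h2
      · intro a; exact Nat.lt_irrefl _
      · intro a b c h1 h2; exact Nat.lt_trans h1 h2
    obtain ⟨f, hfe⟩ := hgen (Fin 3) la hsto
    have hfi : ∀ a b : Fin 3, a ≠ b → f a ≠ f b := by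
      intro a b hab hfab
      have hrk : rk3 (u i0) (v i0) (w i0) a ≠ rk3 (u i0) (v i0) (w i0) b :=
        fun h => hab (rk3_inj _ _ _ h)
      rcases Nat.lt_or_ge (rk3 (u i0) (v i0) (w i0) a) (rk3 (u i0) (v i0) (w i0) b) with h | h
      · have h2 := (hfe a b i0).mp h
        rw [hfab] at h2
        exact (hlt i0).irrefl _ h2
      · have h' : la i0 b a := lt_of_le_of_ne h (Ne.symm hrk)
        have := (hfe b a i0).mp h'
        rw [hfab] at this
        exact (hlt i0).irrefl _ this
    refine ⟨f 0, f 1, f 2, hfi 0 1 (by decide), hfi 1 2 (by decide), hfi 0 2 (by decide),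
      ?_, ?_, ?_⟩
    · intro i; rw [← hfe 0 1 i]; exact rk3_01 (u i) (v i) (w i)
    · intro i; rw [← hfe 1 2 i]; exact rk3_12 (u i) (v i) (w i)
    · intro i; rw [← hfe 0 2 i]; exact rk3_02 (u i) (v i) (w i) (hw i)
  -- realize pairs
  have pairEx : ∀ s : Fin n → Bool, ∃ x y : M, x ≠ y ∧ ∀ i, lt i x y ↔ s i = true := by
    intro s
    obtain ⟨x, y, z, hxy, _, _, hu, _, _⟩ := stepC s s s (fun i => Or.inl rfl)
    exact ⟨x, y, hxy, hu⟩
  choose xs ys hne hsig using pairEx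
  set F : (Fin n → Bool) → Prop := fun s => R (xs s) (ys s) with hF
  have hFiff : ∀ (s : Fin n → Bool) (x y : M), x ≠ y →
      (∀ i, lt i x y ↔ s i = true) → (R x y ↔ F s) := by
    intro s x y hxy hs
    exact stepA x y (xs s) (ys s) hxy (hne s) (fun i => (hs i).trans (hsig s i).symm)
  have hFneg : ∀ s, F s ↔ ¬ F (fun i => ! s i) := by
    intro s
    have h1 : ∀ i, lt i (ys s) (xs s) ↔ (! s i) = true := by
      intro i
      rw [flip i (xs s) (ys s) (hne s), hsig s i]
      cases s i <;> simp
    have h2 := (hFiff (fun i => !s i) (ys s) (xs s) (hne s).symm h1).symm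
    rw [flipR (xs s) (ys s) (hne s)] at h2
    simp only [hF]
    tauto
  have hFcl : ∀ u v w : Fin n → Bool, (∀ i, w i = u i ∨ w i = v i) → F u → F v → F w := by
    intro u v w hw hu hv
    obtain ⟨x, y, z, hxy, hyz, hxz, su, sv, sw⟩ := stepC u v w hw
    have hrxy : R x y := (hFiff u x y hxy su).mpr hu
    have hryz : R y z := (hFiff v y z hyz sv).mpr hv
    exact (hFiff w x z hxz sw).mp (trans_of R hrxy hryz)
  by_cases hcase : ∃ i : Fin n, ∀ u v : Fin n → Bool, F u → F v → u i = v i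
  · obtain ⟨i, hi⟩ := hcase
    obtain ⟨s0, hs0⟩ : ∃ s, F s := by
      by_cases h : F (fun _ => true)
      · exact ⟨_, h⟩
      · exact ⟨fun _ => false, (hFneg (fun _ => false)).mpr h⟩
    have hkey : ∀ s, F s ↔ s i = s0 i := by
      intro s
      constructor
      · intro hFs; exact hi s s0 hFs hs0
      · intro hsi
        by_contra hFs
        have h2 : F (fun j => ! s j) := by
          have := hFneg s; tauto
        have h3 : (!(s i)) = s0 i := hi _ s0 h2 hs0
        exact Bool.not_ne_self (s i) (h3.trans hsi.symm)
    refine ⟨i, ?_⟩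
    cases h0 : s0 i with
    | true =>
      refine Or.inl ?_
      intro x y
      rcases eq_or_ne x y with rfl | hxy
      · exact ⟨fun h => absurd h (irrefl_of R x), fun h => absurd h ((hlt i).irrefl x)⟩
      · set s : Fin n → Bool := fun j => if lt j x y then true else false with hsdef
        have hreal : ∀ j, lt j x y ↔ s j = true := by
          intro j; by_cases h : lt j x y <;> simp [hsdef, h]
        rw [hFiff s x y hxy hreal, hkey s, h0]
        exact (hreal i).symm
    | false =>
      refine Or.inr ?_
      intro x y
      rcases eq_or_ne x y with rfl | hxy
      · exact ⟨fun h => absurd h (irrefl_of R x), fun h => absurd h ((hlt i).irrefl x)⟩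
      · set s : Fin n → Bool := fun j => if lt j x y then true else false with hsdef
        have hreal : ∀ j, lt j x y ↔ s j = true := by
          intro j; by_cases h : lt j x y <;> simp [hsdef, h]
        rw [hFiff s x y hxy hreal, hkey s, h0, flip i x y hxy, hreal i]
        cases s i <;> simp
  · exfalso
    push_neg at hcase
    have hval : ∀ (i : Fin n) (b : Bool), ∃ u, F u ∧ u i = b := by
      intro i b
      obtain ⟨u, v, hu, hv, huv⟩ := hcase i
      by_cases h : u i = b
      · exact ⟨u, hu, h⟩
      · have hbool : ∀ p q r : Bool, p ≠ q → p ≠ r → q = r := by decide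
        exact ⟨v, hv, hbool (u i) (v i) b huv h⟩
    have build : ∀ k, k ≤ n → ∀ s : Fin n → Bool,
        ∃ t, F t ∧ ∀ j : Fin n, j.val < k → t j = s j := by
      intro k
      induction k with
      | zero =>
        intro _ s
        obtain ⟨u, hu, _⟩ := hval i0 true
        exact ⟨u, hu, fun j hj => absurd hj (Nat.not_lt_zero _)⟩
      | succ k ih =>
        intro hk s
        obtain ⟨t, ht, htj⟩ := ih (Nat.le_of_succ_le hk) s
        have hkn : k < n := hk
        obtain ⟨u, hu, hui⟩ := hval ⟨k, hkn⟩ (s ⟨k, hkn⟩)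
        refine ⟨fun j => if j.val = k then u j else t j, ?_, ?_⟩
        · refine hFcl t u _ (fun j => ?_) ht hu
          by_cases h : j.val = k <;> simp [h]
        · intro j hj
          by_cases h : j.val = k
          · have hje : j = ⟨k, hkn⟩ := Fin.ext h
            simp only [h, if_true]
            rw [hje, hui]
          · have hjk : j.val < k := lt_of_le_of_ne (Nat.lt_succ_iff.mp hj) h
            simp only [h, if_false]
            exact htj j hjk
    obtain ⟨t, ht, htj⟩ := build n le_rfl (fun _ => true)
    have ht' : t = fun _ => true := funext fun j => htj j j.isLt
    obtain ⟨t2, ht2, htj2⟩ := build n le_rfl (fun _ => false)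
    have ht2' : t2 = fun _ => false := funext fun j => htj2 j j.isLt
    exact (hFneg (fun _ => true)).mp (ht' ▸ ht) (ht2' ▸ ht2)
end

section
/- Let K be a class of finite 3-dimensional permutation structures closed under isomorphism and under substructure and having the amalgamation property. Let p, q ∈ Bool³ be distinct vectors differing in exactly two coordinates. Suppose p and q are each realized in K (some member of K contains a pair of distinct points with that pattern), and suppose the configuration 'p ⇒ q' is forbidden: no member of K contains points z, u, v with pattern(z,u) = p, pattern(z,v) = p, and pattern(u,v) = q. Then the configuration 'q ⇒ p' is realized: some member of K contains points z, u, v with pattern(z,u) = q, pattern(z,v) = q, and pattern(u,v) = p. -/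
/-- A finite `n`-dimensional permutation structure. -/
structure FinPermStruct (n : ℕ) where
  carrier : Type
  fin : Fintype carrier
  lt : Fin n → carrier → carrier → Prop
  strict : ∀ i, IsStrictTotalOrder carrier (lt i)

/-- An embedding of finite `n`-dimensional permutation structures. -/
def IsEmb {n : ℕ} (A B : FinPermStruct n) (f : A.carrier → B.carrier) : Prop :=
  Function.Injective f ∧ ∀ x y i, A.lt i x y ↔ B.lt i (f x) (f y)

/-- A 2-type `v` is realized in the class `K`. -/
def Realized {n : ℕ} (K : FinPermStruct n → Prop) (v : Fin n → Bool) : Prop :=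
  ∃ B, K B ∧ ∃ x y : B.carrier, Pattern B.lt x y v

/-- The one-point permutation structure. -/
def OnePt : FinPermStruct 3 where
  carrier := PUnit
  fin := inferInstance
  lt _ _ _ := False
  strict _ :=
    { trichotomous := fun a b _ _ => Subsingleton.elim a b
      irrefl := fun _ h => h
      trans := fun _ _ _ h _ => h.elim }

/-- Embeddings preserve patterns. -/
lemma emb_pattern {n : ℕ} {A B : FinPermStruct n} {f : A.carrier → B.carrier}
    (h : IsEmb A B f) {x y : A.carrier} {v : Fin n → Bool}
    (hxy : Pattern A.lt x y v) : Pattern B.lt (f x) (f y) v :=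
  ⟨fun he => hxy.1 (h.1 he), fun i => ((h.2 x y i).symm.trans (hxy.2 i))⟩

/-- in a hereditary, isomorphism-closed amalgamation class of
finite 3-dimensional permutation structures, if `p` and `q` are realized
2-types at Hamming distance 2 and the configuration `p ⇒ q` is forbidden, then
the configuration `q ⇒ p` is realized. -/
theorem stmt_15 (K : FinPermStruct 3 → Prop)
    (hiso : ∀ A B, K A →
      (∃ f : B.carrier → A.carrier, Function.Bijective f ∧ IsEmb B A f) → K B)
    (hsub : ∀ A B, K B → (∃ f, IsEmb A B f) → K A)
    (hap : ∀ (A B₁ B₂ : FinPermStruct 3) (f₁ : A.carrier → B₁.carrier)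
      (f₂ : A.carrier → B₂.carrier),
      K A → K B₁ → K B₂ → IsEmb A B₁ f₁ → IsEmb A B₂ f₂ →
      ∃ (C : FinPermStruct 3) (g₁ : B₁.carrier → C.carrier)
        (g₂ : B₂.carrier → C.carrier),
        K C ∧ IsEmb B₁ C g₁ ∧ IsEmb B₂ C g₂ ∧ ∀ a, g₁ (f₁ a) = g₂ (f₂ a))
    (p q : Fin 3 → Bool)
    (hpq : (Finset.univ.filter fun i => p i ≠ q i).card = 2)
    (hp : Realized K p) (hq : Realized K q)
    (hforb : ¬ ∃ B, K B ∧ ∃ z u v : B.carrier,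
      Pattern B.lt z u p ∧ Pattern B.lt z v p ∧ Pattern B.lt u v q) :
    ∃ B, K B ∧ ∃ z u v : B.carrier,
      Pattern B.lt z u q ∧ Pattern B.lt z v q ∧ Pattern B.lt u v p := by
  classical
  obtain ⟨Bp, hBp, x0, y0, hP⟩ := hp
  obtain ⟨Bq, hBq, x1, y1, hQ⟩ := hq
  -- embeddings of the one-point structure at the sinks
  have hembq : IsEmb OnePt Bq (fun _ => y1) := by
    refine ⟨fun a b _ => Subsingleton.elim (α := PUnit) a b, fun x y i => ?_⟩
    haveI := Bq.strict i
    exact ⟨False.elim, fun h => absurd h (irrefl_of (Bq.lt i) y1)⟩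
  have hembp : IsEmb OnePt Bp (fun _ => y0) := by
    refine ⟨fun a b _ => Subsingleton.elim (α := PUnit) a b, fun x y i => ?_⟩
    haveI := Bp.strict i
    exact ⟨False.elim, fun h => absurd h (irrefl_of (Bp.lt i) y0)⟩
  have hKone : K OnePt := hsub OnePt Bq hBq ⟨fun _ => y1, hembq⟩
  obtain ⟨C, g₁, g₂, hC, hg₁, hg₂, hcomm⟩ :=
    hap OnePt Bq Bp (fun _ => y1) (fun _ => y0) hKone hBq hBp hembq hembp
  set b := g₁ x1 with hb_def
  set y := g₁ y1 with hy_def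
  set c := g₂ x0 with hc_def
  have hy : y = g₂ y0 := hcomm PUnit.unit
  have hbyq : Pattern C.lt b y q := emb_pattern hg₁ hQ
  have hcyp : Pattern C.lt c y p := by
    rw [hy]; exact emb_pattern hg₂ hP
  -- there is a coordinate where p and q differ
  have hex : ∃ i, p i ≠ q i := by
    have hpos : 0 < (Finset.univ.filter fun i => p i ≠ q i).card := by
      rw [hpq]; norm_num
    obtain ⟨i, hi⟩ := Finset.card_pos.mp hpos
    exact ⟨i, (Finset.mem_filter.mp hi).2⟩
  have hbc : b ≠ c := by
    intro he
    obtain ⟨i, hi⟩ := hex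
    have h1 := hbyq.2 i
    have h2 := hcyp.2 i
    rw [he] at h1
    apply hi
    cases hpi : p i with
    | true => exact (h1.mp (h2.mpr hpi)).symm
    | false =>
      cases hqi : q i with
      | false => rfl
      | true => exact absurd (h2.mp (h1.mpr hqi)) (by rw [hpi]; simp)
  set s : Fin 3 → Bool := fun i => decide (C.lt i b c) with hs_def
  have hs : ∀ i, C.lt i b c ↔ s i = true := fun i =>
    ⟨fun h => decide_eq_true h, fun h => of_decide_eq_true h⟩
  -- at coordinates where p and q differ, pattern(b,c) agrees with q
  have key : ∀ i, p i ≠ q i → s i = q i := by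
    intro i hi
    haveI := C.strict i
    have h1 := hbyq.2 i
    have h2 := hcyp.2 i
    cases hqi : q i with
    | true =>
      have hby : C.lt i b y := h1.mpr (by rw [hqi])
      have hpi : p i = false := by
        cases h' : p i with
        | false => rfl
        | true => exact absurd (h'.trans hqi.symm) hi
      have hyc : C.lt i y c := by
        rcases trichotomous_of (C.lt i) y c with h | h | h
        · exact h
        · exact absurd h.symm hcyp.1
        · exact absurd (h2.mp h) (by rw [hpi]; simp)
      have hlt : C.lt i b c := trans_of (C.lt i) hby hyc
      exact decide_eq_true hlt
    | false =>
      have hpi : p i = true := by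
        cases h' : p i with
        | true => rfl
        | false => exact absurd (h'.trans hqi.symm) hi
      have hcy : C.lt i c y := h2.mpr hpi
      have hyb : C.lt i y b := by
        rcases trichotomous_of (C.lt i) y b with h | h | h
        · exact h
        · exact absurd h.symm hbyq.1
        · exact absurd (h1.mp h) (by rw [hqi]; simp)
      have hcb : C.lt i c b := trans_of (C.lt i) hcy hyb
      have hnbc : ¬ C.lt i b c := fun h =>
        irrefl_of (C.lt i) b (trans_of (C.lt i) h hcb)
      exact decide_eq_false hnbc
  by_cases hsq : s = q
  · refine ⟨C, hC, b, c, y, ⟨hbc, ?_⟩, hbyq, hcyp⟩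
    intro i
    rw [← hsq]
    exact hs i
  · exfalso
    have hex0 : ∃ i, s i ≠ q i := by
      by_contra h
      push_neg at h
      exact hsq (funext h)
    obtain ⟨i0, hi0⟩ := hex0
    have hpq0 : p i0 = q i0 := by
      by_contra h
      exact hi0 (key i0 h)
    -- the agreement set is a singleton
    have hagree : ∀ j, p j = q j → j = i0 := by
      intro j hj
      have hcard : (Finset.univ.filter fun i => ¬ p i ≠ q i).card = 1 := by
        have htot := Finset.card_filter_add_card_filter_not
          (s := (Finset.univ : Finset (Fin 3))) (p := fun i => p i ≠ q i)
        rw [hpq] at htot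
        simp only [Finset.card_univ, Fintype.card_fin] at htot
        omega
      obtain ⟨k, hk⟩ := Finset.card_eq_one.mp hcard
      have hj' : j ∈ Finset.univ.filter fun i => ¬ p i ≠ q i := by
        simp [hj]
      have hi0' : i0 ∈ Finset.univ.filter fun i => ¬ p i ≠ q i := by
        simp [hpq0]
      rw [hk, Finset.mem_singleton] at hj' hi0'
      rw [hj', hi0']
    have hsp : ∀ i, s i = !(p i) := by
      intro i
      by_cases hdi : p i = q i
      · have hii : i = i0 := hagree i hdi
        subst hii
        rw [hdi]
        cases hs' : s i with
        | false =>
          cases hq' : q i with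
          | false => exact absurd (hs'.trans hq'.symm) hi0
          | true => rfl
        | true =>
          cases hq' : q i with
          | false => rfl
          | true => exact absurd (hs'.trans hq'.symm) hi0
      · have hkey := key i hdi
        rw [hkey]
        cases hp' : p i with
        | false =>
          cases hq' : q i with
          | false => exact absurd (hp'.trans hq'.symm) hdi
          | true => rfl
        | true =>
          cases hq' : q i with
          | false => rfl
          | true => exact absurd (hp'.trans hq'.symm) hdi
    -- pattern(c,b) = p, giving the forbidden configuration
    have hcbp : Pattern C.lt c b p := by
      refine ⟨fun h => hbc h.symm, fun i => ?_⟩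
      haveI := C.strict i
      constructor
      · intro hcb
        by_contra hne
        have hpi : p i = false := by
          cases h' : p i with
          | false => rfl
          | true => exact absurd h' hne
        have hst : s i = true := by rw [hsp i, hpi]; rfl
        have hbc' := (hs i).mpr hst
        exact irrefl_of (C.lt i) b (trans_of (C.lt i) hbc' hcb)
      · intro hpi
        have hsf : s i = false := by rw [hsp i, hpi]; rfl
        have hnbc : ¬ C.lt i b c := fun h => by
          have := (hs i).mp h
          rw [hsf] at this
          exact Bool.false_ne_true this
        rcases trichotomous_of (C.lt i) c b with h | h | h
        · exact h
        · exact absurd h (fun he => hbc he.symm)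
        · exact absurd h hnbc
    exact hforb ⟨C, hC, c, b, y, hcbp, hcyp, hbyq⟩
end
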